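/- arXiv:1910.14081 — 9 statements merged into one kernel-verified Lean document; each statement's English description precedes it below -/
import Mathlib

section
/- Let G = ([n], E) be a fixed, undirected, connected graph on n vertices and let A = (a_ij) be an n×n real matrix such that a_ij > 0 whenever j = i or {i,j} ∈ E, a_ij = 0 otherwise, and ∑_{j=1}^n a_ij = 1 for every i. Then for every initial state x⁰ ∈ ℝⁿ, the averaging dynamics x^{k+1} = A x^k converge: the sequence {x^k} has a limit x* ∈ ℝⁿ satisfying A x* = x*, and moreover all coordinates of x* are equal (consensus). -/
open Filter Finset

section Helpers

variable {n : ℕ}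

private lemma avgPow_rowsum (A : Matrix (Fin n) (Fin n) ℝ) (hrow : ∀ i, ∑ j, A i j = 1) :
    ∀ (k : ℕ) (i : Fin n), ∑ j, (A ^ k) i j = 1 := by
  intro k
  induction k with
  | zero => intro i; simp [Matrix.one_apply]
  | succ k ih =>
    intro i
    rw [pow_succ]
    simp only [Matrix.mul_apply]
    rw [Finset.sum_comm]
    calc ∑ l, ∑ j, (A ^ k) i l * A l j = ∑ l, (A ^ k) i l * ∑ j, A l j := by
          simp [Finset.mul_sum]
      _ = 1 := by simp [hrow, ih]

private lemma avgPow_nonneg (A : Matrix (Fin n) (Fin n) ℝ) (hA : ∀ i j, 0 ≤ A i j) :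
    ∀ (k : ℕ) (i j : Fin n), 0 ≤ (A ^ k) i j := by
  intro k
  induction k with
  | zero => intro i j; rw [pow_zero]; by_cases h : i = j <;> simp [Matrix.one_apply, h]
  | succ k ih =>
    intro i j
    rw [pow_succ, Matrix.mul_apply]
    exact Finset.sum_nonneg fun l _ => mul_nonneg (ih i l) (hA l j)

private lemma avgPow_pos_succ (A : Matrix (Fin n) (Fin n) ℝ) (hA : ∀ i j, 0 ≤ A i j)
    (hdiag : ∀ i, 0 < A i i) {k : ℕ} {i j : Fin n} (h : 0 < (A ^ k) i j) :
    0 < (A ^ (k + 1)) i j := by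
  rw [pow_succ', Matrix.mul_apply]
  calc (0:ℝ) < A i i * (A ^ k) i j := mul_pos (hdiag i) h
    _ ≤ ∑ l, A i l * (A ^ k) l j :=
      Finset.single_le_sum (fun l _ => mul_nonneg (hA i l) (avgPow_nonneg A hA k l j))
        (Finset.mem_univ i)

private lemma avgPow_pos_mono (A : Matrix (Fin n) (Fin n) ℝ) (hA : ∀ i j, 0 ≤ A i j)
    (hdiag : ∀ i, 0 < A i i) {k k' : ℕ} (hk : k ≤ k') {i j : Fin n} (h : 0 < (A ^ k) i j) :
    0 < (A ^ k') i j := by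
  induction k' with
  | zero => exact (Nat.le_zero.mp hk) ▸ h
  | succ k' ih =>
    rcases Nat.lt_or_ge k (k' + 1) with h1 | h1
    · exact avgPow_pos_succ A hA hdiag (ih (by omega))
    · have hkk : k = k' + 1 := le_antisymm hk h1
      exact hkk ▸ h

private lemma walk_pow_pos (G : SimpleGraph (Fin n)) (A : Matrix (Fin n) (Fin n) ℝ)
    (hA : ∀ i j, 0 ≤ A i j) (hadj : ∀ i j, G.Adj i j → 0 < A i j)
    {i j : Fin n} (w : G.Walk i j) : 0 < (A ^ w.length) i j := by
  induction w with
  | nil => simp [Matrix.one_apply]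
  | @cons a b c h w ih =>
    rw [SimpleGraph.Walk.length_cons, pow_succ', Matrix.mul_apply]
    calc (0:ℝ) < A a b * (A ^ w.length) b c := mul_pos (hadj a b h) ih
      _ ≤ ∑ l, A a l * (A ^ w.length) l c :=
        Finset.single_le_sum (fun l _ => mul_nonneg (hA a l) (avgPow_nonneg A hA _ l c))
          (Finset.mem_univ b)

private lemma mulVec_le_sup (P : Matrix (Fin n) (Fin n) ℝ)
    (hP : ∀ i j, 0 ≤ P i j) (hrow : ∀ i, ∑ j, P i j = 1)
    (hne : (Finset.univ : Finset (Fin n)).Nonempty) (y : Fin n → ℝ) (i : Fin n) :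
    P.mulVec y i ≤ Finset.univ.sup' hne y := by
  have : P.mulVec y i = ∑ j, P i j * y j := rfl
  rw [this]
  calc ∑ j, P i j * y j ≤ ∑ j, P i j * Finset.univ.sup' hne y :=
        Finset.sum_le_sum fun j _ =>
          mul_le_mul_of_nonneg_left (Finset.le_sup' y (Finset.mem_univ j)) (hP i j)
    _ = Finset.univ.sup' hne y := by rw [← Finset.sum_mul, hrow, one_mul]

private lemma inf_le_mulVec (P : Matrix (Fin n) (Fin n) ℝ)
    (hP : ∀ i j, 0 ≤ P i j) (hrow : ∀ i, ∑ j, P i j = 1)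
    (hne : (Finset.univ : Finset (Fin n)).Nonempty) (y : Fin n → ℝ) (i : Fin n) :
    Finset.univ.inf' hne y ≤ P.mulVec y i := by
  have : P.mulVec y i = ∑ j, P i j * y j := rfl
  rw [this]
  calc Finset.univ.inf' hne y = ∑ j, P i j * Finset.univ.inf' hne y := by
        rw [← Finset.sum_mul, hrow, one_mul]
    _ ≤ ∑ j, P i j * y j :=
        Finset.sum_le_sum fun j _ =>
          mul_le_mul_of_nonneg_left (Finset.inf'_le y (Finset.mem_univ j)) (hP i j)

private lemma osc_contract (P : Matrix (Fin n) (Fin n) ℝ)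
    (hP : ∀ i j, 0 ≤ P i j) (hrow : ∀ i, ∑ j, P i j = 1)
    (hne : (Finset.univ : Finset (Fin n)).Nonempty) (δ : ℝ)
    (hδ : ∀ i j, δ ≤ P i j) (y : Fin n → ℝ) :
    Finset.univ.sup' hne (P.mulVec y) - Finset.univ.inf' hne (P.mulVec y) ≤
      (1 - 2 * δ) * (Finset.univ.sup' hne y - Finset.univ.inf' hne y) := by
  set S := Finset.univ.sup' hne y with hS
  set I := Finset.univ.inf' hne y with hI
  have hIS : I ≤ S := by
    obtain ⟨i0, hi0⟩ := hne
    exact le_trans (Finset.inf'_le y hi0) (Finset.le_sup' y hi0)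
  obtain ⟨j0, _, hj0⟩ := Finset.exists_mem_eq_inf' hne y
  obtain ⟨j1, _, hj1⟩ := Finset.exists_mem_eq_sup' hne y
  have hdelta := sub_nonneg.mpr hIS
  have hup : ∀ i, P.mulVec y i ≤ S - δ * (S - I) := by
    intro i
    have e0 : P.mulVec y i = ∑ j, P i j * y j := rfl
    have e1 : P i j0 * y j0 + ∑ j ∈ Finset.univ.erase j0, P i j * y j = ∑ j, P i j * y j :=
      Finset.add_sum_erase Finset.univ (fun j => P i j * y j) (Finset.mem_univ j0)
    have e3 : P i j0 + ∑ j ∈ Finset.univ.erase j0, P i j = 1 := by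
      rw [Finset.add_sum_erase Finset.univ (P i) (Finset.mem_univ j0)]
      exact hrow i
    have hrest : ∑ j ∈ Finset.univ.erase j0, P i j * y j ≤
        (∑ j ∈ Finset.univ.erase j0, P i j) * S := by
      rw [Finset.sum_mul]
      exact Finset.sum_le_sum fun j _ =>
        mul_le_mul_of_nonneg_left (Finset.le_sup' y (Finset.mem_univ j)) (hP i j)
    have hkey : P.mulVec y i ≤ S - P i j0 * (S - I) := by
      have hyj0 : y j0 = I := hj0.symm
      have expand : (∑ j ∈ Finset.univ.erase j0, P i j) * S = (1 - P i j0) * S := by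
        have h4 : (∑ j ∈ Finset.univ.erase j0, P i j) = 1 - P i j0 := by linarith
        rw [h4]
      rw [expand] at hrest
      have h2 : P.mulVec y i ≤ P i j0 * I + (1 - P i j0) * S := by
        rw [e0, ← e1, hyj0]
        linarith
      have h3 : P i j0 * I + (1 - P i j0) * S = S - P i j0 * (S - I) := by ring
      linarith
    have := mul_le_mul_of_nonneg_right (hδ i j0) hdelta
    linarith
  have hlo : ∀ i, I + δ * (S - I) ≤ P.mulVec y i := by
    intro i
    have e0 : P.mulVec y i = ∑ j, P i j * y j := rfl
    have e1 : P i j1 * y j1 + ∑ j ∈ Finset.univ.erase j1, P i j * y j = ∑ j, P i j * y j :=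
      Finset.add_sum_erase Finset.univ (fun j => P i j * y j) (Finset.mem_univ j1)
    have e3 : P i j1 + ∑ j ∈ Finset.univ.erase j1, P i j = 1 := by
      rw [Finset.add_sum_erase Finset.univ (P i) (Finset.mem_univ j1)]
      exact hrow i
    have hrest : (∑ j ∈ Finset.univ.erase j1, P i j) * I ≤
        ∑ j ∈ Finset.univ.erase j1, P i j * y j := by
      rw [Finset.sum_mul]
      exact Finset.sum_le_sum fun j _ =>
        mul_le_mul_of_nonneg_left (Finset.inf'_le y (Finset.mem_univ j)) (hP i j)
    have hkey : I + P i j1 * (S - I) ≤ P.mulVec y i := by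
      have hyj1 : y j1 = S := hj1.symm
      have expand : (∑ j ∈ Finset.univ.erase j1, P i j) * I = (1 - P i j1) * I := by
        have h4 : (∑ j ∈ Finset.univ.erase j1, P i j) = 1 - P i j1 := by linarith
        rw [h4]
      rw [expand] at hrest
      have h2 : P i j1 * S + (1 - P i j1) * I ≤ P.mulVec y i := by
        rw [e0, ← e1, hyj1]
        linarith
      have h3 : P i j1 * S + (1 - P i j1) * I = I + P i j1 * (S - I) := by ring
      linarith
    have := mul_le_mul_of_nonneg_right (hδ i j1) hdelta
    linarith
  have hsup : Finset.univ.sup' hne (P.mulVec y) ≤ S - δ * (S - I) :=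
    Finset.sup'_le hne _ fun i _ => hup i
  have hinf : I + δ * (S - I) ≤ Finset.univ.inf' hne (P.mulVec y) :=
    Finset.le_inf' hne _ fun i _ => hlo i
  nlinarith [hsup, hinf]

end Helpers

/-- fixed-network averaging dynamics over a connected undirected graph,
with positive weights on self-loops and edges, zero elsewhere, and unit row sums,
converge to a consensus fixed point. -/
theorem fixed_graph_averaging_converges_to_consensus
    (n : ℕ) (hn : 0 < n) (G : SimpleGraph (Fin n)) (hG : G.Connected)
    (A : Matrix (Fin n) (Fin n) ℝ)
    (hpos : ∀ i j, (j = i ∨ G.Adj i j) → 0 < A i j)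
    (hzero : ∀ i j, ¬(j = i ∨ G.Adj i j) → A i j = 0)
    (hrow : ∀ i, ∑ j, A i j = 1)
    (x : ℕ → Fin n → ℝ)
    (hdyn : ∀ k, x (k + 1) = A.mulVec (x k)) :
    ∃ xs : Fin n → ℝ, Tendsto x atTop (nhds xs) ∧
      A.mulVec xs = xs ∧ ∀ i j, xs i = xs j := by
  have hA : ∀ i j, 0 ≤ A i j := by
    intro i j
    by_cases h : j = i ∨ G.Adj i j
    · exact (hpos i j h).le
    · exact (hzero i j h).ge
  have hdiag : ∀ i, 0 < A i i := fun i => hpos i i (Or.inl rfl)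
  haveI : Nonempty (Fin n) := ⟨⟨0, hn⟩⟩
  have hne : (Finset.univ : Finset (Fin n)).Nonempty := Finset.univ_nonempty
  -- handle n = 1 separately
  rcases Nat.lt_or_ge n 2 with hn1 | hn2
  · -- n = 1
    have hn1 : n = 1 := by omega
    subst hn1
    have hfix : ∀ y : Fin 1 → ℝ, A.mulVec y = y := by
      intro y
      funext i
      have : A.mulVec y i = ∑ j, A i j * y j := rfl
      rw [this]
      have hy : ∀ j : Fin 1, y j = y i := fun j => by rw [Subsingleton.elim j i]
      calc ∑ j, A i j * y j = ∑ j, A i j * y i := by simp [hy]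
        _ = y i := by rw [← Finset.sum_mul, hrow, one_mul]
    have hx : ∀ k, x k = x 0 := by
      intro k
      induction k with
      | zero => rfl
      | succ k ih => rw [hdyn k, ih, hfix]
    refine ⟨x 0, ?_, hfix (x 0), fun i j => by rw [Subsingleton.elim i j]⟩
    have : x = fun _ => x 0 := funext hx
    rw [this]
    exact tendsto_const_nhds
  -- main case n ≥ 2
  · -- existence of a power with all entries positive
    have hreach : ∀ i j : Fin n, ∃ k, 0 < (A ^ k) i j := by
      intro i j
      obtain ⟨w⟩ := hG.preconnected i j
      exact ⟨w.length, walk_pow_pos G A hA (fun i j h => hpos i j (Or.inr h)) w⟩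
    choose f hf using hreach
    set p : ℕ := (Finset.univ : Finset (Fin n × Fin n)).sup (fun ij => f ij.1 ij.2) + 1 with hp
    have hp0 : 0 < p := Nat.succ_pos _
    have hBpos : ∀ i j, 0 < (A ^ p) i j := by
      intro i j
      have hle : f i j ≤ p := by
        have h := Finset.le_sup (f := fun ij : Fin n × Fin n => f ij.1 ij.2)
          (Finset.mem_univ (i, j))
        rw [hp]
        exact le_trans h (Nat.le_succ _)
      exact avgPow_pos_mono A hA hdiag hle (hf i j)
    set B : Matrix (Fin n) (Fin n) ℝ := A ^ p with hB
    have hBrow : ∀ i, ∑ j, B i j = 1 := avgPow_rowsum A hrow p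
    have hBnn : ∀ i j, 0 ≤ B i j := avgPow_nonneg A hA p
    have hneP : (Finset.univ : Finset (Fin n × Fin n)).Nonempty := Finset.univ_nonempty
    set δ : ℝ := (Finset.univ : Finset (Fin n × Fin n)).inf' hneP (fun ij => B ij.1 ij.2)
      with hδdef
    have hδpos : 0 < δ := by
      rw [hδdef, Finset.lt_inf'_iff]
      exact fun ij _ => hBpos ij.1 ij.2
    have hδle : ∀ i j, δ ≤ B i j := fun i j =>
      Finset.inf'_le _ (Finset.mem_univ (i, j))
    have h2δ : 2 * δ ≤ 1 := by
      obtain ⟨i0, hi0⟩ : ∃ i : Fin n, True := ⟨⟨0, hn⟩, trivial⟩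
      have hj : (⟨0, by omega⟩ : Fin n) ≠ ⟨1, by omega⟩ := by
        intro h; simp at h
      have hpair : B i0 ⟨0, by omega⟩ + B i0 ⟨1, by omega⟩ ≤ ∑ j, B i0 j := by
        rw [← Finset.sum_pair hj]
        exact Finset.sum_le_sum_of_subset_of_nonneg (Finset.subset_univ _)
          (fun j _ _ => hBnn i0 j)
      rw [hBrow i0] at hpair
      have h1 := hδle i0 ⟨0, by omega⟩
      have h2 := hδle i0 ⟨1, by omega⟩
      linarith
    set c : ℝ := 1 - 2 * δ with hc
    have hc0 : 0 ≤ c := by linarith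
    have hc1 : c < 1 := by linarith
    -- sup and inf sequences
    set M : ℕ → ℝ := fun k => Finset.univ.sup' hne (x k) with hM
    set m : ℕ → ℝ := fun k => Finset.univ.inf' hne (x k) with hm
    have hmM : ∀ k, m k ≤ M k := by
      intro k
      exact le_trans (Finset.inf'_le (x k) (Finset.mem_univ ⟨0, hn⟩))
        (Finset.le_sup' (x k) (Finset.mem_univ ⟨0, hn⟩))
    have hManti : Antitone M := by
      apply antitone_nat_of_succ_le
      intro k
      rw [hM]
      apply Finset.sup'_le
      intro i _
      rw [hdyn k]
      exact mulVec_le_sup A hA hrow hne (x k) i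
    have hmmono : Monotone m := by
      apply monotone_nat_of_le_succ
      intro k
      rw [hm]
      apply Finset.le_inf'
      intro i _
      rw [hdyn k]
      exact inf_le_mulVec A hA hrow hne (x k) i
    -- iterates
    have hiter : ∀ k j : ℕ, x (k + j) = (A ^ j).mulVec (x k) := by
      intro k j
      induction j with
      | zero => simp [Matrix.one_mulVec]
      | succ j ih =>
        have : k + (j + 1) = (k + j) + 1 := by ring
        rw [this, hdyn, ih, Matrix.mulVec_mulVec, ← pow_succ']
    -- geometric contraction along multiples of p
    have hgeom : ∀ k : ℕ, M (k * p) - m (k * p) ≤ c ^ k * (M 0 - m 0) := by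
      intro k
      induction k with
      | zero => simp
      | succ k ih =>
        have hx1 : x ((k + 1) * p) = B.mulVec (x (k * p)) := by
          have : (k + 1) * p = k * p + p := by ring
          rw [this, hiter, hB]
        have hcon := osc_contract B hBnn hBrow hne δ hδle (x (k * p))
        rw [← hx1] at hcon
        calc M ((k + 1) * p) - m ((k + 1) * p) ≤ c * (M (k * p) - m (k * p)) := hcon
          _ ≤ c * (c ^ k * (M 0 - m 0)) := mul_le_mul_of_nonneg_left ih hc0
          _ = c ^ (k + 1) * (M 0 - m 0) := by ring
    -- convergence of M and m
    have hMbdd : BddBelow (Set.range M) := by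
      refine ⟨m 0, ?_⟩
      rintro _ ⟨k, rfl⟩
      exact le_trans (hmmono (Nat.zero_le k)) (hmM k)
    have hmbdd : BddAbove (Set.range m) := by
      refine ⟨M 0, ?_⟩
      rintro _ ⟨k, rfl⟩
      exact le_trans (hmM k) (hManti (Nat.zero_le k))
    have hMconv : Tendsto M atTop (nhds (⨅ k, M k)) := tendsto_atTop_ciInf hManti hMbdd
    have hmconv : Tendsto m atTop (nhds (⨆ k, m k)) := tendsto_atTop_ciSup hmmono hmbdd
    set ML := ⨅ k, M k
    set mL := ⨆ k, m k
    -- the oscillation tends to 0 along multiples of p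
    have hsub : Tendsto (fun k => k * p) atTop atTop :=
      tendsto_atTop_mono (fun k => Nat.le_mul_of_pos_right k hp0) tendsto_id
    have hosc1 : Tendsto (fun k => M (k * p) - m (k * p)) atTop (nhds (ML - mL)) :=
      ((hMconv.comp hsub).sub (hmconv.comp hsub))
    have hosc0 : Tendsto (fun k => M (k * p) - m (k * p)) atTop (nhds 0) := by
      apply squeeze_zero (fun k => by linarith [hmM (k * p)]) hgeom
      simpa using (tendsto_pow_atTop_nhds_zero_of_lt_one hc0 hc1).mul_const (M 0 - m 0)
    have hML : ML = mL := by
      have := tendsto_nhds_unique hosc1 hosc0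
      linarith [sub_eq_zero.mp this]
    -- each coordinate converges to ML
    refine ⟨fun _ => ML, ?_, ?_, fun i j => rfl⟩
    · rw [tendsto_pi_nhds]
      intro i
      have hlow : ∀ k, m k ≤ x k i := fun k => Finset.inf'_le (x k) (Finset.mem_univ i)
      have hhigh : ∀ k, x k i ≤ M k := fun k => Finset.le_sup' (x k) (Finset.mem_univ i)
      have hm' : Tendsto m atTop (nhds ML) := hML ▸ hmconv
      exact tendsto_of_tendsto_of_tendsto_of_le_of_le hm' hMconv hlow hhigh
    · funext i
      have : A.mulVec (fun _ => ML) i = ∑ j, A i j * ML := rfl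
      rw [this, ← Finset.sum_mul, hrow, one_mul]
end

section
/- Let {G_k = ([n], E_k)}_{k≥0} be a sequence of directed graphs with edge weights a_ij(k), let α ∈ (0,1), and let B be a positive integer. Assume: (i) a_ij(k) ∈ [α,1] ∪ {0} for all i,j,k; (ii) a_ii(k) ≥ α for all i,k; (iii) ∑_{j=1}^n a_ij(k) = 1 for all i,k; and (iv) the sequence is B-strongly connected, i.e., for every k ≥ 0 the graph ([n], ∪_{s=k}^{k+B} E_s) is strongly connected, where (i,j) ∈ E_s iff a_ij(s) > 0. Then for every initial state x⁰ ∈ ℝⁿ, the averaging dynamics x_i^{k+1} = ∑_{j=1}^n a_ij(k) x_j^k converge to a consensus point: there exists c ∈ ℝ such that lim_{k→∞} x_i^k = c for every i ∈ [n]. -/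
open Filter

section TVCauxSec
open Finset

namespace TVCaux

lemma crossing {γ : Type*} {r : γ → γ → Prop} {T : Set γ} {i j : γ}
    (h : Relation.ReflTransGen r i j) (hi : i ∉ T) (hj : j ∈ T) :
    ∃ u v, r u v ∧ u ∉ T ∧ v ∈ T := by
  induction h with
  | refl => exact absurd hj hi
  | @tail b c hib hbc ih =>
    by_cases hb : b ∈ T
    · exact ih hb
    · exact ⟨b, c, hbc, hb, hj⟩

variable {n : ℕ}

noncomputable def Mx (hn : 0 < n) (x : ℕ → Fin n → ℝ) (k : ℕ) : ℝ :=
  Finset.univ.sup' ⟨⟨0, hn⟩, Finset.mem_univ _⟩ (x k)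

noncomputable def mx (hn : 0 < n) (x : ℕ → Fin n → ℝ) (k : ℕ) : ℝ :=
  Finset.univ.inf' ⟨⟨0, hn⟩, Finset.mem_univ _⟩ (x k)

lemma le_Mx (hn : 0 < n) (x : ℕ → Fin n → ℝ) (k : ℕ) (i : Fin n) : x k i ≤ Mx hn x k :=
  Finset.le_sup' _ (mem_univ i)

lemma mx_le (hn : 0 < n) (x : ℕ → Fin n → ℝ) (k : ℕ) (i : Fin n) : mx hn x k ≤ x k i :=
  Finset.inf'_le _ (mem_univ i)

lemma ub (hn : 0 < n) (a : ℕ → Fin n → Fin n → ℝ)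
    (ha0 : ∀ s i j, 0 ≤ a s i j) (hrow : ∀ k i, ∑ j, a k i j = 1)
    (x : ℕ → Fin n → ℝ) (hdyn : ∀ k i, x (k + 1) i = ∑ j, a k i j * x k j)
    (k : ℕ) : ∀ d j, x (k + d) j ≤ Mx hn x k := by
  intro d
  induction d with
  | zero => intro j; exact le_Mx hn x k j
  | succ d ih =>
    intro j
    have hx : x (k + (d + 1)) j = ∑ j', a (k + d) j j' * x (k + d) j' := by
      rw [← add_assoc]; exact hdyn _ _
    rw [hx]
    calc ∑ j', a (k + d) j j' * x (k + d) j'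
        ≤ ∑ j', a (k + d) j j' * Mx hn x k :=
          Finset.sum_le_sum fun j' _ => mul_le_mul_of_nonneg_left (ih j') (ha0 _ _ _)
      _ = Mx hn x k := by rw [← Finset.sum_mul, hrow _ _, one_mul]

lemma lb (hn : 0 < n) (a : ℕ → Fin n → Fin n → ℝ)
    (ha0 : ∀ s i j, 0 ≤ a s i j) (hrow : ∀ k i, ∑ j, a k i j = 1)
    (x : ℕ → Fin n → ℝ) (hdyn : ∀ k i, x (k + 1) i = ∑ j, a k i j * x k j)
    (k : ℕ) : ∀ d j, mx hn x k ≤ x (k + d) j := by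
  intro d
  induction d with
  | zero => intro j; exact mx_le hn x k j
  | succ d ih =>
    intro j
    have hx : x (k + (d + 1)) j = ∑ j', a (k + d) j j' * x (k + d) j' := by
      rw [← add_assoc]; exact hdyn _ _
    rw [hx]
    calc mx hn x k = ∑ j', a (k + d) j j' * mx hn x k := by
          rw [← Finset.sum_mul, hrow _ _, one_mul]
      _ ≤ ∑ j', a (k + d) j j' * x (k + d) j' :=
          Finset.sum_le_sum fun j' _ => mul_le_mul_of_nonneg_left (ih j') (ha0 _ _ _)

lemma contract (hn : 0 < n) (a : ℕ → Fin n → Fin n → ℝ) (α : ℝ)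
    (hα0 : 0 < α) (hα1 : α ≤ 1) (B : ℕ)
    (hweights : ∀ k i j, a k i j = 0 ∨ (α ≤ a k i j ∧ a k i j ≤ 1))
    (hself : ∀ k i, α ≤ a k i i)
    (hrow : ∀ k i, ∑ j, a k i j = 1)
    (hconn : ∀ k : ℕ, ∀ i j : Fin n,
      Relation.ReflTransGen (fun u v : Fin n => ∃ s, k ≤ s ∧ s ≤ k + B ∧ 0 < a s u v) i j)
    (x : ℕ → Fin n → ℝ) (hdyn : ∀ k i, x (k + 1) i = ∑ j, a k i j * x k j)
    (k : ℕ) :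
    Mx hn x (k + (B + 1) * (n - 1)) ≤
      Mx hn x k - α ^ ((B + 1) * (n - 1)) * (Mx hn x k - mx hn x k) := by
  have ha0 : ∀ s i j, 0 ≤ a s i j := by
    intro s i j
    rcases hweights s i j with h | h
    · exact le_of_eq h.symm
    · exact le_trans hα0.le h.1
  have hub : ∀ d j, x (k + d) j ≤ Mx hn x k := ub hn a ha0 hrow x hdyn k
  set M := Mx hn x k with hM
  set δ := Mx hn x k - mx hn x k with hδdef
  have hδ : 0 ≤ δ := by
    have := le_trans (mx_le hn x k ⟨0, hn⟩) (le_Mx hn x k ⟨0, hn⟩)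
    simpa [hδdef] using sub_nonneg.mpr this
  obtain ⟨j0, _, hj0⟩ := Finset.exists_mem_eq_inf' ⟨⟨0, hn⟩, Finset.mem_univ _⟩ (x k)
  -- the contaminated set
  set S : ℕ → Finset (Fin n) :=
    fun t => Finset.univ.filter fun i => x (k + t) i ≤ M - α ^ t * δ with hS
  have memS : ∀ t i, i ∈ S t ↔ x (k + t) i ≤ M - α ^ t * δ := by
    intro t i; simp [hS]
  -- one step bound
  have step : ∀ t i j, j ∈ S t → α ≤ a (k + t) i j → i ∈ S (t + 1) := by
    intro t i j hj haij
    rw [memS] at hj ⊢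
    have hx : x (k + (t + 1)) i = ∑ j', a (k + t) i j' * x (k + t) j' := by
      rw [← add_assoc]; exact hdyn _ _
    have hsplit : ∑ j', a (k + t) i j' * x (k + t) j'
        = a (k + t) i j * x (k + t) j + ∑ j' ∈ Finset.univ.erase j, a (k + t) i j' * x (k + t) j' :=
      (Finset.add_sum_erase Finset.univ (fun j' => a (k + t) i j' * x (k + t) j')
        (Finset.mem_univ j)).symm
    have h1 : a (k + t) i j * x (k + t) j ≤ a (k + t) i j * (M - α ^ t * δ) :=
      mul_le_mul_of_nonneg_left hj (ha0 _ _ _)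
    have h2 : ∑ j' ∈ Finset.univ.erase j, a (k + t) i j' * x (k + t) j'
        ≤ ∑ j' ∈ Finset.univ.erase j, a (k + t) i j' * M :=
      Finset.sum_le_sum fun j' _ => mul_le_mul_of_nonneg_left (hub t j') (ha0 _ _ _)
    have hsum : a (k + t) i j * M + ∑ j' ∈ Finset.univ.erase j, a (k + t) i j' * M = M := by
      rw [Finset.add_sum_erase Finset.univ (fun j' => a (k + t) i j' * M) (Finset.mem_univ j),
        ← Finset.sum_mul, hrow _ _, one_mul]
    have hbound : x (k + (t + 1)) i ≤ M - a (k + t) i j * (α ^ t * δ) := by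
      rw [hx, hsplit]
      have := add_le_add h1 h2
      calc a (k + t) i j * x (k + t) j + ∑ j' ∈ Finset.univ.erase j, a (k + t) i j' * x (k + t) j'
          ≤ a (k + t) i j * (M - α ^ t * δ) + ∑ j' ∈ Finset.univ.erase j, a (k + t) i j' * M := this
        _ = a (k + t) i j * M + ∑ j' ∈ Finset.univ.erase j, a (k + t) i j' * M
              - a (k + t) i j * (α ^ t * δ) := by ring
        _ = M - a (k + t) i j * (α ^ t * δ) := by rw [hsum]
    refine hbound.trans ?_
    have : α ^ (t + 1) * δ ≤ a (k + t) i j * (α ^ t * δ) := by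
      rw [pow_succ]
      calc α ^ t * α * δ = α * (α ^ t * δ) := by ring
        _ ≤ a (k + t) i j * (α ^ t * δ) :=
          mul_le_mul_of_nonneg_right haij (mul_nonneg (pow_nonneg hα0.le _) hδ)
    linarith
  have persist : ∀ t t', t ≤ t' → S t ⊆ S t' := by
    intro t t' h
    induction h with
    | refl => exact Finset.Subset.refl _
    | step h' ih => exact fun i hi => step _ i i (ih hi) (hself _ i)
  -- j0 starts contaminated
  have hj0S : j0 ∈ S 0 := by
    rw [memS]
    have : x (k + 0) j0 = mx hn x k := by
      simp only [Nat.add_zero]; exact hj0.symm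
    rw [this]
    simp [hδdef, hM]
  -- propagation across a window
  have propagate : ∀ t u v, v ∈ S t → (∃ s, k + t ≤ s ∧ s ≤ k + t + B ∧ 0 < a s u v) →
      u ∈ S (t + B + 1) := by
    intro t u v hv ⟨s, hs1, hs2, hpos⟩
    have hks : k ≤ s := le_trans (Nat.le_add_right _ _) hs1
    set t'' := s - k with ht''
    have hseq : k + t'' = s := Nat.add_sub_cancel' hks
    have htt : t ≤ t'' := by omega
    have hv' : v ∈ S t'' := persist t t'' htt hv
    have hα : α ≤ a s u v := by
      rcases hweights s u v with h | h
      · rw [h] at hpos; exact absurd hpos (lt_irrefl 0)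
      · exact h.1
    have hu : u ∈ S (t'' + 1) := by
      apply step t'' u v hv'
      rw [hseq]; exact hα
    exact persist (t'' + 1) (t + B + 1) (by omega) hu
  -- cardinality growth
  have growth : ∀ t, S t ≠ Finset.univ → (S t).card + 1 ≤ (S (t + B + 1)).card := by
    intro t hne
    have : ∃ i, i ∉ S t := by
      by_contra h; push_neg at h
      exact hne (Finset.eq_univ_iff_forall.mpr h)
    obtain ⟨i, hi⟩ := this
    have hj0t : j0 ∈ S t := persist 0 t (Nat.zero_le t) hj0S
    obtain ⟨u, v, hr, hu, hv⟩ := crossing (T := {w | w ∈ S t}) (hconn (k + t) i j0) hi hj0t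
    have huS : u ∈ S (t + B + 1) := propagate t u v hv hr
    have hsub : insert u (S t) ⊆ S (t + B + 1) := by
      intro w hw
      rcases Finset.mem_insert.mp hw with h | h
      · exact h ▸ huS
      · exact persist t (t + B + 1) (by omega) h
    calc (S t).card + 1 = (insert u (S t)).card := (Finset.card_insert_of_notMem hu).symm
      _ ≤ (S (t + B + 1)).card := Finset.card_le_card hsub
  -- by induction the set fills up
  have fill : ∀ p, S ((B + 1) * p) = Finset.univ ∨ p + 1 ≤ (S ((B + 1) * p)).card := by
    intro p
    induction p with
    | zero =>
      right
      simpa using Finset.card_pos.mpr ⟨j0, by simpa using hj0S⟩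
    | succ p ih =>
      have hmul : (B + 1) * (p + 1) = (B + 1) * p + B + 1 := by ring
      rcases ih with h | h
      · left
        apply Finset.eq_univ_of_card
        have hsub : S ((B + 1) * p) ⊆ S ((B + 1) * (p + 1)) :=
          persist _ _ (Nat.mul_le_mul_left _ (Nat.le_succ p))
        rw [h] at hsub
        have := Finset.card_le_card hsub
        have hle := Finset.card_le_univ (S ((B + 1) * (p + 1)))
        simp only [Finset.card_univ] at this hle ⊢
        omega
      · by_cases hu : S ((B + 1) * p) = Finset.univ
        · left
          apply Finset.eq_univ_of_card
          have hsub : S ((B + 1) * p) ⊆ S ((B + 1) * (p + 1)) :=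
            persist _ _ (Nat.mul_le_mul_left _ (Nat.le_succ p))
          rw [hu] at hsub
          have := Finset.card_le_card hsub
          have hle := Finset.card_le_univ (S ((B + 1) * (p + 1)))
          simp only [Finset.card_univ] at this hle ⊢
          omega
        · right
          have := growth ((B + 1) * p) hu
          rw [hmul]
          omega
  -- at p = n - 1 the set is everything
  have hall : S ((B + 1) * (n - 1)) = Finset.univ := by
    rcases fill (n - 1) with h | h
    · exact h
    · apply Finset.eq_univ_of_card
      have hle := Finset.card_le_univ (S ((B + 1) * (n - 1)))
      simp only [Finset.card_univ, Fintype.card_fin] at hle ⊢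
      omega
  -- conclude
  apply Finset.sup'_le
  intro i _
  have hi : i ∈ S ((B + 1) * (n - 1)) := hall ▸ Finset.mem_univ i
  rw [memS] at hi
  exact hi


end TVCaux

end TVCauxSec

open TVCaux in
/-- time-varying averaging dynamics with weights bounded away from zero,
positive self-weights, unit row sums, and `B`-strong connectivity of the union graphs,
converge to consensus. Strong connectivity of the union graph over the window
`[k, k+B]` is expressed as reachability (reflexive-transitive closure of the edge
relation) between every ordered pair of agents. -/
theorem time_varying_averaging_converges_to_consensus
    (n : ℕ) (a : ℕ → Fin n → Fin n → ℝ) (α : ℝ) (hα0 : 0 < α) (hα1 : α < 1)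
    (B : ℕ) (hB : 0 < B)
    (hweights : ∀ k i j, a k i j = 0 ∨ (α ≤ a k i j ∧ a k i j ≤ 1))
    (hself : ∀ k i, α ≤ a k i i)
    (hrow : ∀ k i, ∑ j, a k i j = 1)
    (hconn : ∀ k : ℕ, ∀ i j : Fin n,
      Relation.ReflTransGen (fun u v : Fin n => ∃ s, k ≤ s ∧ s ≤ k + B ∧ 0 < a s u v) i j)
    (x : ℕ → Fin n → ℝ)
    (hdyn : ∀ k i, x (k + 1) i = ∑ j, a k i j * x k j) :
    ∃ c : ℝ, ∀ i, Tendsto (fun k => x k i) atTop (nhds c) := by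
  rcases Nat.eq_zero_or_pos n with hn | hn
  · subst hn
    exact ⟨0, fun i => i.elim0⟩
  have ha0 : ∀ s i j, 0 ≤ a s i j := by
    intro s i j
    rcases hweights s i j with h | h
    · exact le_of_eq h.symm
    · exact le_trans hα0.le h.1
  set T := (B + 1) * (n - 1) with hT
  set q := 1 - α ^ T with hq
  have hTα : 0 < α ^ T := pow_pos hα0 _
  have hq0 : 0 ≤ q := by
    have : α ^ T ≤ 1 := pow_le_one₀ hα0.le hα1.le
    simp [hq]; linarith
  have hq1 : q < 1 := by simp [hq]; linarith
  set D : ℕ → ℝ := fun k => Mx hn x k - mx hn x k with hD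
  have hMle : ∀ k d, Mx hn x (k + d) ≤ Mx hn x k := by
    intro k d
    apply Finset.sup'_le
    intro i _
    exact ub hn a ha0 hrow x hdyn k d i
  have hmle : ∀ k d, mx hn x k ≤ mx hn x (k + d) := by
    intro k d
    apply Finset.le_inf'
    intro i _
    exact lb hn a ha0 hrow x hdyn k d i
  have hManti : Antitone (Mx hn x) := by
    intro k k' h
    have := hMle k (k' - k)
    rwa [Nat.add_sub_cancel' h] at this
  have hmmono : Monotone (mx hn x) := by
    intro k k' h
    have := hmle k (k' - k)
    rwa [Nat.add_sub_cancel' h] at this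
  have hD0 : ∀ k, 0 ≤ D k := by
    intro k
    have := le_trans (mx_le hn x k ⟨0, hn⟩) (le_Mx hn x k ⟨0, hn⟩)
    simp [hD]; linarith
  have hDanti : Antitone D := by
    intro k k' h
    have h1 := hManti h
    have h2 := hmmono h
    simp only [hD]
    linarith
  have hc : ∀ k, D (k + T) ≤ q * D k := by
    intro k
    have h1 := contract hn a α hα0 hα1.le B hweights hself hrow hconn x hdyn k
    have h2 := hmle k T
    simp only [hD, hq, ← hT] at *
    nlinarith [hTα]
  have hiter : ∀ p, D (T * p) ≤ q ^ p * D 0 := by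
    intro p
    induction p with
    | zero => simp
    | succ p ih =>
      have : T * (p + 1) = T * p + T := by ring
      rw [this]
      calc D (T * p + T) ≤ q * D (T * p) := hc (T * p)
        _ ≤ q * (q ^ p * D 0) := mul_le_mul_of_nonneg_left ih hq0
        _ = q ^ (p + 1) * D 0 := by ring
  have hqlim : Tendsto (fun p => q ^ p * D 0) atTop (nhds 0) := by
    have := (tendsto_pow_atTop_nhds_zero_of_lt_one hq0 hq1).mul_const (D 0)
    simpa using this
  have hDbdd : BddBelow (Set.range D) := ⟨0, fun y ⟨k, hk⟩ => hk ▸ hD0 k⟩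
  have hDtend : Tendsto D atTop (nhds (⨅ k, D k)) := tendsto_atTop_ciInf hDanti hDbdd
  have hinf0 : (⨅ k, D k) = 0 := by
    refine le_antisymm ?_ (le_ciInf hD0)
    exact ge_of_tendsto' hqlim fun p => (ciInf_le hDbdd (T * p)).trans (hiter p)
  rw [hinf0] at hDtend
  have hMbdd : BddBelow (Set.range (Mx hn x)) := by
    refine ⟨mx hn x 0, fun y ⟨k, hk⟩ => ?_⟩
    subst hk
    calc mx hn x 0 ≤ mx hn x k := hmmono (Nat.zero_le k)
      _ ≤ x k ⟨0, hn⟩ := mx_le hn x k _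
      _ ≤ Mx hn x k := le_Mx hn x k _
  set c := ⨅ k, Mx hn x k with hc'
  have hMtend : Tendsto (Mx hn x) atTop (nhds c) := tendsto_atTop_ciInf hManti hMbdd
  have hmtend : Tendsto (mx hn x) atTop (nhds c) := by
    have := hMtend.sub hDtend
    simp only [hD, sub_sub_cancel, sub_zero] at this
    exact this
  refine ⟨c, fun i => ?_⟩
  exact tendsto_of_tendsto_of_tendsto_of_le_of_le hmtend hMtend
    (fun k => mx_le hn x k i) (fun k => le_Mx hn x k i)
end

section
/- Let m > 0. For each i ∈ [n] let f_i: ℝ → ℝ be twice continuously differentiable and bounded below, and for each ordered pair i ≠ j let g_ij: ℝ² → ℝ be twice continuously differentiable, bounded below, and symmetric, i.e., g_ij(a,b) = g_ji(b,a) for all a,b ∈ ℝ. Assume all second-order derivatives of every f_i and all second-order partial derivatives of every g_ij are bounded in absolute value by m. Define the state-dependent network dynamics x_i^{k+1} = x_i^k − [f_i'(x_i^k) + ∑_{j ∈ N_i(x^k)} ∂g_ij/∂x_i (x_i^k, x_j^k)] / (2m(|N_i(x^k)|+1)) for i ∈ [n]. Then the function V(x) := ∑_i f_i(x_i) + ½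 ∑_{i≠j} min{g_ij(x_i,x_j), 0} satisfies V(x^{k+1}) ≤ V(x^k) − m‖x^{k+1} − x^k‖² for every k ≥ 0. -/
open Filter


private lemma mvt_abs {h : ℝ → ℝ} {C : ℝ} (hd : Differentiable ℝ h)
    (hb : ∀ t, |deriv h t| ≤ C) (a b : ℝ) : |h b - h a| ≤ C * |b - a| := by
  simpa [Real.norm_eq_abs] using
    Convex.norm_image_sub_le_of_norm_deriv_le (s := Set.univ)
      (fun t _ => (hd t)) (fun t _ => hb t) convex_univ trivial trivial

private lemma key01 {φ φ' : ℝ → ℝ} {c C : ℝ}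
    (hd : ∀ t, HasDerivAt φ (φ' t) t)
    (hb : ∀ t ∈ Set.Icc (0:ℝ) 1, |φ' t - c| ≤ C) :
    φ 1 ≤ φ 0 + c + C := by
  have h := norm_image_sub_le_of_norm_deriv_le_segment'
    (f := fun t => φ t - t * c) (f' := fun t => φ' t - c) (a := 0) (b := 1)
    (fun t _ => by
      have := (hd t).sub ((hasDerivAt_id t).mul_const c)
      simp only [id, one_mul] at this
      exact this.hasDerivWithinAt)
    (fun t ht => by
      simpa [Real.norm_eq_abs] using hb t (Set.mem_Icc.2 ⟨ht.1, ht.2.le⟩))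
    1 (by norm_num)
  simp only [Real.norm_eq_abs] at h
  have h2 := (abs_le.1 (by simpa using h)).2
  linarith

private lemma deriv_diff_of_cd2 {h : ℝ → ℝ} (hC : ContDiff ℝ 2 h) :
    Differentiable ℝ (deriv h) := by
  have : ContDiff ℝ (1+1) h := by exact_mod_cast hC
  exact (contDiff_succ_iff_deriv.mp this).2.2.differentiable one_ne_zero

private lemma descent1 {h : ℝ → ℝ} {m : ℝ} (hC : ContDiff ℝ 2 h)
    (hb : ∀ t, |deriv (deriv h) t| ≤ m) (a u : ℝ) :
    h (a + u) ≤ h a + deriv h a * u + m * u ^ 2 := by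
  have hdiff : Differentiable ℝ h := hC.differentiable two_ne_zero
  have hd' : Differentiable ℝ (deriv h) := deriv_diff_of_cd2 hC
  have hLip : ∀ s t : ℝ, |deriv h s - deriv h t| ≤ m * |s - t| := fun s t => mvt_abs hd' hb t s
  have hkey := key01 (φ := fun t => h (a + t * u)) (φ' := fun t => deriv h (a + t * u) * u)
    (c := deriv h a * u) (C := m * u ^ 2)
    (fun t => by
      have hinner : HasDerivAt (fun t : ℝ => a + t * u) u t := by
        simpa using ((hasDerivAt_id t).mul_const u).const_add a
      simpa [Function.comp_def] using ((hdiff (a + t * u)).hasDerivAt.comp t hinner))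
    (fun t ht => by
      have h1 : |deriv h (a + t * u) - deriv h a| ≤ m * |t * u| := by
        simpa using hLip (a + t * u) a
      have h2 : |t * u| ≤ |u| := by
        rw [abs_mul]
        calc |t| * |u| ≤ 1 * |u| := by
              apply mul_le_mul_of_nonneg_right _ (abs_nonneg u)
              rw [abs_le]; exact ⟨by linarith [ht.1], ht.2⟩
          _ = |u| := one_mul _
      have hm0 : 0 ≤ m := le_trans (abs_nonneg _) (hb 0)
      calc |deriv h (a + t * u) * u - deriv h a * u|
          = |deriv h (a + t * u) - deriv h a| * |u| := by rw [← abs_mul]; ring_nf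
        _ ≤ (m * |u|) * |u| := by
            apply mul_le_mul_of_nonneg_right _ (abs_nonneg u)
            exact le_trans h1 (by nlinarith [abs_nonneg u, abs_nonneg (t*u)])
        _ = m * u ^ 2 := by rw [mul_assoc, ← abs_mul, abs_mul_self]; ring
      )
  simpa using hkey

private lemma descent2 {G : ℝ → ℝ → ℝ} {m : ℝ}
    (hC : ContDiff ℝ 2 (fun p : ℝ × ℝ => G p.1 p.2))
    (h11 : ∀ a b, |deriv (fun t => deriv (fun s => G s b) t) a| ≤ m)
    (h12 : ∀ a b, |deriv (fun t => deriv (fun s => G t s) b) a| ≤ m)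
    (h21 : ∀ a b, |deriv (fun s => deriv (fun t => G t s) a) b| ≤ m)
    (h22 : ∀ a b, |deriv (fun s => deriv (fun t => G a t) s) b| ≤ m)
    (a b u v : ℝ) :
    G (a+u) (b+v) ≤ G a b + deriv (fun t => G t b) a * u + deriv (fun s => G a s) b * v
      + 2*m*(u^2+v^2) := by
  have hm0 : 0 ≤ m := le_trans (abs_nonneg _) (h11 0 0)
  set F : ℝ × ℝ → ℝ := fun p => G p.1 p.2 with hF
  have hFd : Differentiable ℝ F := hC.differentiable two_ne_zero
  have hFd' : Differentiable ℝ (fderiv ℝ F) := by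
    have : ContDiff ℝ 1 (fderiv ℝ F) := hC.fderiv_right (le_refl _)
    exact this.differentiable one_ne_zero
  have hline1 : ∀ (s t : ℝ), HasDerivAt (fun r : ℝ => (r, s)) ((1:ℝ), (0:ℝ)) t :=
    fun s t => (hasDerivAt_id t).prodMk (hasDerivAt_const t s)
  have hline2 : ∀ (s t : ℝ), HasDerivAt (fun r : ℝ => (s, r)) ((0:ℝ), (1:ℝ)) t :=
    fun s t => (hasDerivAt_const t s).prodMk (hasDerivAt_id t)
  have hp1 : ∀ p : ℝ × ℝ, HasDerivAt (fun t => G t p.2) (fderiv ℝ F p (1,0)) p.1 := by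
    intro p
    have := (hFd p).hasFDerivAt.comp_hasDerivAt p.1 (hline1 p.2 p.1)
    simpa [F, Function.comp_def] using this
  have hp2 : ∀ p : ℝ × ℝ, HasDerivAt (fun s => G p.1 s) (fderiv ℝ F p (0,1)) p.2 := by
    intro p
    have := (hFd p).hasFDerivAt.comp_hasDerivAt p.2 (hline2 p.1 p.2)
    simpa [F, Function.comp_def] using this
  have hq1 : ∀ p : ℝ × ℝ, deriv (fun t => G t p.2) p.1 = fderiv ℝ F p (1,0) :=
    fun p => (hp1 p).deriv
  have hq2 : ∀ p : ℝ × ℝ, deriv (fun s => G p.1 s) p.2 = fderiv ℝ F p (0,1) :=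
    fun p => (hp2 p).deriv
  have hcd1 : ∀ b' : ℝ, ContDiff ℝ 2 (fun t => G t b') := by
    intro b'
    exact hC.comp (contDiff_id.prodMk contDiff_const)
  have hcd2 : ∀ a' : ℝ, ContDiff ℝ 2 (fun s => G a' s) := by
    intro a'
    exact hC.comp (contDiff_const.prodMk contDiff_id)
  have L11 : ∀ (b' s t : ℝ),
      |deriv (fun r => G r b') s - deriv (fun r => G r b') t| ≤ m * |s - t| := by
    intro b' s t
    exact mvt_abs (deriv_diff_of_cd2 (hcd1 b')) (fun r => h11 r b') t s
  have L22 : ∀ (a' s t : ℝ),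
      |deriv (fun r => G a' r) s - deriv (fun r => G a' r) t| ≤ m * |s - t| := by
    intro a' s t
    exact mvt_abs (deriv_diff_of_cd2 (hcd2 a')) (fun r => h22 a' r) t s
  have L21 : ∀ (a' s t : ℝ),
      |deriv (fun r => G r s) a' - deriv (fun r => G r t) a'| ≤ m * |s - t| := by
    intro a' s t
    have he : (fun s' => deriv (fun r => G r s') a') = fun s' => fderiv ℝ F (a', s') (1,0) :=
      funext fun s' => hq1 (a', s')
    have hdiff : Differentiable ℝ (fun s' => deriv (fun r => G r s') a') := by
      rw [he]
      exact (hFd'.comp (differentiable_const a' |>.prodMk differentiable_id)).clm_apply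
        (differentiable_const _)
    exact mvt_abs hdiff (fun r => h21 a' r) t s
  have L12 : ∀ (b' s t : ℝ),
      |deriv (fun r => G s r) b' - deriv (fun r => G t r) b'| ≤ m * |s - t| := by
    intro b' s t
    have he : (fun s' => deriv (fun r => G s' r) b') = fun s' => fderiv ℝ F (s', b') (0,1) :=
      funext fun s' => hq2 (s', b')
    have hdiff : Differentiable ℝ (fun s' => deriv (fun r => G s' r) b') := by
      rw [he]
      exact (hFd'.comp (differentiable_id.prodMk (differentiable_const b'))).clm_apply
        (differentiable_const _)
    exact mvt_abs hdiff (fun r => h12 r b') t s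
  have hlin : ∀ p : ℝ × ℝ, fderiv ℝ F p (u, v)
      = u * fderiv ℝ F p (1,0) + v * fderiv ℝ F p (0,1) := by
    intro p
    have : ((u, v) : ℝ × ℝ) = u • ((1:ℝ),(0:ℝ)) + v • ((0:ℝ),(1:ℝ)) := by
      simp [Prod.ext_iff]
    rw [this, map_add, map_smul, map_smul, smul_eq_mul, smul_eq_mul]
  have hℓ : ∀ t : ℝ, HasDerivAt (fun t : ℝ => ((a + t*u : ℝ), (b + t*v : ℝ))) (u, v) t := by
    intro t
    exact (by simpa using ((hasDerivAt_id t).mul_const u).const_add a :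
        HasDerivAt (fun t : ℝ => a + t*u) u t).prodMk
      (by simpa using ((hasDerivAt_id t).mul_const v).const_add b)
  have hφ : ∀ t : ℝ, HasDerivAt (fun t => G (a + t*u) (b + t*v))
      (fderiv ℝ F (a + t*u, b + t*v) (u, v)) t := by
    intro t
    have := (hFd (a + t*u, b + t*v)).hasFDerivAt.comp_hasDerivAt t (hℓ t)
    simpa [F, Function.comp_def] using this
  have habs : ∀ t ∈ Set.Icc (0:ℝ) 1,
      |fderiv ℝ F (a + t*u, b + t*v) (u, v)
        - (deriv (fun t => G t b) a * u + deriv (fun s => G a s) b * v)|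
      ≤ 2*m*(u^2+v^2) := by
    intro t ht
    rw [hlin]
    have e1 : fderiv ℝ F (a + t*u, b + t*v) (1,0) = deriv (fun r => G r (b + t*v)) (a + t*u) :=
      (hq1 (a + t*u, b + t*v)).symm
    have e2 : fderiv ℝ F (a + t*u, b + t*v) (0,1) = deriv (fun r => G (a + t*u) r) (b + t*v) :=
      (hq2 (a + t*u, b + t*v)).symm
    rw [e1, e2]
    have d1 : |deriv (fun r => G r (b + t*v)) (a + t*u) - deriv (fun r => G r b) a|
        ≤ m * (|u| + |v|) := by
      have s1 := L11 (b + t*v) (a + t*u) a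
      have s2 := L21 a (b + t*v) b
      have htr : |deriv (fun r => G r (b + t*v)) (a + t*u) - deriv (fun r => G r b) a|
          ≤ |deriv (fun r => G r (b + t*v)) (a + t*u) - deriv (fun r => G r (b + t*v)) a|
            + |deriv (fun r => G r (b + t*v)) a - deriv (fun r => G r b) a| :=
        abs_sub_le _ _ _
      have e3 : a + t*u - a = t*u := by ring
      have e4 : b + t*v - b = t*v := by ring
      rw [e3] at s1; rw [e4] at s2
      have htu : |t*u| ≤ |u| := by
        rw [abs_mul]
        calc |t| * |u| ≤ 1 * |u| :=
              mul_le_mul_of_nonneg_right (abs_le.2 ⟨by linarith [ht.1], ht.2⟩) (abs_nonneg u)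
          _ = |u| := one_mul _
      have htv : |t*v| ≤ |v| := by
        rw [abs_mul]
        calc |t| * |v| ≤ 1 * |v| :=
              mul_le_mul_of_nonneg_right (abs_le.2 ⟨by linarith [ht.1], ht.2⟩) (abs_nonneg v)
          _ = |v| := one_mul _
      nlinarith [abs_nonneg u, abs_nonneg v]
    have d2 : |deriv (fun r => G (a + t*u) r) (b + t*v) - deriv (fun r => G a r) b|
        ≤ m * (|u| + |v|) := by
      have s1 := L22 (a + t*u) (b + t*v) b
      have s2 := L12 b (a + t*u) a
      have htr : |deriv (fun r => G (a + t*u) r) (b + t*v) - deriv (fun r => G a r) b|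
          ≤ |deriv (fun r => G (a + t*u) r) (b + t*v) - deriv (fun r => G (a + t*u) r) b|
            + |deriv (fun r => G (a + t*u) r) b - deriv (fun r => G a r) b| :=
        abs_sub_le _ _ _
      have e3 : b + t*v - b = t*v := by ring
      have e4 : a + t*u - a = t*u := by ring
      rw [e3] at s1; rw [e4] at s2
      have htu : |t*u| ≤ |u| := by
        rw [abs_mul]
        calc |t| * |u| ≤ 1 * |u| :=
              mul_le_mul_of_nonneg_right (abs_le.2 ⟨by linarith [ht.1], ht.2⟩) (abs_nonneg u)
          _ = |u| := one_mul _
      have htv : |t*v| ≤ |v| := by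
        rw [abs_mul]
        calc |t| * |v| ≤ 1 * |v| :=
              mul_le_mul_of_nonneg_right (abs_le.2 ⟨by linarith [ht.1], ht.2⟩) (abs_nonneg v)
          _ = |v| := one_mul _
      nlinarith [abs_nonneg u, abs_nonneg v]
    calc |u * deriv (fun r => G r (b + t*v)) (a + t*u)
            + v * deriv (fun r => G (a + t*u) r) (b + t*v)
          - (deriv (fun t => G t b) a * u + deriv (fun s => G a s) b * v)|
        ≤ |u| * |deriv (fun r => G r (b + t*v)) (a + t*u) - deriv (fun r => G r b) a|
          + |v| * |deriv (fun r => G (a + t*u) r) (b + t*v) - deriv (fun r => G a r) b| := by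
          have hre : u * deriv (fun r => G r (b + t*v)) (a + t*u)
              + v * deriv (fun r => G (a + t*u) r) (b + t*v)
            - (deriv (fun t => G t b) a * u + deriv (fun s => G a s) b * v)
            = u * (deriv (fun r => G r (b + t*v)) (a + t*u) - deriv (fun r => G r b) a)
              + v * (deriv (fun r => G (a + t*u) r) (b + t*v) - deriv (fun r => G a r) b) := by
            ring
          rw [hre]
          exact le_trans (abs_add_le _ _) (by rw [abs_mul, abs_mul])
      _ ≤ |u| * (m * (|u| + |v|)) + |v| * (m * (|u| + |v|)) :=
          add_le_add (mul_le_mul_of_nonneg_left d1 (abs_nonneg u))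
            (mul_le_mul_of_nonneg_left d2 (abs_nonneg v))
      _ ≤ 2*m*(u^2+v^2) := by
          nlinarith [abs_nonneg u, abs_nonneg v, sq_abs u, sq_abs v, sq_nonneg (abs u - abs v)]
  have h := key01 hφ habs
  simp only [one_mul, zero_mul, add_zero] at h
  linarith

private lemma sum_swap_sets {n : ℕ} (S : Fin n → Finset (Fin n))
    (hS : ∀ i j, j ∈ S i ↔ i ∈ S j) (F : Fin n → Fin n → ℝ) :
    ∑ i, ∑ j ∈ S i, F i j = ∑ i, ∑ j ∈ S i, F j i := by
  have key : ∀ (T : Finset (Fin n)) (f : Fin n → ℝ),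
      ∑ j ∈ T, f j = ∑ j, if j ∈ T then f j else 0 := by
    intro T f
    rw [Finset.sum_ite_mem, Finset.univ_inter]
  calc ∑ i, ∑ j ∈ S i, F i j = ∑ i, ∑ j, if j ∈ S i then F i j else 0 :=
        Finset.sum_congr rfl fun i _ => key _ _
    _ = ∑ j, ∑ i, if j ∈ S i then F i j else 0 := Finset.sum_comm
    _ = ∑ i, ∑ j, if j ∈ S i then F j i else 0 :=
        Finset.sum_congr rfl fun i _ => Finset.sum_congr rfl fun j _ =>
          if_congr (hS j i) rfl rfl
    _ = ∑ i, ∑ j ∈ S i, F j i :=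
        (Finset.sum_congr rfl fun i _ => (key _ _)).symm

/-- the inexact-BCD state-dependent network dynamics admit
`V(x) = ∑ᵢ fᵢ(xᵢ) + ½ ∑_{i≠j} min{g_ij(xᵢ,xⱼ), 0}` as a Lyapunov function with drift
`V(x^{k+1}) ≤ V(x^k) − m‖x^{k+1} − x^k‖²`.  Neighborhoods are
`N_i(x) = {j ≠ i : g_ij(xᵢ,xⱼ) ≤ 0}`. -/
theorem bcd_state_dependent_dynamics_lyapunov
    (n : ℕ) (m : ℝ) (hm : 0 < m)
    (f : Fin n → ℝ → ℝ) (g : Fin n → Fin n → ℝ → ℝ → ℝ)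
    (hfC : ∀ i, ContDiff ℝ 2 (f i))
    (hfB : ∀ i, BddBelow (Set.range (f i)))
    (hgC : ∀ i j, i ≠ j → ContDiff ℝ 2 (fun p : ℝ × ℝ => g i j p.1 p.2))
    (hgB : ∀ i j, i ≠ j → BddBelow (Set.range (fun p : ℝ × ℝ => g i j p.1 p.2)))
    (hsym : ∀ i j a b, i ≠ j → g i j a b = g j i b a)
    (hf2 : ∀ i t, |deriv (deriv (f i)) t| ≤ m)
    (hg11 : ∀ i j a b, i ≠ j → |deriv (fun t => deriv (fun s => g i j s b) t) a| ≤ m)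
    (hg12 : ∀ i j a b, i ≠ j → |deriv (fun t => deriv (fun s => g i j t s) b) a| ≤ m)
    (hg21 : ∀ i j a b, i ≠ j → |deriv (fun s => deriv (fun t => g i j t s) a) b| ≤ m)
    (hg22 : ∀ i j a b, i ≠ j → |deriv (fun s => deriv (fun t => g i j a t) s) b| ≤ m)
    (x : ℕ → EuclideanSpace ℝ (Fin n))
    (hdyn : ∀ k i, x (k + 1) i = x k i -
      (deriv (f i) (x k i) +
        ∑ j ∈ Finset.univ.filter (fun j => j ≠ i ∧ g i j (x k i) (x k j) ≤ 0),
          deriv (fun t => g i j t (x k j)) (x k i)) /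
      (2 * m * (((Finset.univ.filter
          (fun j => j ≠ i ∧ g i j (x k i) (x k j) ≤ 0)).card : ℝ) + 1))) :
    ∀ k : ℕ,
      (∑ i, f i (x (k+1) i) + (1/2) * ∑ i, ∑ j ∈ Finset.univ.filter (fun j => j ≠ i),
          min (g i j (x (k+1) i) (x (k+1) j)) 0)
      ≤ (∑ i, f i (x k i) + (1/2) * ∑ i, ∑ j ∈ Finset.univ.filter (fun j => j ≠ i),
          min (g i j (x k i) (x k j)) 0)
        - m * ‖x (k+1) - x k‖^2 := by
  intro k
  have hm0 : (0:ℝ) ≤ m := hm.le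
  -- displacement
  set u : Fin n → ℝ := fun i => x (k+1) i - x k i with hu
  have hx1 : ∀ i, x k i + u i = x (k+1) i := fun i => by simp [hu]
  -- neighborhoods
  set S : Fin n → Finset (Fin n) := fun i =>
    Finset.univ.filter (fun j => j ≠ i ∧ g i j (x k i) (x k j) ≤ 0) with hSdef
  have hScard : ∀ i j, j ∈ S i ↔ (j ≠ i ∧ g i j (x k i) (x k j) ≤ 0) := by
    intro i j
    simp [hSdef, Finset.mem_filter]
  have hSsym : ∀ i j, j ∈ S i ↔ i ∈ S j := by
    intro i j
    rw [hScard, hScard]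
    constructor
    · rintro ⟨h1, h2⟩
      exact ⟨h1.symm, by rw [← hsym i j (x k i) (x k j) h1.symm]; exact h2⟩
    · rintro ⟨h1, h2⟩
      exact ⟨h1.symm, by rw [hsym i j (x k i) (x k j) h1]; exact h2⟩
  -- dynamics, rearranged
  have hdu : ∀ i, deriv (f i) (x k i) + ∑ j ∈ S i, deriv (fun t => g i j t (x k j)) (x k i)
      = -(2*m*(((S i).card : ℝ)+1)) * u i := by
    intro i
    have h := hdyn k i
    simp only [hSdef, hu]
    have hc : (2*m*((((Finset.univ.filter
        (fun j => j ≠ i ∧ g i j (x k i) (x k j) ≤ 0)).card : ℝ))+1)) ≠ 0 := by positivity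
    rw [h]
    field_simp
    ring
  -- descent bound for f
  have bound1 : ∀ i, f i (x (k+1) i) ≤ f i (x k i) + deriv (f i) (x k i) * u i + m * u i ^ 2 := by
    intro i
    have h := descent1 (hfC i) (hf2 i) (x k i) (u i)
    rwa [hx1 i] at h
  -- descent bound for the min-terms
  have bound2 : ∀ i j, j ≠ i →
      min (g i j (x (k+1) i) (x (k+1) j)) 0 ≤ min (g i j (x k i) (x k j)) 0 +
        (if g i j (x k i) (x k j) ≤ 0 then
          deriv (fun t => g i j t (x k j)) (x k i) * u i
          + deriv (fun s => g i j (x k i) s) (x k j) * u j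
          + 2*m*(u i^2 + u j^2) else 0) := by
    intro i j hij
    by_cases hg : g i j (x k i) (x k j) ≤ 0
    · rw [if_pos hg, min_eq_left hg]
      have hd2 := descent2 (hgC i j (Ne.symm hij)) (fun a b => hg11 i j a b (Ne.symm hij))
        (fun a b => hg12 i j a b (Ne.symm hij)) (fun a b => hg21 i j a b (Ne.symm hij))
        (fun a b => hg22 i j a b (Ne.symm hij)) (x k i) (x k j) (u i) (u j)
      rw [hx1 i, hx1 j] at hd2
      calc min (g i j (x (k+1) i) (x (k+1) j)) 0 ≤ g i j (x (k+1) i) (x (k+1) j) :=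
            min_le_left _ _
        _ ≤ _ := by linarith [hd2]
    · rw [if_neg hg]
      have h0 : min (g i j (x k i) (x k j)) 0 = 0 := min_eq_right (le_of_not_ge hg)
      rw [h0]
      simpa using min_le_right (g i j (x (k+1) i) (x (k+1) j)) 0
  -- collapse the conditional sums onto S i
  have hcollapse : ∀ i (T : Fin n → ℝ),
      ∑ j ∈ Finset.univ.filter (fun j => j ≠ i),
        (if g i j (x k i) (x k j) ≤ 0 then T j else 0) = ∑ j ∈ S i, T j := by
    intro i T
    rw [hSdef]
    rw [← Finset.sum_filter, Finset.filter_filter]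
  -- step 1: sum the pointwise bounds
  have step1 : ∑ i, f i (x (k+1) i) + (1/2) * ∑ i, ∑ j ∈ Finset.univ.filter (fun j => j ≠ i),
        min (g i j (x (k+1) i) (x (k+1) j)) 0
      ≤ ∑ i, (f i (x k i) + deriv (f i) (x k i) * u i + m * u i ^ 2)
        + (1/2) * ∑ i, (∑ j ∈ Finset.univ.filter (fun j => j ≠ i),
            min (g i j (x k i) (x k j)) 0
          + ∑ j ∈ S i, (deriv (fun t => g i j t (x k j)) (x k i) * u i
              + deriv (fun s => g i j (x k i) s) (x k j) * u j
              + 2*m*(u i^2 + u j^2))) := by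
    have h1 : ∑ i, f i (x (k+1) i)
        ≤ ∑ i, (f i (x k i) + deriv (f i) (x k i) * u i + m * u i ^ 2) :=
      Finset.sum_le_sum fun i _ => bound1 i
    have h2 : ∑ i, ∑ j ∈ Finset.univ.filter (fun j => j ≠ i),
          min (g i j (x (k+1) i) (x (k+1) j)) 0
        ≤ ∑ i, (∑ j ∈ Finset.univ.filter (fun j => j ≠ i), min (g i j (x k i) (x k j)) 0
          + ∑ j ∈ S i, (deriv (fun t => g i j t (x k j)) (x k i) * u i
              + deriv (fun s => g i j (x k i) s) (x k j) * u j
              + 2*m*(u i^2 + u j^2))) := by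
      apply Finset.sum_le_sum
      intro i _
      rw [← hcollapse i, ← Finset.sum_add_distrib]
      apply Finset.sum_le_sum
      intro j hj
      exact bound2 i j (Finset.mem_filter.mp hj).2
    linarith
  -- step 2: identify the extra term
  have hp21 : ∀ i j, j ∈ S i →
      deriv (fun s => g j i (x k j) s) (x k i) = deriv (fun t => g i j t (x k j)) (x k i) := by
    intro i j hj
    have hij : j ≠ i := ((hScard i j).mp hj).1
    have : (fun s => g j i (x k j) s) = fun s => g i j s (x k j) := by
      funext s
      exact (hsym i j s (x k j) hij.symm).symm
    rw [this]
  have hswap1 : ∑ i, ∑ j ∈ S i, deriv (fun s => g i j (x k i) s) (x k j) * u j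
      = ∑ i, ∑ j ∈ S i, deriv (fun t => g i j t (x k j)) (x k i) * u i := by
    rw [sum_swap_sets S hSsym]
    exact Finset.sum_congr rfl fun i _ => Finset.sum_congr rfl fun j hj => by
      rw [hp21 i j hj]
  have hswap2 : ∑ i, ∑ j ∈ S i, (u j)^2 = ∑ i, ∑ j ∈ S i, (u i)^2 :=
    sum_swap_sets S hSsym (fun i j => (u j)^2)
  have hextra : ∑ i, (deriv (f i) (x k i) * u i + m * u i ^ 2)
      + (1/2) * ∑ i, ∑ j ∈ S i, (deriv (fun t => g i j t (x k j)) (x k i) * u i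
          + deriv (fun s => g i j (x k i) s) (x k j) * u j
          + 2*m*(u i^2 + u j^2))
      = ∑ i, (-(m * u i ^ 2)) := by
    have hswap2' : ∑ i, ∑ j ∈ S i, 2*m*u j^2 = ∑ i, ∑ j ∈ S i, 2*m*u i^2 :=
      sum_swap_sets S hSsym (fun i j => 2*m*u j^2)
    have step : ∑ i, ∑ j ∈ S i, (deriv (fun t => g i j t (x k j)) (x k i) * u i
          + deriv (fun s => g i j (x k i) s) (x k j) * u j + 2*m*(u i^2 + u j^2))
        = ∑ i, ∑ j ∈ S i, deriv (fun t => g i j t (x k j)) (x k i) * u i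
          + ∑ i, ∑ j ∈ S i, deriv (fun s => g i j (x k i) s) (x k j) * u j
          + (∑ i, ∑ j ∈ S i, 2*m*u i^2 + ∑ i, ∑ j ∈ S i, 2*m*u j^2) := by
      simp only [← Finset.sum_add_distrib]
      exact Finset.sum_congr rfl fun i _ => Finset.sum_congr rfl fun j _ => by ring
    rw [step, hswap1, hswap2']
    have einner1 : ∀ i, ∑ j ∈ S i, deriv (fun t => g i j t (x k j)) (x k i) * u i
        = (∑ j ∈ S i, deriv (fun t => g i j t (x k j)) (x k i)) * u i :=
      fun i => (Finset.sum_mul _ _ _).symm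
    have einner2 : ∀ i, ∑ j ∈ S i, 2*m*u i^2 = ((S i).card : ℝ) * (2*m*u i^2) := by
      intro i; rw [Finset.sum_const, nsmul_eq_mul]
    simp only [einner1, einner2]
    simp only [mul_add, Finset.mul_sum, ← Finset.sum_add_distrib]
    refine Finset.sum_congr rfl fun i _ => ?_
    linear_combination (u i) * (hdu i)
  -- norm identity
  have hnorm : m * ‖x (k+1) - x k‖^2 = ∑ i, m * u i^2 := by
    rw [EuclideanSpace.norm_eq, Real.sq_sqrt (Finset.sum_nonneg fun i _ => sq_nonneg _),
      Finset.mul_sum]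
    refine Finset.sum_congr rfl fun i _ => ?_
    congr 1
    rw [Real.norm_eq_abs, sq_abs]
    simp [hu]
  -- final assembly
  have eq1 : ∑ i, (f i (x k i) + deriv (f i) (x k i) * u i + m * u i ^ 2)
      = ∑ i, f i (x k i) + ∑ i, (deriv (f i) (x k i) * u i + m * u i ^ 2) := by
    rw [← Finset.sum_add_distrib]
    exact Finset.sum_congr rfl fun i _ => by ring
  have eq2 : ∑ i, (∑ j ∈ Finset.univ.filter (fun j => j ≠ i),
          min (g i j (x k i) (x k j)) 0
        + ∑ j ∈ S i, (deriv (fun t => g i j t (x k j)) (x k i) * u i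
            + deriv (fun s => g i j (x k i) s) (x k j) * u j
            + 2*m*(u i^2 + u j^2)))
      = ∑ i, ∑ j ∈ Finset.univ.filter (fun j => j ≠ i), min (g i j (x k i) (x k j)) 0
        + ∑ i, ∑ j ∈ S i, (deriv (fun t => g i j t (x k j)) (x k i) * u i
            + deriv (fun s => g i j (x k i) s) (x k j) * u j
            + 2*m*(u i^2 + u j^2)) := Finset.sum_add_distrib
  have eq3 : ∑ i, (-(m * u i ^ 2)) = -(∑ i, m * u i ^ 2) := by
    rw [← Finset.sum_neg_distrib]
  linarith [step1, eq1, eq2, hextra, eq3, hnorm]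
end

section
/- Let m > 0. For each i ∈ [n] let f_i: ℝ → ℝ be twice continuously differentiable, strictly convex, and attain a finite global minimum, and for each ordered pair i ≠ j let g_ij: ℝ² → ℝ be twice continuously differentiable, convex, bounded below, and symmetric (g_ij(a,b) = g_ji(b,a) for all a,b). Assume all second-order derivatives of every f_i and all second-order partial derivatives of every g_ij are bounded in absolute value by m. Then the sequence generated by x_i^{k+1} = x_i^k − [f_i'(x_i^k) + ∑_{j ∈ N_i(x^k)} ∂g_ij/∂x_i (x_i^k, x_j^k)] / (2m(|N_i(x^k)|+1)), i ∈ [n], converges to a point x* ∈ ℝⁿ. -/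
open Filter Finset

lemma quad_bound (h : ℝ → ℝ) (L : ℝ) (hd : Differentiable ℝ h)
    (hd' : Differentiable ℝ (deriv h)) (hL : ∀ t, |deriv (deriv h) t| ≤ L) (a b : ℝ) :
    h b ≤ h a + deriv h a * (b - a) + L * (b - a) ^ 2 := by
  have hlip : ∀ u v : ℝ, |deriv h u - deriv h v| ≤ L * |u - v| := by
    intro u v
    have := Convex.norm_image_sub_le_of_norm_deriv_le (f := deriv h)
      (fun x _ => hd' x) (fun x _ => (by simpa using hL x)) convex_univ
      (Set.mem_univ v) (Set.mem_univ u)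
    simpa [Real.norm_eq_abs] using this
  set φ : ℝ → ℝ := fun t => h t - deriv h a * t with hφ
  have hφd : Differentiable ℝ φ := hd.sub ((differentiable_id.const_mul _))
  have hφderiv : ∀ t, deriv φ t = deriv h t - deriv h a := by
    intro t
    rw [hφ]
    have h1 : HasDerivAt (fun t => h t - deriv h a * t) (deriv h t - deriv h a * 1) t :=
      (hd t).hasDerivAt.sub (((hasDerivAt_id t).const_mul (deriv h a)))
    simpa using h1.deriv
  have key : ‖φ b - φ a‖ ≤ (L * |b - a|) * ‖b - a‖ := by
    apply Convex.norm_image_sub_le_of_norm_deriv_le (f := φ) (s := segment ℝ a b)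
      (fun x _ => hφd x) ?_ (convex_segment a b) (left_mem_segment ℝ a b)
      (right_mem_segment ℝ a b)
    intro t ht
    rw [hφderiv t]
    rw [Real.norm_eq_abs]
    calc |deriv h t - deriv h a| ≤ L * |t - a| := hlip t a
    _ ≤ L * |b - a| := by
        have hL0 : 0 ≤ L := le_trans (abs_nonneg _) (hL 0)
        apply mul_le_mul_of_nonneg_left ?_ hL0
        rw [segment_eq_uIcc] at ht
        rw [Set.uIcc_eq_union] at ht
        rcases ht with ht | ht <;> rw [abs_le] <;> constructor <;>
          simp only [Set.mem_Icc] at ht <;> cases' abs_cases (b - a) with hc hc <;> linarith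
  have : |h b - h a - deriv h a * (b - a)| ≤ L * (b - a) ^ 2 := by
    have : φ b - φ a = h b - h a - deriv h a * (b - a) := by ring
    rw [this] at key
    rw [Real.norm_eq_abs] at key
    calc |h b - h a - deriv h a * (b - a)| ≤ L * |b - a| * |b - a| := key
    _ = L * (b - a) ^ 2 := by rw [mul_assoc, ← abs_mul, ← sq, abs_sq]
  have := (abs_le.mp this).2
  linarith

section Gsec
variable {G : ℝ × ℝ → ℝ}

lemma slice1_contDiff (hG : ContDiff ℝ 2 G) (b : ℝ) : ContDiff ℝ 2 (fun t => G (t, b)) :=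
  hG.comp (contDiff_id.prodMk contDiff_const)

lemma slice2_contDiff (hG : ContDiff ℝ 2 G) (a : ℝ) : ContDiff ℝ 2 (fun s => G (a, s)) :=
  hG.comp (contDiff_const.prodMk contDiff_id)

lemma contDiff2_deriv {h : ℝ → ℝ} (hh : ContDiff ℝ 2 h) : ContDiff ℝ 1 (deriv h) := by
  have : ContDiff ℝ (1 + 1) h := by norm_num at hh ⊢; exact hh
  exact (contDiff_succ_iff_deriv.mp this).2.2

lemma hasDerivAt_slot1 (hG : ContDiff ℝ 2 G) (a b : ℝ) :
    HasDerivAt (fun t => G (t, b)) (fderiv ℝ G (a, b) (1, 0)) a := by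
  have hpath : HasDerivAt (fun t : ℝ => (t, b)) ((1 : ℝ), (0 : ℝ)) a :=
    (hasDerivAt_id a).prodMk (hasDerivAt_const a b)
  exact (hG.differentiable (by norm_num) (a, b)).hasFDerivAt.comp_hasDerivAt a hpath

lemma hasDerivAt_slot2 (hG : ContDiff ℝ 2 G) (a b : ℝ) :
    HasDerivAt (fun s => G (a, s)) (fderiv ℝ G (a, b) (0, 1)) b := by
  have hpath : HasDerivAt (fun s : ℝ => (a, s)) ((0 : ℝ), (1 : ℝ)) b :=
    (hasDerivAt_const b a).prodMk (hasDerivAt_id b)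
  exact (hG.differentiable (by norm_num) (a, b)).hasFDerivAt.comp_hasDerivAt b hpath

lemma deriv_slot1_eq (hG : ContDiff ℝ 2 G) (a b : ℝ) :
    deriv (fun t => G (t, b)) a = fderiv ℝ G (a, b) (1, 0) :=
  (hasDerivAt_slot1 hG a b).deriv

lemma deriv_slot2_eq (hG : ContDiff ℝ 2 G) (a b : ℝ) :
    deriv (fun s => G (a, s)) b = fderiv ℝ G (a, b) (0, 1) :=
  (hasDerivAt_slot2 hG a b).deriv

lemma contDiff_D1 (hG : ContDiff ℝ 2 G) :
    ContDiff ℝ 1 (fun p : ℝ × ℝ => fderiv ℝ G p (1, 0)) := by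
  have h1 : ContDiff ℝ 1 (fderiv ℝ G) := by
    have h2 : ContDiff ℝ (1 + 1) G := by norm_num at hG ⊢; exact hG
    exact (contDiff_succ_iff_fderiv.mp h2).2.2
  exact (ContinuousLinearMap.apply ℝ ℝ ((1 : ℝ), (0 : ℝ))).contDiff.comp h1

/-- continuity of the first partial derivative as a function of both arguments -/
lemma continuous_d1 (hG : ContDiff ℝ 2 G) :
    Continuous (fun p : ℝ × ℝ => deriv (fun t => G (t, p.2)) p.1) := by
  have : (fun p : ℝ × ℝ => deriv (fun t => G (t, p.2)) p.1)
      = fun p : ℝ × ℝ => fderiv ℝ G p (1, 0) := by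
    funext p; exact deriv_slot1_eq hG p.1 p.2
  rw [this]
  exact (contDiff_D1 hG).continuous

/-- differentiability of the first partial derivative in the second variable -/
lemma differentiable_d1_second (hG : ContDiff ℝ 2 G) (a : ℝ) :
    Differentiable ℝ (fun s => deriv (fun t => G (t, s)) a) := by
  have heq : (fun s => deriv (fun t => G (t, s)) a)
      = (fun p : ℝ × ℝ => fderiv ℝ G p (1, 0)) ∘ (fun s => (a, s)) := by
    funext s; exact deriv_slot1_eq hG a s
  rw [heq]
  exact ((contDiff_D1 hG).differentiable one_ne_zero).comp
    ((differentiable_const a).prodMk differentiable_id)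

/-- gradient monotonicity for a convex `C²` function on the plane -/
lemma grad_mono (hG : ContDiff ℝ 2 G) (hconv : ConvexOn ℝ Set.univ G) (P Q : ℝ × ℝ) :
    fderiv ℝ G Q (P - Q) ≤ fderiv ℝ G P (P - Q) := by
  set ψ : ℝ → ℝ := fun t => G (Q + t • (P - Q)) with hψ
  have hpath : ∀ t : ℝ, HasDerivAt (fun t : ℝ => Q + t • (P - Q)) (P - Q) t := by
    intro t
    simpa using ((hasDerivAt_id t).smul_const (P - Q)).const_add Q
  have hψd : ∀ t, HasDerivAt ψ (fderiv ℝ G (Q + t • (P - Q)) (P - Q)) t := fun t =>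
    (hG.differentiable (by norm_num) _).hasFDerivAt.comp_hasDerivAt t (hpath t)
  have hψconv : ConvexOn ℝ Set.univ ψ := by
    have := hconv.comp_affineMap (AffineMap.lineMap Q P : ℝ →ᵃ[ℝ] ℝ × ℝ)
    simp only [Set.preimage_univ] at this
    have heq : ψ = G ∘ (AffineMap.lineMap Q P : ℝ → ℝ × ℝ) := by
      funext t
      show G (Q + t • (P - Q)) = G (AffineMap.lineMap Q P t)
      congr 1
      simp [AffineMap.lineMap_apply]
      module
    rw [heq]
    exact this
  have hmono := hψconv.monotoneOn_deriv (fun t _ => (hψd t).differentiableAt)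
  have h01 := hmono (Set.mem_univ 0) (Set.mem_univ 1) zero_le_one
  rw [(hψd 0).deriv, (hψd 1).deriv] at h01
  simpa using h01
end Gsec

lemma pair_bound (m : ℝ) (g : ℝ → ℝ → ℝ)
    (hG : ContDiff ℝ 2 (fun p : ℝ × ℝ => g p.1 p.2))
    (h11 : ∀ a b, |deriv (fun t => deriv (fun s => g s b) t) a| ≤ m)
    (h21 : ∀ a b, |deriv (fun s => deriv (fun t => g t s) a) b| ≤ m)
    (h22 : ∀ a b, |deriv (fun s => deriv (fun t => g a t) s) b| ≤ m)
    (a b u v : ℝ) :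
    g (a + u) (b + v) ≤ g a b + deriv (fun t => g t b) a * u
      + deriv (fun s => g a s) b * v + (3 * m / 2) * (u ^ 2 + v ^ 2) := by
  have hs1 : ∀ c, ContDiff ℝ 2 (fun t => g t c) := fun c => slice1_contDiff hG c
  have hs2 : ∀ c, ContDiff ℝ 2 (fun s => g c s) := fun c => slice2_contDiff hG c
  have step1 : g (a + u) (b + v) ≤ g a (b + v) + deriv (fun t => g t (b + v)) a * u + m * u ^ 2 := by
    have := quad_bound (fun t => g t (b + v)) m ((hs1 (b + v)).differentiable (by norm_num))
      ((contDiff2_deriv (hs1 (b + v))).differentiable one_ne_zero) (fun t => h11 t (b + v)) a (a + u)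
    simpa using this
  have step2 : g a (b + v) ≤ g a b + deriv (fun s => g a s) b * v + m * v ^ 2 := by
    have := quad_bound (fun s => g a s) m ((hs2 a).differentiable (by norm_num))
      ((contDiff2_deriv (hs2 a)).differentiable one_ne_zero) (fun s => h22 a s) b (b + v)
    simpa using this
  have step3 : |deriv (fun t => g t (b + v)) a - deriv (fun t => g t b) a| ≤ m * |v| := by
    have hdk := differentiable_d1_second hG a
    have := Convex.norm_image_sub_le_of_norm_deriv_le
      (f := fun s => deriv (fun t => g t s) a)
      (fun s _ => hdk s) (fun s _ => by simpa using h21 a s) convex_univ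
      (Set.mem_univ b) (Set.mem_univ (b + v))
    simpa [Real.norm_eq_abs, abs_sub_comm] using this
  have hcross : deriv (fun t => g t (b + v)) a * u
      ≤ deriv (fun t => g t b) a * u + m * |v| * |u| := by
    have h1 : (deriv (fun t => g t (b + v)) a - deriv (fun t => g t b) a) * u ≤ m * |v| * |u| := by
      calc (deriv (fun t => g t (b + v)) a - deriv (fun t => g t b) a) * u
          ≤ |(deriv (fun t => g t (b + v)) a - deriv (fun t => g t b) a) * u| := le_abs_self _
        _ = |deriv (fun t => g t (b + v)) a - deriv (fun t => g t b) a| * |u| := abs_mul _ _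
        _ ≤ m * |v| * |u| := mul_le_mul_of_nonneg_right step3 (abs_nonneg u)
    linarith
  have habs : m * |v| * |u| ≤ m * (u ^ 2 + v ^ 2) / 2 := by
    have hm0 : 0 ≤ m := le_trans (abs_nonneg _) (h11 0 0)
    nlinarith [sq_nonneg (|u| - |v|), sq_abs u, sq_abs v, abs_nonneg u, abs_nonneg v]
  linarith
section main
variable {n : ℕ} (f : Fin n → ℝ → ℝ) (g : Fin n → Fin n → ℝ → ℝ → ℝ) (m : ℝ)

/-- neighbourhood of `i` at state `y` -/
noncomputable def nbr (y : EuclideanSpace ℝ (Fin n)) (i : Fin n) : Finset (Fin n) :=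
  Finset.univ.filter (fun j => j ≠ i ∧ g i j (y i) (y j) ≤ 0)

/-- the "gradient" used by the dynamics, for a fixed configuration `c` -/
noncomputable def Gc (c : Fin n → Finset (Fin n)) (y : EuclideanSpace ℝ (Fin n)) (i : Fin n) : ℝ :=
  deriv (f i) (y i) + ∑ j ∈ c i, deriv (fun t => g i j t (y j)) (y i)

noncomputable def Gfull (y : EuclideanSpace ℝ (Fin n)) (i : Fin n) : ℝ := Gc f g (nbr g y) y i

noncomputable def stepv (y : EuclideanSpace ℝ (Fin n)) (i : Fin n) : ℝ :=
  -(Gfull f g y i) / (2 * m * (((nbr g y i).card : ℝ) + 1))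

noncomputable def Tmap (y : EuclideanSpace ℝ (Fin n)) : EuclideanSpace ℝ (Fin n) :=
  WithLp.toLp 2 (fun i => y i + stepv f g m y i)

/-- Lyapunov function -/
noncomputable def V (y : EuclideanSpace ℝ (Fin n)) : ℝ :=
  ∑ i, f i (y i) +
    (1 / 2) * ∑ i, ∑ j ∈ Finset.univ.filter (fun j => j ≠ i), min (g i j (y i) (y j)) 0

/-- "good" configurations -/
def GoodC (c : Fin n → Finset (Fin n)) : Prop :=
  (∀ i j, j ∈ c i ↔ i ∈ c j) ∧ ∀ i j, j ∈ c i → j ≠ i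

section lemmas

lemma deriv_swap (hsym : ∀ i j a b, i ≠ j → g i j a b = g j i b a) {i j : Fin n} (hij : i ≠ j) (a b : ℝ) :
    deriv (fun t => g i j t b) a = deriv (fun t => g j i b t) a := by
  congr 1
  funext t
  exact hsym i j t b hij

lemma mem_nbr {y : EuclideanSpace ℝ (Fin n)} {i j : Fin n} :
    j ∈ nbr g y i ↔ j ≠ i ∧ g i j (y i) (y j) ≤ 0 := by
  simp [nbr]

lemma nbr_symm (hsym : ∀ i j a b, i ≠ j → g i j a b = g j i b a) {y : EuclideanSpace ℝ (Fin n)} {i j : Fin n} :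
    j ∈ nbr g y i ↔ i ∈ nbr g y j := by
  simp only [mem_nbr]
  constructor
  · rintro ⟨hne, hle⟩
    exact ⟨hne.symm, by rwa [← hsym i j (y i) (y j) hne.symm]⟩
  · rintro ⟨hne, hle⟩
    exact ⟨hne.symm, by rwa [hsym i j (y i) (y j) hne]⟩

lemma goodC_nbr (hsym : ∀ i j a b, i ≠ j → g i j a b = g j i b a) (y : EuclideanSpace ℝ (Fin n)) : GoodC (nbr g y) :=
  ⟨fun _ _ => nbr_symm g hsym, fun _ _ hj => ((mem_nbr g).mp hj).1⟩

lemma sum_swap_good {c : Fin n → Finset (Fin n)} (hc : ∀ i j, j ∈ c i ↔ i ∈ c j)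
    (F : Fin n → Fin n → ℝ) :
    ∑ i, ∑ j ∈ c i, F i j = ∑ i, ∑ j ∈ c i, F j i := by
  have h1 : ∀ (H : Fin n → Fin n → ℝ) (i : Fin n),
      ∑ j ∈ c i, H i j = ∑ j, if j ∈ c i then H i j else 0 := by
    intro H i
    rw [Finset.sum_ite_mem, Finset.univ_inter]
  calc ∑ i, ∑ j ∈ c i, F i j = ∑ i, ∑ j, if j ∈ c i then F i j else 0 := by
        simp only [h1]
    _ = ∑ j, ∑ i, if j ∈ c i then F i j else 0 := Finset.sum_comm
    _ = ∑ j, ∑ i, if i ∈ c j then F i j else 0 := by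
        apply Finset.sum_congr rfl; intro j _; apply Finset.sum_congr rfl; intro i _
        exact if_congr (hc i j) rfl rfl
    _ = ∑ j, ∑ i ∈ c j, F i j := by
        apply Finset.sum_congr rfl; intro j _
        rw [Finset.sum_ite_mem, Finset.univ_inter]
    _ = ∑ i, ∑ j ∈ c i, F j i := rfl

lemma Gfull_eq_step (hm : 0 < m) (y : EuclideanSpace ℝ (Fin n)) (i : Fin n) :
    Gfull f g y i = -(2 * m * (((nbr g y i).card : ℝ) + 1)) * stepv f g m y i := by
  have hden : (2 * m * (((nbr g y i).card : ℝ) + 1)) ≠ 0 := by positivity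
  rw [stepv]
  field_simp

end lemmas
end main

section descent
variable {n : ℕ} (f : Fin n → ℝ → ℝ) (g : Fin n → Fin n → ℝ → ℝ → ℝ) (m : ℝ)

lemma descent (hm : 0 < m)
    (hfC : ∀ i, ContDiff ℝ 2 (f i)) (hf2 : ∀ i t, |deriv (deriv (f i)) t| ≤ m)
    (hgC : ∀ i j, i ≠ j → ContDiff ℝ 2 (fun p : ℝ × ℝ => g i j p.1 p.2))
    (hsym : ∀ i j a b, i ≠ j → g i j a b = g j i b a)
    (hg11 : ∀ i j a b, i ≠ j → |deriv (fun t => deriv (fun s => g i j s b) t) a| ≤ m)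
    (hg21 : ∀ i j a b, i ≠ j → |deriv (fun s => deriv (fun t => g i j t s) a) b| ≤ m)
    (hg22 : ∀ i j a b, i ≠ j → |deriv (fun s => deriv (fun t => g i j a t) s) b| ≤ m)
    (y : EuclideanSpace ℝ (Fin n)) :
    V f g (Tmap f g m y) ≤ V f g y - m * ∑ i, (stepv f g m y i) ^ 2 := by
  classical
  set Δ := stepv f g m y with hΔ
  set y' := Tmap f g m y with hy'
  have hy'i : ∀ i, y' i = y i + Δ i := fun i => rfl
  set N := nbr g y with hN
  -- the quadratic correction in the pair bound
  set A : Fin n → Fin n → ℝ := fun i j =>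
    deriv (fun t => g i j t (y j)) (y i) * Δ i
    + deriv (fun s => g i j (y i) s) (y j) * Δ j
    + 3 * m / 2 * ((Δ i) ^ 2 + (Δ j) ^ 2) with hA
  have hfb : ∀ i, f i (y' i) ≤ f i (y i) + deriv (f i) (y i) * Δ i + m * (Δ i) ^ 2 := by
    intro i
    have := quad_bound (f i) m ((hfC i).differentiable (by norm_num))
      ((contDiff2_deriv (hfC i)).differentiable one_ne_zero) (hf2 i) (y i) (y i + Δ i)
    simpa [hy'i] using this
  have hgb : ∀ i j, j ≠ i → min (g i j (y' i) (y' j)) 0 ≤ min (g i j (y i) (y j)) 0 +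
      (if j ∈ N i then A i j else 0) := by
    intro i j hji
    have hij : i ≠ j := hji.symm
    by_cases hmem : j ∈ N i
    · have hle : g i j (y i) (y j) ≤ 0 := ((mem_nbr g).mp hmem).2
      rw [if_pos hmem, min_eq_left hle]
      refine le_trans (min_le_left _ _) ?_
      have hpb := pair_bound m (g i j) (hgC i j hij) (fun a b => hg11 i j a b hij)
        (fun a b => hg21 i j a b hij) (fun a b => hg22 i j a b hij)
        (y i) (y j) (Δ i) (Δ j)
      rw [hy'i, hy'i, hA]
      dsimp only
      linarith [hpb]
    · rw [if_neg hmem, add_zero]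
      have hpos : 0 ≤ g i j (y i) (y j) := by
        by_contra hneg
        push_neg at hneg
        exact hmem ((mem_nbr g).mpr ⟨hji, le_of_lt hneg⟩)
      rw [min_eq_right hpos]
      exact min_le_right _ _
  -- named sums
  set S1 := ∑ i, deriv (f i) (y i) * Δ i with hS1
  set S2 := ∑ i, (Δ i) ^ 2 with hS2
  set SP := ∑ i, (∑ j ∈ N i, deriv (fun t => g i j t (y j)) (y i)) * Δ i with hSP
  set SD := ∑ i, ((N i).card : ℝ) * (Δ i) ^ 2 with hSD
  -- Claim 1 : V y' ≤ V y + S1 + m * S2 + (1/2) * SS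
  have claim1 : V f g y' ≤ V f g y + S1 + m * S2
      + (1 / 2) * ∑ i, ∑ j ∈ N i, A i j := by
    have hVexp : V f g y' ≤
        (∑ i, (f i (y i) + deriv (f i) (y i) * Δ i + m * (Δ i) ^ 2))
        + (1 / 2) * ∑ i, ∑ j ∈ Finset.univ.filter (fun j => j ≠ i),
            (min (g i j (y i) (y j)) 0 + (if j ∈ N i then A i j else 0)) := by
      rw [V]
      apply add_le_add
      · exact Finset.sum_le_sum (fun i _ => hfb i)
      · apply mul_le_mul_of_nonneg_left ?_ (by norm_num : (0:ℝ) ≤ 1/2)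
        apply Finset.sum_le_sum
        intro i _
        apply Finset.sum_le_sum
        intro j hj
        exact hgb i j (Finset.mem_filter.mp hj).2
    have hite : ∀ i, ∑ j ∈ Finset.univ.filter (fun j => j ≠ i),
        (if j ∈ N i then A i j else 0) = ∑ j ∈ N i, A i j := by
      intro i
      rw [Finset.sum_ite_mem]
      congr 1
      apply Finset.inter_eq_right.mpr
      intro j hj
      exact Finset.mem_filter.mpr ⟨Finset.mem_univ j, ((mem_nbr g).mp hj).1⟩
    calc V f g y' ≤ _ := hVexp
      _ = V f g y + S1 + m * S2 + (1 / 2) * ∑ i, ∑ j ∈ N i, A i j := by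
          rw [V, hS1, hS2]
          simp only [Finset.sum_add_distrib, Finset.mul_sum, hite, Finset.sum_mul]
          ring_nf
          simp only [Finset.sum_mul, Finset.mul_sum]
  -- Claim 2 : SS = 2 * SP + 3 * m * SD
  have hNsymm : ∀ i j, j ∈ N i ↔ i ∈ N j := fun i j => nbr_symm g hsym
  have claim2 : ∑ i, ∑ j ∈ N i, A i j = 2 * SP + 3 * m * SD := by
    have hsplit : ∑ i, ∑ j ∈ N i, A i j
        = (∑ i, ∑ j ∈ N i, deriv (fun t => g i j t (y j)) (y i) * Δ i)
        + (∑ i, ∑ j ∈ N i, deriv (fun s => g i j (y i) s) (y j) * Δ j)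
        + (∑ i, ∑ j ∈ N i, 3 * m / 2 * ((Δ i) ^ 2 + (Δ j) ^ 2)) := by
      simp only [hA, Finset.sum_add_distrib]
    have hswap2 : ∑ i, ∑ j ∈ N i, deriv (fun s => g i j (y i) s) (y j) * Δ j
        = ∑ i, ∑ j ∈ N i, deriv (fun t => g i j t (y j)) (y i) * Δ i := by
      rw [sum_swap_good hNsymm (fun a b => deriv (fun s => g a b (y a) s) (y b) * Δ b)]
      apply Finset.sum_congr rfl
      intro i _
      apply Finset.sum_congr rfl
      intro j hj
      have hij : i ≠ j := (((mem_nbr g).mp hj).1).symm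
      have : (fun s => g j i (y j) s) = (fun t => g i j t (y j)) := by
        funext s
        exact (hsym i j s (y j) hij).symm
      rw [this]
    have hswap3 : ∑ i, ∑ j ∈ N i, ((Δ j) ^ 2)
        = ∑ i, ∑ j ∈ N i, ((Δ i) ^ 2) := by
      exact sum_swap_good hNsymm (fun a b => (Δ b) ^ 2)
    have hconst : ∀ i, ∑ _j ∈ N i, ((Δ i) ^ 2) = ((N i).card : ℝ) * (Δ i) ^ 2 := by
      intro i
      rw [Finset.sum_const, nsmul_eq_mul]
    have hfirst : ∀ i, ∑ j ∈ N i, deriv (fun t => g i j t (y j)) (y i) * Δ i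
        = (∑ j ∈ N i, deriv (fun t => g i j t (y j)) (y i)) * Δ i := by
      intro i
      rw [Finset.sum_mul]
    have hthird : ∑ i, ∑ j ∈ N i, 3 * m / 2 * ((Δ i) ^ 2 + (Δ j) ^ 2)
        = 3 * m * SD := by
      have : ∀ i, ∑ j ∈ N i, 3 * m / 2 * ((Δ i) ^ 2 + (Δ j) ^ 2)
          = 3 * m / 2 * ((∑ j ∈ N i, (Δ i) ^ 2) + (∑ j ∈ N i, (Δ j) ^ 2)) := by
        intro i
        rw [← Finset.mul_sum, Finset.sum_add_distrib]
      simp only [this]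
      rw [← Finset.mul_sum, Finset.sum_add_distrib, hswap3, hSD]
      simp only [hconst]
      ring
    rw [hsplit, hswap2, hthird]
    simp only [hfirst]
    rw [hSP]
    ring
  -- Claim 3 : S1 + SP = -2*m*SD - 2*m*S2
  have claim3 : S1 + SP = -(2 * m) * SD - (2 * m) * S2 := by
    have : ∀ i, deriv (f i) (y i) * Δ i
        + (∑ j ∈ N i, deriv (fun t => g i j t (y j)) (y i)) * Δ i
        = -(2 * m) * (((N i).card : ℝ) * (Δ i) ^ 2) - (2 * m) * (Δ i) ^ 2 := by
      intro i
      have hG : Gfull f g y i = -(2 * m * (((N i).card : ℝ) + 1)) * Δ i :=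
        Gfull_eq_step f g m hm y i
      have hGdef : Gfull f g y i = deriv (f i) (y i)
          + ∑ j ∈ N i, deriv (fun t => g i j t (y j)) (y i) := rfl
      have := hG
      rw [hGdef] at this
      calc deriv (f i) (y i) * Δ i
          + (∑ j ∈ N i, deriv (fun t => g i j t (y j)) (y i)) * Δ i
          = (deriv (f i) (y i) + ∑ j ∈ N i, deriv (fun t => g i j t (y j)) (y i)) * Δ i := by ring
        _ = (-(2 * m * (((N i).card : ℝ) + 1)) * Δ i) * Δ i := by rw [this]
        _ = -(2 * m) * (((N i).card : ℝ) * (Δ i) ^ 2) - (2 * m) * (Δ i) ^ 2 := by ring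
    rw [hS1, hSP, ← Finset.sum_add_distrib]
    simp only [this]
    rw [Finset.sum_sub_distrib, ← Finset.mul_sum, ← Finset.mul_sum, hSD, hS2]
  -- finish
  have hSDnn : 0 ≤ SD := Finset.sum_nonneg fun i _ => by positivity
  have hfin : V f g y' ≤ V f g y - m * S2 := by
    rw [claim2] at claim1
    nlinarith [claim1, claim3, hSDnn, hm.le]
  exact hfin
end descent

section Gsec2
variable {G : ℝ × ℝ → ℝ}
lemma fderiv_expand (hG : ContDiff ℝ 2 G) (r w : ℝ × ℝ) :
    fderiv ℝ G r w = deriv (fun t => G (t, r.2)) r.1 * w.1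
      + deriv (fun s => G (r.1, s)) r.2 * w.2 := by
  have hw : w = w.1 • ((1 : ℝ), (0 : ℝ)) + w.2 • ((0 : ℝ), (1 : ℝ)) := by
    ext <;> simp
  rw [deriv_slot1_eq hG, deriv_slot2_eq hG]
  conv_lhs => rw [hw]
  rw [map_add, map_smul, map_smul]
  simp [mul_comm]
end Gsec2

section seq
variable {n : ℕ} (f : Fin n → ℝ → ℝ) (g : Fin n → Fin n → ℝ → ℝ → ℝ) (m : ℝ)

lemma V_bddBelow (hfMin : ∀ i, ∃ z, ∀ y, f i z ≤ f i y)
    (hgB : ∀ i j, i ≠ j → BddBelow (Set.range (fun p : ℝ × ℝ => g i j p.1 p.2))) :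
    ∃ C, ∀ y, C ≤ V f g y := by
  classical
  choose z hz using hfMin
  refine ⟨∑ i, f i (z i) + (1 / 2) * ∑ i, ∑ j ∈ Finset.univ.filter (fun j => j ≠ i),
      min (sInf (Set.range (fun p : ℝ × ℝ => g i j p.1 p.2))) 0, fun y => ?_⟩
  rw [V]
  apply add_le_add
  · exact Finset.sum_le_sum fun i _ => hz i (y i)
  · apply mul_le_mul_of_nonneg_left ?_ (by norm_num : (0:ℝ) ≤ 1/2)
    apply Finset.sum_le_sum
    intro i _
    apply Finset.sum_le_sum
    intro j hj
    have hji : j ≠ i := (Finset.mem_filter.mp hj).2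
    refine min_le_min ?_ le_rfl
    exact csInf_le (hgB i j hji.symm) ⟨(y i, y j), rfl⟩

/-- coercivity of a strictly convex function with a minimiser -/
lemma sublevel_bdd (f0 : ℝ → ℝ) (hconv : StrictConvexOn ℝ Set.univ f0) (z : ℝ)
    (hz : ∀ w, f0 z ≤ f0 w) (K : ℝ) : ∃ R, ∀ w, f0 w ≤ K → |w| ≤ R := by
  have hmid : ∀ u : ℝ, u ≠ z → f0 z < f0 u := by
    intro u hu
    rcases lt_or_eq_of_le (hz u) with h | h
    · exact h
    · exfalso
      have := hconv.2 (Set.mem_univ z) (Set.mem_univ u) (fun h' => hu h'.symm)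
        (by norm_num : (0:ℝ) < 1/2) (by norm_num : (0:ℝ) < 1/2) (by norm_num)
      rw [← h] at this
      have h2 : f0 z ≤ f0 ((1/2 : ℝ) • z + (1/2 : ℝ) • u) := hz _
      simp only [smul_eq_mul] at this h2
      linarith
  set ep := f0 (z + 1) - f0 z with hep
  set em := f0 (z - 1) - f0 z with hem
  have hep0 : 0 < ep := sub_pos.mpr (hmid (z + 1) (by linarith))
  have hem0 : 0 < em := sub_pos.mpr (hmid (z - 1) (by linarith))
  refine ⟨|z| + 1 + |(K - f0 z) / ep| + |(K - f0 z) / em|, fun w hw => ?_⟩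
  have hcv := hconv.convexOn
  have hbound : z - 1 - |(K - f0 z) / em| ≤ w ∧ w ≤ z + 1 + |(K - f0 z) / ep| := by
    constructor
    · rcases le_or_gt (z - 1) w with h | h
      · have := abs_nonneg ((K - f0 z) / em); linarith
      · -- w < z - 1
        have hsec := hcv.secant_mono (Set.mem_univ z) (Set.mem_univ w)
          (Set.mem_univ (z - 1)) (by intro h'; rw [h'] at h; linarith)
          (by intro h'; linarith) (le_of_lt h)
        -- (f0 w - f0 z)/(w - z) ≤ (f0 (z-1) - f0 z)/((z-1) - z)
        have hden : (z - 1 : ℝ) - z = -1 := by ring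
        rw [hden] at hsec
        have h1 : (f0 (z-1) - f0 z) / (-1 : ℝ) = -em := by rw [hem]; ring
        rw [h1] at hsec
        -- (f0 w - f0 z)/(w - z) ≤ -em, w - z < 0
        have hwz : w - z < 0 := by linarith
        have h2 : f0 w - f0 z ≥ -em * (w - z) := by
          have := (div_le_iff_of_neg hwz).mp hsec
          linarith
        have h3 : em * (z - w) ≤ K - f0 z := by nlinarith
        have h4 : z - w ≤ (K - f0 z) / em := (le_div_iff₀ hem0).mpr (by linarith)
        have h5 : (K - f0 z) / em ≤ |(K - f0 z) / em| := le_abs_self _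
        linarith
    · rcases le_or_gt w (z + 1) with h | h
      · have := abs_nonneg ((K - f0 z) / ep); linarith
      · have hsec := hcv.secant_mono (Set.mem_univ z) (Set.mem_univ (z + 1))
          (Set.mem_univ w) (by intro h'; linarith) (by intro h'; rw [h'] at h; linarith)
          (le_of_lt h)
        have hden : (z + 1 : ℝ) - z = 1 := by ring
        rw [hden] at hsec
        have h1 : (f0 (z+1) - f0 z) / (1 : ℝ) = ep := by rw [hep]; ring
        rw [h1] at hsec
        have hwz : 0 < w - z := by linarith
        have h2 : ep * (w - z) ≤ f0 w - f0 z := by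
          have := (le_div_iff₀ hwz).mp hsec
          linarith
        have h4 : w - z ≤ (K - f0 z) / ep := (le_div_iff₀ hep0).mpr (by nlinarith)
        have h5 : (K - f0 z) / ep ≤ |(K - f0 z) / ep| := le_abs_self _
        linarith
  rw [abs_le]
  constructor
  · have := neg_abs_le z; have := abs_nonneg ((K - f0 z) / ep); linarith [hbound.1]
  · have := le_abs_self z; have := abs_nonneg ((K - f0 z) / em); linarith [hbound.2]

lemma Gc_continuous (hfC : ∀ i, ContDiff ℝ 2 (f i))
    (hgC : ∀ i j, i ≠ j → ContDiff ℝ 2 (fun p : ℝ × ℝ => g i j p.1 p.2))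
    (c : Fin n → Finset (Fin n)) (hc : GoodC c) (i : Fin n) :
    Continuous (fun y : EuclideanSpace ℝ (Fin n) => Gc f g c y i) := by
  apply Continuous.add
  · exact (contDiff2_deriv (hfC i)).continuous.comp (EuclideanSpace.proj i).continuous
  · apply continuous_finset_sum
    intro j hj
    have hij : i ≠ j := (hc.2 i j hj).symm
    have h1 : Continuous (fun p : ℝ × ℝ => deriv (fun t => g i j t p.2) p.1) := by
      have := continuous_d1 (hgC i j hij)
      simpa using this
    exact h1.comp ((EuclideanSpace.proj i).continuous.prodMk (EuclideanSpace.proj j).continuous)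

lemma crit_unique (hfC : ∀ i, ContDiff ℝ 2 (f i))
    (hfStrict : ∀ i, StrictConvexOn ℝ Set.univ (f i))
    (hgC : ∀ i j, i ≠ j → ContDiff ℝ 2 (fun p : ℝ × ℝ => g i j p.1 p.2))
    (hgConv : ∀ i j, i ≠ j → ConvexOn ℝ Set.univ (fun p : ℝ × ℝ => g i j p.1 p.2))
    (hsym : ∀ i j a b, i ≠ j → g i j a b = g j i b a)
    (c : Fin n → Finset (Fin n)) (hc : GoodC c) (p q : EuclideanSpace ℝ (Fin n))
    (hp : ∀ i, Gc f g c p i = 0) (hq : ∀ i, Gc f g c q i = 0) : p = q := by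
  classical
  by_contra hne
  have hex : ∃ i₀, p i₀ ≠ q i₀ := by
    by_contra hh
    push_neg at hh
    exact hne (PiLp.ext hh)
  obtain ⟨i₀, hi₀⟩ := hex
  set F : Fin n → Fin n → ℝ := fun a b =>
    (deriv (fun t => g a b t (p b)) (p a) - deriv (fun t => g a b t (q b)) (q a)) * (p a - q a)
    with hF
  set A := ∑ i, (deriv (f i) (p i) - deriv (f i) (q i)) * (p i - q i) with hAdef
  set B := ∑ i, ∑ j ∈ c i, F i j with hBdef
  have hAB : A + B = 0 := by
    rw [hAdef, hBdef, ← Finset.sum_add_distrib]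
    apply Finset.sum_eq_zero
    intro i _
    have h1 := hp i
    have h2 := hq i
    rw [Gc] at h1 h2
    have h3 : ∑ j ∈ c i, F i j
        = (∑ j ∈ c i, deriv (fun t => g i j t (p j)) (p i)
          - ∑ j ∈ c i, deriv (fun t => g i j t (q j)) (q i)) * (p i - q i) := by
      simp only [hF]
      rw [← Finset.sum_mul, Finset.sum_sub_distrib]
    rw [h3]
    have e1 : deriv (f i) (p i) = -∑ j ∈ c i, deriv (fun t => g i j t (p j)) (p i) := by
      linarith
    have e2 : deriv (f i) (q i) = -∑ j ∈ c i, deriv (fun t => g i j t (q j)) (q i) := by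
      linarith
    rw [e1, e2]
    ring
  have hB : 0 ≤ B := by
    have hswap : B = ∑ i, ∑ j ∈ c i, F j i := by
      rw [hBdef]; exact sum_swap_good hc.1 F
    have h2B : 2 * B = ∑ i, ∑ j ∈ c i, (F i j + F j i) := by
      simp only [Finset.sum_add_distrib]
      rw [← hBdef, ← hswap]; ring
    have hterm : ∀ i j, j ∈ c i → 0 ≤ F i j + F j i := by
      intro i j hj
      have hji : j ≠ i := hc.2 i j hj
      have hij : i ≠ j := hji.symm
      set G : ℝ × ℝ → ℝ := fun r => g i j r.1 r.2 with hG
      have hGC : ContDiff ℝ 2 G := hgC i j hij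
      have hGconv : ConvexOn ℝ Set.univ G := hgConv i j hij
      set P : ℝ × ℝ := (p i, p j) with hP
      set Q : ℝ × ℝ := (q i, q j) with hQ
      have hmono := grad_mono hGC hGconv P Q
      have hexp1 := fderiv_expand hGC P (P - Q)
      have hexp2 := fderiv_expand hGC Q (P - Q)
      have hfun : ∀ a : ℝ, (fun t => g j i t a) = (fun t => g i j a t) := by
        intro a
        funext t
        exact hsym j i t a hji
      have e1 : F i j = (deriv (fun t => G (t, P.2)) P.1
          - deriv (fun t => G (t, Q.2)) Q.1) * (P.1 - Q.1) := rfl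
      have e2 : F j i = (deriv (fun s => G (P.1, s)) P.2
          - deriv (fun s => G (Q.1, s)) Q.2) * (P.2 - Q.2) := by
        simp only [hF, hfun]
        rfl
      have key : F i j + F j i = fderiv ℝ G P (P - Q) - fderiv ℝ G Q (P - Q) := by
        rw [e1, e2, hexp1, hexp2]
        have h1 : (P - Q).1 = P.1 - Q.1 := rfl
        have h2 : (P - Q).2 = P.2 - Q.2 := rfl
        rw [h1, h2]
        ring
      rw [key] at *
      linarith
    have h2Bnn : 0 ≤ 2 * B := by
      rw [h2B]
      exact Finset.sum_nonneg fun i _ => Finset.sum_nonneg fun j hj => hterm i j hj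
    linarith
  have hA : A ≤ 0 := by linarith
  have hmonoA : ∀ i, 0 ≤ (deriv (f i) (p i) - deriv (f i) (q i)) * (p i - q i) := by
    intro i
    have hmono := (hfStrict i).convexOn.monotoneOn_deriv
      (fun w _ => ((hfC i).differentiable (by norm_num)).differentiableAt)
    rcases lt_trichotomy (p i) (q i) with h | h | h
    · have := hmono (Set.mem_univ (p i)) (Set.mem_univ (q i)) h.le
      nlinarith
    · rw [h]; simp
    · have := hmono (Set.mem_univ (q i)) (Set.mem_univ (p i)) h.le
      nlinarith
  have hposA : 0 < A := by
    rw [hAdef]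
    apply Finset.sum_pos' (fun i _ => hmonoA i)
    refine ⟨i₀, Finset.mem_univ i₀, ?_⟩
    have hsm := (hfStrict i₀).strictMonoOn_deriv
      (fun w _ => ((hfC i₀).differentiable (by norm_num)).differentiableAt)
    rcases lt_or_gt_of_ne hi₀ with h | h
    · have := hsm (Set.mem_univ (p i₀)) (Set.mem_univ (q i₀)) h
      nlinarith
    · have := hsm (Set.mem_univ (q i₀)) (Set.mem_univ (p i₀)) h
      nlinarith
  linarith

/-- the set of possible limit points -/
def Sset : Set (EuclideanSpace ℝ (Fin n)) :=
  {y | ∃ c, GoodC c ∧ ∀ i, Gc f g c y i = 0}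

lemma Sset_finite (hfC : ∀ i, ContDiff ℝ 2 (f i))
    (hfStrict : ∀ i, StrictConvexOn ℝ Set.univ (f i))
    (hgC : ∀ i j, i ≠ j → ContDiff ℝ 2 (fun p : ℝ × ℝ => g i j p.1 p.2))
    (hgConv : ∀ i j, i ≠ j → ConvexOn ℝ Set.univ (fun p : ℝ × ℝ => g i j p.1 p.2))
    (hsym : ∀ i j a b, i ≠ j → g i j a b = g j i b a) :
    (Sset f g).Finite := by
  classical
  have hsub : Sset f g ⊆ ⋃ c ∈ (Set.univ : Set (Fin n → Finset (Fin n))),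
      {y : EuclideanSpace ℝ (Fin n) | GoodC c ∧ ∀ i, Gc f g c y i = 0} := by
    intro y hy
    obtain ⟨c, hc, hcrit⟩ := hy
    exact Set.mem_biUnion (Set.mem_univ c) ⟨hc, hcrit⟩
  apply Set.Finite.subset ?_ hsub
  apply Set.Finite.biUnion Set.finite_univ
  intro c _
  apply Set.Subsingleton.finite
  intro p hp q hq
  exact crit_unique f g hfC hfStrict hgC hgConv hsym c hp.1 p q hp.2 hq.2
end seq

lemma converge_of_finite_limitset {X : Type*} [MetricSpace X] [ProperSpace X]
    (x : ℕ → X) (x0 : X) (R : ℝ) (hb : ∀ k, x k ∈ Metric.closedBall x0 R)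
    (hstep : Tendsto (fun k => dist (x (k + 1)) (x k)) atTop (nhds 0))
    (S : Set X) (hSfin : S.Finite)
    (hS : ∀ z (φ : ℕ → ℕ), StrictMono φ → Tendsto (x ∘ φ) atTop (nhds z) → z ∈ S) :
    ∃ p, Tendsto x atTop (nhds p) := by
  classical
  have hcomp : IsCompact (Metric.closedBall x0 R) := isCompact_closedBall x0 R
  obtain ⟨p, hpmem, φ₀, hφ₀mono, hφ₀lim⟩ := hcomp.tendsto_subseq hb
  by_contra hcon
  push_neg at hcon
  have hnt := hcon p
  rw [Metric.tendsto_atTop] at hnt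
  push_neg at hnt
  obtain ⟨ε, hε, hfreq⟩ := hnt
  -- choose a radius ε₀ separating p from the other points of S
  have hexε : ∃ ε₀, 0 < ε₀ ∧ ε₀ ≤ ε ∧ ∀ s ∈ S, s ≠ p → ε₀ < dist s p := by
    set T := hSfin.toFinset.erase p with hT
    by_cases hTne : T.Nonempty
    · set d := T.inf' hTne (fun s => dist s p) with hd
      have hd0 : 0 < d := by
        rw [hd, Finset.lt_inf'_iff]
        intro s hs
        have hsp : s ≠ p := Finset.ne_of_mem_erase hs
        exact dist_pos.mpr hsp
      refine ⟨min ε (d / 2), by positivity, min_le_left _ _, ?_⟩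
      intro s hs hsp
      have hsT : s ∈ T := Finset.mem_erase.mpr ⟨hsp, hSfin.mem_toFinset.mpr hs⟩
      have : d ≤ dist s p := Finset.inf'_le _ hsT
      calc min ε (d / 2) ≤ d / 2 := min_le_right _ _
        _ < d := by linarith
        _ ≤ dist s p := this
    · refine ⟨ε, hε, le_rfl, ?_⟩
      intro s hs hsp
      exact absurd ⟨s, Finset.mem_erase.mpr ⟨hsp, hSfin.mem_toFinset.mpr hs⟩⟩ hTne
  obtain ⟨ε₀, hε₀, hε₀ε, hε₀sep⟩ := hexε
  -- the sequence frequently visits the annulus around p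
  have hann : ∀ N, ∃ l ≥ N, ε₀ / 2 ≤ dist (x l) p ∧ dist (x l) p ≤ ε₀ := by
    intro N
    obtain ⟨N₀, hN₀⟩ := Metric.tendsto_atTop.mp hstep (ε₀ / 2) (by positivity)
    set N₁ := max N N₀ with hN₁
    have hsm : ∀ k ≥ N₁, dist (x (k + 1)) (x k) < ε₀ / 2 := by
      intro k hk
      have := hN₀ k (le_trans (le_max_right _ _) hk)
      rw [Real.dist_eq, abs_sub_comm, abs_of_nonpos (by simp [dist_nonneg])] at this
      · linarith [dist_nonneg (x := x (k + 1)) (y := x k), this]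
    have hclose : ∃ k₁ ≥ N₁, dist (x k₁) p < ε₀ / 2 := by
      obtain ⟨J, hJ⟩ := Metric.tendsto_atTop.mp hφ₀lim (ε₀ / 2) (by positivity)
      refine ⟨φ₀ (max J N₁), le_trans (le_max_right _ _) (hφ₀mono.le_apply), ?_⟩
      exact hJ (max J N₁) (le_max_left _ _)
    obtain ⟨k₁, hk₁, hk₁close⟩ := hclose
    obtain ⟨k₂, hk₂ge, hk₂far⟩ := hfreq (k₁ + 1)
    have hQ : ∃ t, k₁ + 1 + t ≤ k₂ ∧ ε₀ / 2 ≤ dist (x (k₁ + 1 + t)) p := by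
      refine ⟨k₂ - (k₁ + 1), by omega, ?_⟩
      have heq : k₁ + 1 + (k₂ - (k₁ + 1)) = k₂ := by omega
      rw [heq]
      linarith
    set t₀ := Nat.find hQ with ht₀
    have hspec := Nat.find_spec hQ
    have hprev : dist (x (k₁ + t₀)) p < ε₀ / 2 := by
      rcases Nat.eq_zero_or_pos t₀ with h0 | hpos
      · rw [h0]; simpa using hk₁close
      · obtain ⟨t', ht'⟩ := Nat.exists_eq_succ_of_ne_zero (Nat.pos_iff_ne_zero.mp hpos)
        have hmin := Nat.find_min hQ (show t' < t₀ by omega)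
        push_neg at hmin
        have hle : k₁ + 1 + t' ≤ k₂ := by
          have := hspec.1
          omega
        have hd := hmin hle
        have heq : k₁ + 1 + t' = k₁ + (t' + 1) := by omega
        rw [heq] at hd
        rw [ht']
        linarith
    have hstep2 : dist (x (k₁ + t₀ + 1)) (x (k₁ + t₀)) < ε₀ / 2 := hsm _ (by omega)
    have htri : dist (x (k₁ + 1 + t₀)) p ≤ ε₀ := by
      have heq : k₁ + 1 + t₀ = k₁ + t₀ + 1 := by omega
      rw [heq]
      calc dist (x (k₁ + t₀ + 1)) p ≤ dist (x (k₁ + t₀ + 1)) (x (k₁ + t₀)) + dist (x (k₁ + t₀)) p :=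
            dist_triangle _ _ _
        _ ≤ ε₀ := by linarith
    exact ⟨k₁ + 1 + t₀, by omega, hspec.2, htri⟩
  have hfreq2 : ∃ᶠ l in atTop, ε₀ / 2 ≤ dist (x l) p ∧ dist (x l) p ≤ ε₀ :=
    Filter.frequently_atTop.mpr (fun N => by
      obtain ⟨l, hl, h1, h2⟩ := hann N
      exact ⟨l, hl, h1, h2⟩)
  obtain ⟨ψ, hψmono, hψmem⟩ := Filter.extraction_of_frequently_atTop hfreq2
  -- the annulus is compact
  set Ann : Set X := Metric.closedBall p ε₀ ∩ {y | ε₀ / 2 ≤ dist y p} with hAnn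
  have hAnnComp : IsCompact Ann := by
    apply (isCompact_closedBall p ε₀).inter_right
    exact isClosed_le continuous_const (continuous_id.dist continuous_const)
  have hmemA : ∀ l, x (ψ l) ∈ Ann := by
    intro l
    exact ⟨Metric.mem_closedBall.mpr (hψmem l).2, (hψmem l).1⟩
  obtain ⟨z, hzA, ψ', hψ'mono, hzlim⟩ := hAnnComp.tendsto_subseq hmemA
  have hzS : z ∈ S := by
    apply hS z (ψ ∘ ψ') (hψmono.comp hψ'mono)
    exact hzlim
  have hzne : z ≠ p := by
    intro h
    have := hzA.2
    rw [h] at this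
    simp at this
    linarith
  have h1 : ε₀ < dist z p := hε₀sep z hzS hzne
  have h2 : dist z p ≤ ε₀ := Metric.mem_closedBall.mp hzA.1
  linarith

section coerc
variable {n : ℕ} (f : Fin n → ℝ → ℝ) (g : Fin n → Fin n → ℝ → ℝ → ℝ)

lemma sublevel_V (hfStrict : ∀ i, StrictConvexOn ℝ Set.univ (f i))
    (hfMin : ∀ i, ∃ z, ∀ y, f i z ≤ f i y)
    (hgB : ∀ i j, i ≠ j → BddBelow (Set.range (fun p : ℝ × ℝ => g i j p.1 p.2)))
    (c₀ : ℝ) :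
    ∃ R, ∀ y : EuclideanSpace ℝ (Fin n), V f g y ≤ c₀ → ∀ i, |y i| ≤ R := by
  classical
  choose z hz using hfMin
  set W := (1 / 2) * ∑ i, ∑ j ∈ Finset.univ.filter (fun j => j ≠ i),
      min (sInf (Set.range (fun p : ℝ × ℝ => g i j p.1 p.2))) 0 with hW
  have hWle : ∀ y : EuclideanSpace ℝ (Fin n),
      W ≤ (1 / 2) * ∑ i, ∑ j ∈ Finset.univ.filter (fun j => j ≠ i),
        min (g i j (y i) (y j)) 0 := by
    intro y
    apply mul_le_mul_of_nonneg_left ?_ (by norm_num : (0:ℝ) ≤ 1/2)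
    apply Finset.sum_le_sum
    intro i _
    apply Finset.sum_le_sum
    intro j hj
    have hji : j ≠ i := (Finset.mem_filter.mp hj).2
    exact min_le_min (csInf_le (hgB i j hji.symm) ⟨(y i, y j), rfl⟩) le_rfl
  have hKi : ∀ i : Fin n, ∃ R, ∀ w, f i w ≤ c₀ - ∑ i' ∈ Finset.univ.erase i, f i' (z i') - W
      → |w| ≤ R := fun i =>
    sublevel_bdd (f i) (hfStrict i) (z i) (hz i) _
  choose Ri hRi using hKi
  refine ⟨∑ i, |Ri i|, fun y hy i => ?_⟩
  have hupper : f i (y i) ≤ c₀ - ∑ i' ∈ Finset.univ.erase i, f i' (z i') - W := by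
    have hsplit : ∑ i', f i' (y i') = f i (y i) + ∑ i' ∈ Finset.univ.erase i, f i' (y i') :=
      (Finset.add_sum_erase _ _ (Finset.mem_univ i)).symm
    have hVy : V f g y ≤ c₀ := hy
    rw [V] at hVy
    have h1 : ∑ i' ∈ Finset.univ.erase i, f i' (z i') ≤
        ∑ i' ∈ Finset.univ.erase i, f i' (y i') :=
      Finset.sum_le_sum fun i' _ => hz i' (y i')
    have h2 := hWle y
    linarith [hsplit ▸ hVy]
  have h3 : |y i| ≤ Ri i := hRi i (y i) hupper
  calc |y i| ≤ Ri i := h3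
    _ ≤ |Ri i| := le_abs_self _
    _ ≤ ∑ i', |Ri i'| := Finset.single_le_sum (fun i' _ => abs_nonneg (Ri i')) (Finset.mem_univ i)
end coerc

/-- with strictly convex `fᵢ` attaining their minima and convex,
bounded-below, symmetric measurements `g_ij`, the inexact-BCD state-dependent network
dynamics converge to a point. -/
theorem bcd_state_dependent_dynamics_converges
    (n : ℕ) (m : ℝ) (hm : 0 < m)
    (f : Fin n → ℝ → ℝ) (g : Fin n → Fin n → ℝ → ℝ → ℝ)
    (hfC : ∀ i, ContDiff ℝ 2 (f i))
    (hfStrict : ∀ i, StrictConvexOn ℝ Set.univ (f i))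
    (hfMin : ∀ i, ∃ z, ∀ y, f i z ≤ f i y)
    (hgC : ∀ i j, i ≠ j → ContDiff ℝ 2 (fun p : ℝ × ℝ => g i j p.1 p.2))
    (hgConv : ∀ i j, i ≠ j → ConvexOn ℝ Set.univ (fun p : ℝ × ℝ => g i j p.1 p.2))
    (hgB : ∀ i j, i ≠ j → BddBelow (Set.range (fun p : ℝ × ℝ => g i j p.1 p.2)))
    (hsym : ∀ i j a b, i ≠ j → g i j a b = g j i b a)
    (hf2 : ∀ i t, |deriv (deriv (f i)) t| ≤ m)
    (hg11 : ∀ i j a b, i ≠ j → |deriv (fun t => deriv (fun s => g i j s b) t) a| ≤ m)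
    (hg12 : ∀ i j a b, i ≠ j → |deriv (fun t => deriv (fun s => g i j t s) b) a| ≤ m)
    (hg21 : ∀ i j a b, i ≠ j → |deriv (fun s => deriv (fun t => g i j t s) a) b| ≤ m)
    (hg22 : ∀ i j a b, i ≠ j → |deriv (fun s => deriv (fun t => g i j a t) s) b| ≤ m)
    (x : ℕ → EuclideanSpace ℝ (Fin n))
    (hdyn : ∀ k i, x (k + 1) i = x k i -
      (deriv (f i) (x k i) +
        ∑ j ∈ Finset.univ.filter (fun j => j ≠ i ∧ g i j (x k i) (x k j) ≤ 0),
          deriv (fun t => g i j t (x k j)) (x k i)) /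
      (2 * m * (((Finset.univ.filter
          (fun j => j ≠ i ∧ g i j (x k i) (x k j) ≤ 0)).card : ℝ) + 1))) :
    ∃ xs : EuclideanSpace ℝ (Fin n), Tendsto x atTop (nhds xs) := by
  classical
  -- rewrite the dynamics through our definitions
  have hstep_eq : ∀ k, x (k + 1) = Tmap f g m (x k) := by
    intro k
    ext i
    rw [hdyn k i]
    show _ = x k i + stepv f g m (x k) i
    rw [stepv, Gfull, Gc, nbr, neg_div, ← sub_eq_add_neg]
  -- descent along the trajectory
  have hdesc : ∀ k, V f g (x (k + 1)) ≤ V f g (x k) - m * ∑ i, (stepv f g m (x k) i) ^ 2 := by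
    intro k
    have := descent f g m hm hfC hf2 hgC hsym hg11 hg21 hg22 (x k)
    rwa [← hstep_eq k] at this
  have hS2nn : ∀ k, (0:ℝ) ≤ ∑ i, (stepv f g m (x k) i) ^ 2 :=
    fun k => Finset.sum_nonneg fun i _ => sq_nonneg _
  have hVanti : Antitone (fun k => V f g (x k)) := by
    apply antitone_nat_of_succ_le
    intro k
    have := hdesc k
    nlinarith [hS2nn k, hm.le]
  obtain ⟨C, hC⟩ := V_bddBelow f g hfMin hgB
  have hVbdd : BddBelow (Set.range (fun k => V f g (x k))) := by
    refine ⟨C, ?_⟩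
    rintro v ⟨k, rfl⟩
    exact hC (x k)
  have hVconv : Tendsto (fun k => V f g (x k)) atTop (nhds (⨅ k, V f g (x k))) :=
    tendsto_atTop_ciInf hVanti hVbdd
  have hVdiff : Tendsto (fun k => V f g (x k) - V f g (x (k + 1))) atTop (nhds 0) := by
    have h2 : Tendsto (fun k => V f g (x (k + 1))) atTop (nhds (⨅ k, V f g (x k))) := by
      have := hVconv.comp (tendsto_add_atTop_nat 1)
      simpa [Function.comp_def] using this
    have := hVconv.sub h2
    simpa using this
  have hsq0 : Tendsto (fun k => ∑ i, (stepv f g m (x k) i) ^ 2) atTop (nhds 0) := by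
    apply squeeze_zero hS2nn (g := fun k => (1 / m) * (V f g (x k) - V f g (x (k + 1))))
    · intro k
      have hk := hdesc k
      have hh : m * ∑ i, (stepv f g m (x k) i) ^ 2 ≤ V f g (x k) - V f g (x (k + 1)) := by
        linarith
      calc ∑ i, (stepv f g m (x k) i) ^ 2
          = (1 / m) * (m * ∑ i, (stepv f g m (x k) i) ^ 2) := by field_simp
        _ ≤ (1 / m) * (V f g (x k) - V f g (x (k + 1))) := by
            apply mul_le_mul_of_nonneg_left hh (by positivity)
    · have := hVdiff.const_mul (1 / m)
      simpa using this
  have hstepi0 : ∀ i, Tendsto (fun k => stepv f g m (x k) i) atTop (nhds 0) := by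
    intro i
    rw [tendsto_zero_iff_abs_tendsto_zero]
    have h1 : Tendsto (fun k => (stepv f g m (x k) i) ^ 2) atTop (nhds 0) := by
      apply squeeze_zero (fun k => sq_nonneg _) ?_ hsq0
      intro k
      exact Finset.single_le_sum (fun j _ => sq_nonneg (stepv f g m (x k) j)) (Finset.mem_univ i)
    have h2 := (Real.continuous_sqrt.tendsto' 0 0 (by simp)).comp h1
    have h3 : (abs ∘ fun k => stepv f g m (x k) i)
        = (fun t => Real.sqrt t) ∘ (fun k => (stepv f g m (x k) i) ^ 2) := by
      funext k
      simp [Function.comp, Real.sqrt_sq_eq_abs]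
    rw [h3]
    exact h2
  have hG0 : ∀ i, Tendsto (fun k => Gfull f g (x k) i) atTop (nhds 0) := by
    intro i
    rw [tendsto_zero_iff_abs_tendsto_zero]
    apply squeeze_zero (fun k => abs_nonneg _)
      (g := fun k => (2 * m * ((n : ℝ) + 1)) * |stepv f g m (x k) i|)
    · intro k
      rw [Gfull_eq_step f g m hm (x k) i, abs_mul]
      apply mul_le_mul_of_nonneg_right ?_ (abs_nonneg _)
      rw [abs_neg, abs_of_nonneg (by positivity)]
      have hcard : ((nbr g (x k) i).card : ℝ) ≤ (n : ℝ) := by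
        have := Finset.card_le_univ (nbr g (x k) i)
        exact_mod_cast this.trans (by simp)
      nlinarith [hm.le]
    · have := ((hstepi0 i).abs).const_mul (2 * m * ((n : ℝ) + 1))
      simpa using this
  -- distance between consecutive iterates tends to 0
  have hdist0 : Tendsto (fun k => dist (x (k + 1)) (x k)) atTop (nhds 0) := by
    have heq : ∀ k, dist (x (k + 1)) (x k)
        = Real.sqrt (∑ i, (stepv f g m (x k) i) ^ 2) := by
      intro k
      rw [EuclideanSpace.dist_eq]
      congr 1
      apply Finset.sum_congr rfl
      intro i _
      rw [hstep_eq k, Real.dist_eq, sq_abs]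
      show (x k i + stepv f g m (x k) i - x k i) ^ 2 = _
      ring
    simp only [heq]
    have h2 := (Real.continuous_sqrt.tendsto' 0 0 (by simp)).comp hsq0
    simpa [Function.comp_def] using h2
  -- boundedness of the trajectory
  obtain ⟨R, hR⟩ := sublevel_V f g hfStrict hfMin hgB (V f g (x 0))
  have hcoords : ∀ k i, |x k i| ≤ R := by
    intro k i
    exact hR (x k) (hVanti (Nat.zero_le k)) i
  have hball : ∀ k, x k ∈ Metric.closedBall (0 : EuclideanSpace ℝ (Fin n))
      (Real.sqrt ((n : ℝ) * R ^ 2)) := by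
    intro k
    rw [mem_closedBall_zero_iff]
    rw [EuclideanSpace.norm_eq]
    apply Real.sqrt_le_sqrt
    calc ∑ i, ‖x k i‖ ^ 2 ≤ ∑ i : Fin n, R ^ 2 := by
          apply Finset.sum_le_sum
          intro i _
          have := hcoords k i
          rw [Real.norm_eq_abs]
          nlinarith [abs_nonneg (x k i)]
      _ = (n : ℝ) * R ^ 2 := by
          simp [Finset.sum_const, Finset.card_univ, nsmul_eq_mul]
  -- all subsequential limits lie in the finite set Sset
  have hlimS : ∀ z (φ : ℕ → ℕ), StrictMono φ → Tendsto (x ∘ φ) atTop (nhds z)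
      → z ∈ Sset f g := by
    intro z φ hφ hlim
    set Cf : ℕ → (Fin n → Finset (Fin n)) := fun l => nbr g (x (φ l)) with hCf
    obtain ⟨c, hcinf⟩ := Finite.exists_infinite_fiber Cf
    have hfreq : ∃ᶠ l in atTop, Cf l = c := by
      rw [Nat.frequently_atTop_iff_infinite]
      have h5 : (Cf ⁻¹' {c}).Infinite := Set.infinite_coe_iff.mp hcinf
      convert h5 using 1
      rfl
    obtain ⟨ψ, hψmono, hψc⟩ := Filter.extraction_of_frequently_atTop hfreq
    have hgood : GoodC c := by
      have := goodC_nbr g hsym (x (φ (ψ 0)))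
      rwa [show nbr g (x (φ (ψ 0))) = c from hψc 0] at this
    refine ⟨c, hgood, fun i => ?_⟩
    have hlim2 : Tendsto (fun l => x (φ (ψ l))) atTop (nhds z) := by
      have := hlim.comp hψmono.tendsto_atTop
      simpa [Function.comp_def] using this
    have hcont : Tendsto (fun l => Gc f g c (x (φ (ψ l))) i) atTop (nhds (Gc f g c z i)) :=
      ((Gc_continuous f g hfC hgC c hgood i).tendsto z).comp hlim2
    have hzero : Tendsto (fun l => Gc f g c (x (φ (ψ l))) i) atTop (nhds 0) := by
      have heq : (fun l => Gc f g c (x (φ (ψ l))) i)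
          = fun l => Gfull f g (x (φ (ψ l))) i := by
        funext l
        rw [Gfull, ← hψc l]
      rw [heq]
      have := (hG0 i).comp ((hφ.comp hψmono).tendsto_atTop)
      simpa [Function.comp_def] using this
    exact tendsto_nhds_unique hcont hzero
  -- conclude
  exact converge_of_finite_limitset x 0 (Real.sqrt ((n : ℝ) * R ^ 2)) hball hdist0
    (Sset f g) (Sset_finite f g hfC hfStrict hgC hgConv hsym) hlimS
end

section
/- Let h_1, …, h_N: ℝⁿ → ℝ be finitely many strictly convex, continuously differentiable functions, each attaining a (necessarily unique) global minimum. Let {x^k}_{k≥0} ⊂ ℝⁿ be a sequence and σ: ℕ → {1,…,N} a map such that lim_{k→∞} ∇h_{σ(k)}(x^k) = 0 and lim_{k→∞} ‖x^{k+1} − x^k‖ = 0. Then the sequence {x^k} converges, and its limit is the global minimizer of h_j for some j ∈ {1,…,N}. -/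
open Filter

open Set Metric in
lemma gradient_small_imp_close {n : ℕ} {f : EuclideanSpace ℝ (Fin n) → ℝ}
    (hC1 : ContDiff ℝ 1 f) (hS : StrictConvexOn ℝ Set.univ f)
    {z : EuclideanSpace ℝ (Fin n)} (hz : ∀ y, f z ≤ f y) {ε : ℝ} (hε : 0 < ε) :
    ∃ δ > 0, ∀ x, ‖gradient f x‖ < δ → dist x z < ε := by
  rcases subsingleton_or_nontrivial (EuclideanSpace ℝ (Fin n)) with hsub | hnt
  · exact ⟨1, one_pos, fun x _ => by rw [Subsingleton.elim x z, dist_self]; exact hε⟩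
  have hsp : (Metric.sphere z ε).Nonempty := NormedSpace.sphere_nonempty.mpr hε.le
  obtain ⟨w, hw, hwmin⟩ :=
    (isCompact_sphere z ε).exists_isMinOn hsp hC1.continuous.continuousOn
  have hwne : w ≠ z := by
    intro hEq
    rw [mem_sphere, hEq, dist_self] at hw
    exact hε.ne hw
  have hm : 0 < f w - f z := by
    have h2 := hS.2 (Set.mem_univ z) (Set.mem_univ w) (Ne.symm hwne)
      (by norm_num : (0:ℝ) < 1/2) (by norm_num : (0:ℝ) < 1/2) (by norm_num)
    have h3 := hz ((1/2 : ℝ) • z + (1/2 : ℝ) • w)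
    simp only [smul_eq_mul] at h2
    linarith
  refine ⟨(f w - f z)/ε, by positivity, fun x hx => ?_⟩
  by_contra hcon
  push_neg at hcon
  have hd : 0 < dist x z := lt_of_lt_of_le hε hcon
  set d := dist x z with hd_def
  set t := ε / d with ht_def
  have ht : 0 < t := div_pos hε hd
  have ht1 : t ≤ 1 := (div_le_one hd).mpr hcon
  have hw'mem : z + t • (x - z) ∈ Metric.sphere z ε := by
    rw [mem_sphere, dist_eq_norm]
    have : z + t • (x - z) - z = t • (x - z) := by abel
    rw [this, norm_smul, Real.norm_eq_abs, abs_of_pos ht, ← dist_eq_norm, ht_def]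
    field_simp
    exact hd_def.symm
  have hfw' : f w ≤ f (z + t • (x - z)) := hwmin hw'mem
  -- convexity inequality
  have hconv := hS.convexOn.2 (Set.mem_univ z) (Set.mem_univ x)
    (by linarith : (0:ℝ) ≤ 1 - t) ht.le (by ring)
  have hrw : (1 - t) • z + t • x = z + t • (x - z) := by module
  rw [hrw] at hconv
  simp only [smul_eq_mul] at hconv
  have h1 : f w - f z ≤ t * (f x - f z) := by linarith [hfw', hconv]
  -- gradient inequality via 1D convexity
  have hdf : HasFDerivAt f ((InnerProductSpace.toDual ℝ _) (gradient f x)) x :=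
    hasGradientAt_iff_hasFDerivAt.mp (hC1.differentiable one_ne_zero x).hasGradientAt
  have hline : HasDerivAt (fun s : ℝ => z + s • (x - z)) (x - z) (1:ℝ) := by
    simpa using ((hasDerivAt_id (1:ℝ)).smul_const (x - z)).const_add z
  have hx1 : z + (1:ℝ) • (x - z) = x := by simp
  have hcomp : HasDerivAt (fun s : ℝ => f (z + s • (x - z)))
      ((inner ℝ (gradient f x) (x - z) : ℝ)) 1 := by
    have := (hx1 ▸ hdf).comp_hasDerivAt (1:ℝ) hline
    rw [InnerProductSpace.toDual_apply_apply, hx1] at this; exact this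
  have gcvx : ConvexOn ℝ Set.univ (fun s : ℝ => f (z + s • (x - z))) := by
    have := hS.convexOn.comp_affineMap (AffineMap.lineMap z x)
    have heq : (fun s : ℝ => f (z + s • (x - z)))
        = f ∘ (AffineMap.lineMap z x : ℝ →ᵃ[ℝ] EuclideanSpace ℝ (Fin n)) := by
      funext s
      simp [AffineMap.lineMap_apply_module]
      rw [sub_smul, smul_sub, one_smul]
      abel_nf
    rw [heq]
    simpa using this
  have hslope := gcvx.slope_le_of_hasDerivAt (Set.mem_univ (0:ℝ)) (Set.mem_univ 1)
    one_pos hcomp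
  rw [slope_def_field] at hslope
  simp only [hx1, zero_smul, add_zero] at hslope
  have hgrad_ineq : f x - f z ≤ ‖gradient f x‖ * d := by
    have hCS := real_inner_le_norm (gradient f x) (x - z)
    have : (f x - f z) / (1 - 0) = f x - f z := by norm_num
    rw [this] at hslope
    rw [hd_def, dist_eq_norm]
    exact hslope.trans hCS
  -- combine
  have hfinal : f w - f z ≤ ε * ‖gradient f x‖ := by
    have h2 : t * (f x - f z) ≤ t * (‖gradient f x‖ * d) :=
      mul_le_mul_of_nonneg_left hgrad_ineq ht.le
    have h3 : t * (‖gradient f x‖ * d) = ε * ‖gradient f x‖ := by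
      rw [ht_def]; field_simp
    linarith
  have : ε * ‖gradient f x‖ < ε * ((f w - f z)/ε) := by
    exact mul_lt_mul_of_pos_left hx hε
  rw [mul_div_cancel₀ _ hε.ne'] at this
  linarith

/-- if along a sequence with vanishing steps the gradient of the
currently active function (from a finite family of strictly convex `C¹` functions,
each attaining its global minimum) tends to zero, then the sequence converges and
its limit is the global minimizer of one of the functions of the family. -/
theorem finite_family_strictly_convex_vanishing_gradient_converges
    (n N : ℕ) (h : Fin N → EuclideanSpace ℝ (Fin n) → ℝ)
    (hC1 : ∀ i, ContDiff ℝ 1 (h i))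
    (hStrict : ∀ i, StrictConvexOn ℝ Set.univ (h i))
    (hMin : ∀ i, ∃ z, ∀ y, h i z ≤ h i y)
    (x : ℕ → EuclideanSpace ℝ (Fin n)) (σ : ℕ → Fin N)
    (hgrad : Tendsto (fun k => gradient (h (σ k)) (x k)) atTop (nhds 0))
    (hstep : Tendsto (fun k => ‖x (k+1) - x k‖) atTop (nhds 0)) :
    ∃ (xs : EuclideanSpace ℝ (Fin n)) (j : Fin N),
      Tendsto x atTop (nhds xs) ∧ ∀ y, h j xs ≤ h j y := by
  classical
  choose z hz using hMin
  have hNE : Nonempty (Fin N) := ⟨σ 0⟩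
  -- the iterates eventually get within ε of the minimizer of the active function
  have key : ∀ ε : ℝ, 0 < ε → ∀ᶠ k in atTop, dist (x k) (z (σ k)) < ε := by
    intro ε hε
    have hδ : ∀ i, ∃ δ > 0, ∀ y, ‖gradient (h i) y‖ < δ → dist y (z i) < ε :=
      fun i => gradient_small_imp_close (hC1 i) (hStrict i) (hz i) hε
    choose δ hδpos hδ using hδ
    have hne : (Finset.univ : Finset (Fin N)).Nonempty := Finset.univ_nonempty
    set δ0 := Finset.univ.inf' hne δ with hδ0_def
    have hδ0 : 0 < δ0 := by
      rw [hδ0_def, Finset.lt_inf'_iff]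
      exact fun i _ => hδpos i
    have hev : ∀ᶠ k in atTop, ‖gradient (h (σ k)) (x k)‖ < δ0 := by
      have hn : Tendsto (fun k => ‖gradient (h (σ k)) (x k)‖) atTop (nhds 0) := by
        simpa using hgrad.norm
      exact hn.eventually_lt_const hδ0
    filter_upwards [hev] with k hk
    exact hδ _ _ (lt_of_lt_of_le hk (Finset.inf'_le _ (Finset.mem_univ _)))
  -- separation of the minimizers
  obtain ⟨ε₀, hε₀, hsep⟩ :
      ∃ ε₀ > 0, ∀ i j : Fin N, dist (z i) (z j) < 3 * ε₀ → z i = z j := by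
    set s := Finset.univ.filter (fun p : Fin N × Fin N => z p.1 ≠ z p.2) with hs_def
    by_cases hs : s.Nonempty
    · refine ⟨(s.inf' hs fun p => dist (z p.1) (z p.2)) / 3, ?_, ?_⟩
      · have hpos : 0 < s.inf' hs fun p => dist (z p.1) (z p.2) := by
          rw [Finset.lt_inf'_iff]
          intro p hp
          exact dist_pos.mpr ((Finset.mem_filter.mp hp).2)
        linarith
      · intro i j hij
        by_contra hne
        have hmem : (i, j) ∈ s := Finset.mem_filter.mpr ⟨Finset.mem_univ _, hne⟩
        have hle := Finset.inf'_le (fun p => dist (z p.1) (z p.2)) hmem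
        have h3 : 3 * ((s.inf' hs fun p => dist (z p.1) (z p.2)) / 3)
            = s.inf' hs fun p => dist (z p.1) (z p.2) := by ring
        rw [h3] at hij
        simp only at hle
        linarith
    · refine ⟨1, one_pos, fun i j _ => ?_⟩
      by_contra hne
      exact hs ⟨(i, j), Finset.mem_filter.mpr ⟨Finset.mem_univ _, hne⟩⟩
  -- pick a threshold K
  have hstep' : ∀ᶠ k in atTop, ‖x (k+1) - x k‖ < ε₀ := hstep.eventually_lt_const hε₀
  obtain ⟨K, hK⟩ := ((key ε₀ hε₀).and hstep').exists_forall_of_atTop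
  -- the active minimizer is locked from time K on
  have hlock : ∀ k, K ≤ k → z (σ k) = z (σ K) := by
    intro k hk
    induction k with
    | zero =>
      have : K = 0 := Nat.le_zero.mp hk
      rw [this]
    | succ m ih =>
      rcases Nat.lt_or_ge K (m+1) with h1 | h1
      · have hm : K ≤ m := Nat.lt_succ_iff.mp h1
        have hdm := (hK m hm).1
        have hsm := (hK m hm).2
        have hdm1 := (hK (m+1) (hm.trans (Nat.le_succ m))).1
        have htri : dist (z (σ (m+1))) (z (σ m)) ≤
            dist (z (σ (m+1))) (x (m+1)) + dist (x (m+1)) (x m) + dist (x m) (z (σ m)) :=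
          dist_triangle4 _ _ _ _
        have hdist : dist (x (m+1)) (x m) = ‖x (m+1) - x m‖ := dist_eq_norm _ _
        have hd1 : dist (z (σ (m+1))) (x (m+1)) < ε₀ := by
          rw [dist_comm]; exact hdm1
        have hcl : dist (z (σ (m+1))) (z (σ m)) < 3 * ε₀ := by
          rw [hdist] at htri
          linarith
        rw [hsep _ _ hcl, ih hm]
      · have hKe : K = m + 1 := le_antisymm hk h1
        rw [hKe]
  refine ⟨z (σ K), σ K, ?_, hz (σ K)⟩
  rw [Metric.tendsto_atTop]
  intro δ hδ
  obtain ⟨M, hM⟩ := (key δ hδ).exists_forall_of_atTop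
  refine ⟨max K M, fun k hk => ?_⟩
  rw [← hlock k (le_trans (le_max_left _ _) hk)]
  exact hM k (le_trans (le_max_right _ _) hk)
end

section
/- Fix ε > 0 and n agents with scalar states. Consider the homogeneous Hegselmann–Krause dynamics x_i^{k+1} = (x_i^k + ∑_{j ∈ N_i(x^k)} x_j^k) / (1 + |N_i(x^k)|) for i ∈ [n], where N_i(x) = {j ≠ i : |x_i − x_j| ≤ ε}. Then the function V(x) := ½ ∑_{i≠j} min{(x_i − x_j)²/2 − ε²/2, 0} satisfies V(x^{k+1}) ≤ V(x^k) − ‖x^{k+1} − x^k‖² for every k ≥ 0. -/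
private lemma hk_pointwise (ε s t u v : ℝ) (hε : 0 < ε) (ht : t = s + (u - v)) :
    min (t^2/2 - ε^2/2) 0
      ≤ min (s^2/2 - ε^2/2) 0 + (if |s| ≤ ε then s*(u-v) + (u^2 + v^2) else 0) := by
  subst ht
  split_ifs with h
  · have h1 : s^2 ≤ ε^2 := by nlinarith [abs_nonneg s, sq_abs s]
    have h2 : min (s^2/2 - ε^2/2) 0 = s^2/2 - ε^2/2 := min_eq_left (by nlinarith)
    have h3 : min ((s + (u - v))^2/2 - ε^2/2) 0 ≤ (s + (u - v))^2/2 - ε^2/2 :=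
      min_le_left _ _
    rw [h2]
    nlinarith [sq_nonneg (u + v)]
  · push_neg at h
    have h1 : ε^2 ≤ s^2 := by nlinarith [abs_nonneg s, sq_abs s, le_of_lt h, hε]
    have h2 : min (s^2/2 - ε^2/2) 0 = 0 := min_eq_right (by nlinarith)
    rw [h2]
    simpa using min_le_right ((s + (u - v))^2/2 - ε^2/2) 0

private lemma hk_aux {n : ℕ} {ε : ℝ} (hε : 0 < ε) (a b : Fin n → ℝ)
    (hdyn : ∀ i, b i =
      (a i + ∑ j ∈ Finset.univ.filter (fun j => j ≠ i ∧ |a i - a j| ≤ ε), a j) /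
      (1 + ((Finset.univ.filter (fun j => j ≠ i ∧ |a i - a j| ≤ ε)).card : ℝ))) :
    (1/2) * ∑ i, ∑ j ∈ Finset.univ.filter (fun j => j ≠ i),
        min ((b i - b j)^2 / 2 - ε^2 / 2) 0
    ≤ (1/2) * ∑ i, ∑ j ∈ Finset.univ.filter (fun j => j ≠ i),
        min ((a i - a j)^2 / 2 - ε^2 / 2) 0
      - ∑ i, (b i - a i)^2 := by
  classical
  set N : Fin n → Finset (Fin n) :=
    fun i => Finset.univ.filter (fun j => j ≠ i ∧ |a i - a j| ≤ ε) with hN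
  set d : Fin n → ℝ := fun i => b i - a i with hd
  have hNi : ∀ i, Finset.univ.filter (fun j => j ≠ i ∧ |a i - a j| ≤ ε) = N i :=
    fun i => rfl
  -- key identity from the dynamics
  have key : ∀ i, ∑ j ∈ N i, (a j - a i) = (1 + ((N i).card : ℝ)) * d i := by
    intro i
    have hpos : (0:ℝ) < 1 + ((N i).card : ℝ) := by
      have := Nat.cast_nonneg (α := ℝ) (N i).card; linarith
    have h := hdyn i
    rw [hNi i] at h
    have hb : b i * (1 + ((N i).card : ℝ)) = a i + ∑ j ∈ N i, a j := by
      rw [h]; exact div_mul_cancel₀ _ hpos.ne'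
    have hsum : ∑ j ∈ N i, (a j - a i)
        = (∑ j ∈ N i, a j) - ((N i).card : ℝ) * a i := by
      rw [Finset.sum_sub_distrib, Finset.sum_const, nsmul_eq_mul]
    rw [hsum]
    have hdi : d i = b i - a i := rfl
    rw [hdi]
    linear_combination -hb
  have hneg : ∀ p, ∑ q ∈ N p, (a p - a q) = -((1 + ((N p).card : ℝ)) * d p) := by
    intro p
    rw [← key p, ← Finset.sum_neg_distrib]
    exact Finset.sum_congr rfl (fun q _ => by ring)
  have hinner : ∀ p, ∑ q ∈ N p, ((a p - a q) * d p + d p ^ 2) = -(d p ^ 2) := by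
    intro p
    rw [Finset.sum_add_distrib, ← Finset.sum_mul, hneg p, Finset.sum_const,
      nsmul_eq_mul]
    ring
  have hcond : ∀ i j : Fin n,
      (i ∈ (Finset.univ : Finset (Fin n)) ∧ j ∈ N i)
        ↔ (i ∈ N j ∧ j ∈ (Finset.univ : Finset (Fin n))) := by
    intro i j
    simp only [Finset.mem_univ, true_and, and_true, hN, Finset.mem_filter]
    constructor
    · rintro ⟨hne, habs⟩
      exact ⟨hne.symm, by rwa [abs_sub_comm]⟩
    · rintro ⟨hne, habs⟩
      exact ⟨hne.symm, by rwa [abs_sub_comm]⟩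
  -- total of the correction terms
  have hS : ∑ i, ∑ j ∈ N i, ((a i - a j) * (d i - d j) + (d i ^ 2 + d j ^ 2))
      = -2 * ∑ i, d i ^ 2 := by
    have hsplit : ∀ i, ∑ j ∈ N i, ((a i - a j) * (d i - d j) + (d i ^ 2 + d j ^ 2))
        = (∑ j ∈ N i, ((a i - a j) * d i + d i ^ 2))
          + (∑ j ∈ N i, ((a j - a i) * d j + d j ^ 2)) := by
      intro i
      rw [← Finset.sum_add_distrib]
      exact Finset.sum_congr rfl (fun j _ => by ring)
    calc ∑ i, ∑ j ∈ N i, ((a i - a j) * (d i - d j) + (d i ^ 2 + d j ^ 2))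
        = (∑ i, ∑ j ∈ N i, ((a i - a j) * d i + d i ^ 2))
          + (∑ i, ∑ j ∈ N i, ((a j - a i) * d j + d j ^ 2)) := by
          rw [← Finset.sum_add_distrib]
          exact Finset.sum_congr rfl (fun i _ => hsplit i)
      _ = (∑ i, -(d i ^ 2)) + (∑ i, ∑ j ∈ N i, ((a j - a i) * d j + d j ^ 2)) := by
          congr 1
          exact Finset.sum_congr rfl (fun i _ => hinner i)
      _ = (∑ i, -(d i ^ 2)) + (∑ j, ∑ i ∈ N j, ((a j - a i) * d j + d j ^ 2)) := by
          rw [Finset.sum_comm' hcond]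
      _ = (∑ i, -(d i ^ 2)) + ∑ j, -(d j ^ 2) := by
          congr 1
          exact Finset.sum_congr rfl (fun j _ => hinner j)
      _ = -2 * ∑ i, d i ^ 2 := by
          rw [Finset.sum_neg_distrib]; ring
  -- pointwise bound summed
  have hstep : ∑ i, ∑ j ∈ Finset.univ.filter (fun j => j ≠ i),
        min ((b i - b j)^2 / 2 - ε^2 / 2) 0
      ≤ ∑ i, ∑ j ∈ Finset.univ.filter (fun j => j ≠ i),
        (min ((a i - a j)^2 / 2 - ε^2 / 2) 0
          + (if |a i - a j| ≤ ε then
              (a i - a j) * (d i - d j) + (d i ^ 2 + d j ^ 2) else 0)) := by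
    refine Finset.sum_le_sum (fun i _ => Finset.sum_le_sum (fun j _ => ?_))
    exact hk_pointwise ε (a i - a j) (b i - b j) (d i) (d j) hε (by simp [hd]; ring)
  have hite : ∀ i, ∑ j ∈ Finset.univ.filter (fun j => j ≠ i),
        (if |a i - a j| ≤ ε then
            (a i - a j) * (d i - d j) + (d i ^ 2 + d j ^ 2) else 0)
      = ∑ j ∈ N i, ((a i - a j) * (d i - d j) + (d i ^ 2 + d j ^ 2)) := by
    intro i
    rw [hN, Finset.sum_filter, Finset.sum_filter]
    exact Finset.sum_congr rfl (fun j _ => (ite_and _ _ _ _).symm)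
  have hsplit2 : ∑ i, ∑ j ∈ Finset.univ.filter (fun j => j ≠ i),
        (min ((a i - a j)^2 / 2 - ε^2 / 2) 0
          + (if |a i - a j| ≤ ε then
              (a i - a j) * (d i - d j) + (d i ^ 2 + d j ^ 2) else 0))
      = (∑ i, ∑ j ∈ Finset.univ.filter (fun j => j ≠ i),
          min ((a i - a j)^2 / 2 - ε^2 / 2) 0)
        + ∑ i, ∑ j ∈ N i, ((a i - a j) * (d i - d j) + (d i ^ 2 + d j ^ 2)) := by
    rw [← Finset.sum_add_distrib]
    refine Finset.sum_congr rfl (fun i _ => ?_)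
    rw [← hite i, ← Finset.sum_add_distrib]
  have hd2 : ∀ i, (b i - a i)^2 = d i ^ 2 := fun i => rfl
  have hfin : ∑ i, (b i - a i)^2 = ∑ i, d i ^ 2 :=
    Finset.sum_congr rfl (fun i _ => hd2 i)
  rw [hfin]
  rw [hsplit2, hS] at hstep
  linarith

/-- the homogeneous Hegselmann–Krause dynamics admit
`V(x) = ½ ∑_{i≠j} min{(xᵢ−xⱼ)²/2 − ε²/2, 0}` as a Lyapunov function with drift
`V(x^{k+1}) ≤ V(x^k) − ‖x^{k+1} − x^k‖²`. -/
theorem hegselmann_krause_lyapunov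
    (n : ℕ) (ε : ℝ) (hε : 0 < ε)
    (x : ℕ → EuclideanSpace ℝ (Fin n))
    (hdyn : ∀ k i, x (k+1) i =
      (x k i + ∑ j ∈ Finset.univ.filter (fun j => j ≠ i ∧ |x k i - x k j| ≤ ε), x k j) /
      (1 + ((Finset.univ.filter (fun j => j ≠ i ∧ |x k i - x k j| ≤ ε)).card : ℝ))) :
    ∀ k : ℕ,
      (1/2) * ∑ i, ∑ j ∈ Finset.univ.filter (fun j => j ≠ i),
          min ((x (k+1) i - x (k+1) j)^2 / 2 - ε^2 / 2) 0
      ≤ (1/2) * ∑ i, ∑ j ∈ Finset.univ.filter (fun j => j ≠ i),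
          min ((x k i - x k j)^2 / 2 - ε^2 / 2) 0
        - ‖x (k+1) - x k‖^2 := by
  intro k
  have hnorm : ‖x (k+1) - x k‖^2 = ∑ i, (x (k+1) i - x k i)^2 := by
    rw [EuclideanSpace.norm_eq, Real.sq_sqrt (by positivity)]
    exact Finset.sum_congr rfl (fun i _ => by
      simp [Real.norm_eq_abs, sq_abs])
  rw [hnorm]
  exact hk_aux hε (x k) (x (k+1)) (hdyn k)
end

section
/- Let W be a symmetric n×n matrix with nonnegative entries, row sums ∑_j W_ij = 1 for every i, and strictly positive diagonal entries W_ii > 0. Define V(x) := ½ ∑_{i≠j} W_ij (x_i − x_j)² (equivalently V(x) = xᵀ(I − W)x). Then for every x ∈ ℝⁿ, V(Wx) ≤ V(x) − 2 (min_i W_ii) ‖Wx − x‖²; in particular V is nonincreasing along the averaging dynamics x^{k+1} = W x^k and strictly decreasing whenever Wx^k ≠ x^k. -/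
open Finset Matrix

private lemma lyap_filter_sum {n : ℕ} (W : Matrix (Fin n) (Fin n) ℝ) (z : Fin n → ℝ) :
    ∑ i, ∑ j ∈ Finset.univ.filter (fun j => j ≠ i), W i j * (z i - z j)^2
      = ∑ i, ∑ j, W i j * (z i - z j)^2 := by
  refine Finset.sum_congr rfl fun i _ => ?_
  rw [Finset.filter_ne', Finset.sum_erase _ (by simp)]

private lemma lyap_expand {n : ℕ} (W : Matrix (Fin n) (Fin n) ℝ)
    (hsym : W.IsSymm) (hrow : ∀ i, ∑ j, W i j = 1) (z : Fin n → ℝ) :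
    ∑ i, ∑ j, W i j * (z i - z j)^2
      = 2 * (∑ i, z i ^ 2) - 2 * (z ⬝ᵥ W.mulVec z) := by
  have hdot : z ⬝ᵥ W.mulVec z = ∑ i, ∑ j, z i * (W i j * z j) := by
    simp [dotProduct, Matrix.mulVec, Finset.mul_sum]
  have key : ∑ i, ∑ j, W i j * (z i - z j)^2
      = ((∑ i, ∑ j, W i j * z i ^ 2) + ∑ i, ∑ j, W i j * z j ^ 2)
        - 2 * ∑ i, ∑ j, z i * (W i j * z j) := by
    rw [Finset.mul_sum, ← Finset.sum_add_distrib, ← Finset.sum_sub_distrib]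
    refine Finset.sum_congr rfl fun i _ => ?_
    rw [Finset.mul_sum, ← Finset.sum_add_distrib, ← Finset.sum_sub_distrib]
    exact Finset.sum_congr rfl fun j _ => by ring
  have e1 : ∑ i, ∑ j, W i j * z i ^ 2 = ∑ i, z i ^ 2 := by
    refine Finset.sum_congr rfl fun i _ => ?_
    rw [← Finset.sum_mul, hrow, one_mul]
  have e2 : ∑ i, ∑ j, W i j * z j ^ 2 = ∑ j, z j ^ 2 := by
    rw [Finset.sum_comm]
    refine Finset.sum_congr rfl fun j _ => ?_
    have : ∑ i, W i j = 1 := by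
      rw [Finset.sum_congr rfl fun i _ => hsym.apply j i]; exact hrow j
    rw [← Finset.sum_mul, this, one_mul]
  rw [key, e1, e2, hdot]; ring

/-- Laplacian Lyapunov function for symmetric averaging: for a symmetric,
nonnegative, row-stochastic matrix `W` with positive diagonal,
`V(x) = ½ ∑_{i≠j} W_ij (xᵢ−xⱼ)²` decreases along `x ↦ Wx` by at least
`2 (minᵢ W_ii) ‖Wx − x‖²`, and strictly decreases whenever `Wx ≠ x`. -/
theorem symmetric_averaging_laplacian_lyapunov
    (n : ℕ) [NeZero n] (W : Matrix (Fin n) (Fin n) ℝ)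
    (hsym : W.IsSymm) (hnonneg : ∀ i j, 0 ≤ W i j)
    (hrow : ∀ i, ∑ j, W i j = 1) (hdiag : ∀ i, 0 < W i i)
    (x : Fin n → ℝ) :
    ((1/2) * ∑ i, ∑ j ∈ Finset.univ.filter (fun j => j ≠ i),
        W i j * (W.mulVec x i - W.mulVec x j)^2
      ≤ (1/2) * ∑ i, ∑ j ∈ Finset.univ.filter (fun j => j ≠ i), W i j * (x i - x j)^2
        - 2 * (Finset.univ.inf' Finset.univ_nonempty fun i => W i i)
          * ∑ i, (W.mulVec x i - x i)^2) ∧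
    (W.mulVec x ≠ x →
      (1/2) * ∑ i, ∑ j ∈ Finset.univ.filter (fun j => j ≠ i),
          W i j * (W.mulVec x i - W.mulVec x j)^2
        < (1/2) * ∑ i, ∑ j ∈ Finset.univ.filter (fun j => j ≠ i), W i j * (x i - x j)^2) := by
  set w : Fin n → ℝ := W.mulVec x with hw
  set y : Fin n → ℝ := x - w with hy
  set α : ℝ := Finset.univ.inf' Finset.univ_nonempty fun i => W i i with hα
  have hfx := lyap_filter_sum W x
  have hfw := lyap_filter_sum W w
  have hex := lyap_expand W hsym hrow x
  have hew := lyap_expand W hsym hrow w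
  have hey := lyap_expand W hsym hrow y
  have hcross : x ⬝ᵥ W.mulVec w = w ⬝ᵥ w := by
    rw [Matrix.dotProduct_mulVec, ← hsym.eq, Matrix.vecMul_transpose]
  have hid : ((∑ i, x i ^ 2) - x ⬝ᵥ W.mulVec x) - ((∑ i, w i ^ 2) - w ⬝ᵥ W.mulVec w)
      = (∑ i, y i ^ 2) + y ⬝ᵥ W.mulVec y := by
    have hxx : ∑ i, x i ^ 2 = x ⬝ᵥ x := by simp [dotProduct, sq]
    have hww : ∑ i, w i ^ 2 = w ⬝ᵥ w := by simp [dotProduct, sq]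
    have hyy : ∑ i, y i ^ 2 = y ⬝ᵥ y := by simp [dotProduct, sq]
    have hxw : x ⬝ᵥ w = x ⬝ᵥ W.mulVec x := rfl
    have hwx2 : w ⬝ᵥ x = x ⬝ᵥ w := dotProduct_comm w x
    have hwWx : w ⬝ᵥ W.mulVec x = w ⬝ᵥ w := rfl
    rw [hxx, hww, hyy, hy]
    simp only [Matrix.mulVec_sub, sub_dotProduct, dotProduct_sub]
    linarith [hwx2, hxw, hcross, hwWx]
  have hrowb : ∀ i, (∑ j, W i j * (y i - y j)^2) + 4 * (W i i * y i ^ 2)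
      ≤ ∑ j, (2 * (W i j * y i ^ 2) + 2 * (W i j * y j ^ 2)) := by
    intro i
    have h1 : ∑ j, W i j * (y i - y j)^2
        = ∑ j ∈ Finset.univ.erase i, W i j * (y i - y j)^2 :=
      (Finset.sum_erase _ (by simp)).symm
    have h2 : ∑ j, (2 * (W i j * y i ^ 2) + 2 * (W i j * y j ^ 2))
        = (2 * (W i i * y i ^ 2) + 2 * (W i i * y i ^ 2))
          + ∑ j ∈ Finset.univ.erase i, (2 * (W i j * y i ^ 2) + 2 * (W i j * y j ^ 2)) :=
      (Finset.add_sum_erase _ _ (Finset.mem_univ i)).symm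
    rw [h1, h2]
    have h3 : ∑ j ∈ Finset.univ.erase i, W i j * (y i - y j)^2
        ≤ ∑ j ∈ Finset.univ.erase i, (2 * (W i j * y i ^ 2) + 2 * (W i j * y j ^ 2)) := by
      refine Finset.sum_le_sum fun j _ => ?_
      nlinarith [mul_nonneg (hnonneg i j) (sq_nonneg (y i + y j))]
    linarith
  have hsumrhs : ∑ i, ∑ j, (2 * (W i j * y i ^ 2) + 2 * (W i j * y j ^ 2))
      = 4 * ∑ i, y i ^ 2 := by
    have e1 : ∑ i, ∑ j, 2 * (W i j * y i ^ 2) = 2 * ∑ i, y i ^ 2 := by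
      rw [Finset.mul_sum]
      refine Finset.sum_congr rfl fun i _ => ?_
      rw [← Finset.mul_sum, ← Finset.sum_mul, hrow, one_mul]
    have e2 : ∑ i, ∑ j, 2 * (W i j * y j ^ 2) = 2 * ∑ j, y j ^ 2 := by
      rw [Finset.sum_comm, Finset.mul_sum]
      refine Finset.sum_congr rfl fun j _ => ?_
      have : ∑ i, W i j = 1 := by
        rw [Finset.sum_congr rfl fun i _ => hsym.apply j i]; exact hrow j
      rw [← Finset.mul_sum, ← Finset.sum_mul, this, one_mul]
    calc ∑ i, ∑ j, (2 * (W i j * y i ^ 2) + 2 * (W i j * y j ^ 2))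
        = (∑ i, ∑ j, 2 * (W i j * y i ^ 2)) + ∑ i, ∑ j, 2 * (W i j * y j ^ 2) := by
          rw [← Finset.sum_add_distrib]
          exact Finset.sum_congr rfl fun i _ => Finset.sum_add_distrib
      _ = 4 * ∑ i, y i ^ 2 := by rw [e1, e2]; ring
  have hbound : (∑ i, ∑ j, W i j * (y i - y j)^2) + 4 * ∑ i, W i i * y i ^ 2
      ≤ 4 * ∑ i, y i ^ 2 := by
    have h := Finset.sum_le_sum fun i (_ : i ∈ Finset.univ) => hrowb i
    rw [Finset.sum_add_distrib, hsumrhs] at h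
    simp only [Finset.mul_sum]
    simp only [Finset.mul_sum] at h
    exact h
  have hT : α * ∑ i, y i ^ 2 ≤ ∑ i, W i i * y i ^ 2 := by
    rw [Finset.mul_sum]
    refine Finset.sum_le_sum fun i _ => ?_
    exact mul_le_mul_of_nonneg_right (Finset.inf'_le _ (Finset.mem_univ i)) (sq_nonneg _)
  have hnorm : ∑ i, (W.mulVec x i - x i)^2 = ∑ i, y i ^ 2 := by
    refine Finset.sum_congr rfl fun i _ => ?_
    have : y i = x i - w i := rfl
    rw [this]; ring
  have hmain : (1/2) * ∑ i, ∑ j, W i j * (w i - w j)^2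
      ≤ (1/2) * ∑ i, ∑ j, W i j * (x i - x j)^2 - 2 * α * ∑ i, y i ^ 2 := by
    nlinarith [hid, hex, hew, hey, hbound, hT]
  constructor
  · rw [hfx, hfw, hnorm]; exact hmain
  · intro hne
    rw [hfx, hfw]
    have hY : 0 < ∑ i, y i ^ 2 := by
      obtain ⟨i, hi⟩ : ∃ i, W.mulVec x i ≠ x i := by
        by_contra h
        push_neg at h
        exact hne (funext h)
      refine Finset.sum_pos' (fun i _ => sq_nonneg _) ⟨i, Finset.mem_univ i, ?_⟩
      have hyne : y i ≠ 0 := fun h => hi (by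
        have : x i - w i = 0 := h
        have := sub_eq_zero.mp this
        simp [hw, this])
      positivity
    have hαpos : 0 < α := by
      rw [hα, Finset.lt_inf'_iff]
      exact fun i _ => hdiag i
    nlinarith [hmain]
end

section
/- Let m > 0 and n ≥ 1. Let Ψ: ℝⁿ → ℝ be twice continuously differentiable with ∇²Ψ(x) ⪰ 2mn·I for all x ∈ ℝⁿ (so Ψ is strictly convex), and let L: ℝⁿ → ℝ be twice continuously differentiable with all second-order partial derivatives bounded in absolute value by m. If x, x⁺ ∈ ℝⁿ satisfy the mirror-descent relation ∇Ψ(x⁺) = ∇Ψ(x) − ∇L(x), then L(x⁺) ≤ L(x). -/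
private lemma line_deriv' {E : Type*} [NormedAddCommGroup E] [NormedSpace ℝ E]
    (x v : E) (t : ℝ) : HasDerivAt (fun s : ℝ => x + s • v) v t := by
  simpa using ((hasDerivAt_id t).smul_const v).const_add x

private lemma comp_line' {E : Type*} [NormedAddCommGroup E] [NormedSpace ℝ E]
    {f : E → ℝ} (hf : Differentiable ℝ f) (x v : E) (t : ℝ) :
    HasDerivAt (fun s : ℝ => f (x + s • v)) (fderiv ℝ f (x + t • v) v) t :=
  (hf _).hasFDerivAt.comp_hasDerivAt t (line_deriv' x v t)

private lemma fderiv_line' {E : Type*} [NormedAddCommGroup E] [NormedSpace ℝ E]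
    {f : E → ℝ} (hf : ContDiff ℝ 2 f) (x v : E) (t : ℝ) :
    HasDerivAt (fun s : ℝ => fderiv ℝ f (x + s • v) v)
      (iteratedFDeriv ℝ 2 f (x + t • v) ![v, v]) t := by
  have hdf : Differentiable ℝ (fderiv ℝ f) :=
    (hf.fderiv_right (by norm_num : (1:WithTop ℕ∞) + 1 ≤ 2)).differentiable one_ne_zero
  have h1 : HasFDerivAt (fun y => fderiv ℝ f y v)
      ((ContinuousLinearMap.apply ℝ ℝ v).comp (fderiv ℝ (fderiv ℝ f) (x + t • v)))
      (x + t • v) :=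
    (ContinuousLinearMap.apply ℝ ℝ v).hasFDerivAt.comp _ (hdf _).hasFDerivAt
  have h2 := h1.comp_hasDerivAt t (line_deriv' x v t)
  rw [iteratedFDeriv_two_apply]
  exact h2

private lemma bilin_bound {n : ℕ} {m : ℝ} (hm : 0 ≤ m)
    (B : EuclideanSpace ℝ (Fin n) →L[ℝ] EuclideanSpace ℝ (Fin n) →L[ℝ] ℝ)
    (hB : ∀ i j, |B (EuclideanSpace.single i (1:ℝ)) (EuclideanSpace.single j (1:ℝ))| ≤ m)
    (w : EuclideanSpace ℝ (Fin n)) :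
    B w w ≤ m * n * ‖w‖ ^ 2 := by
  have hw : w = ∑ i, (w i) • EuclideanSpace.single i (1:ℝ) := by
    have h := (EuclideanSpace.basisFun (Fin n) ℝ).sum_repr w
    simp only [EuclideanSpace.basisFun_repr, EuclideanSpace.basisFun_apply] at h
    exact h.symm
  have hexp : B w w = ∑ i, ∑ j,
      (w i) * ((w j) * B (EuclideanSpace.single i (1:ℝ)) (EuclideanSpace.single j (1:ℝ))) := by
    conv_lhs => rw [hw]
    simp only [map_sum, map_smul, ContinuousLinearMap.sum_apply,
      ContinuousLinearMap.smul_apply, smul_eq_mul, Finset.mul_sum]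
    rw [Finset.sum_comm]
    exact Finset.sum_congr rfl fun i _ => Finset.sum_congr rfl fun j _ => by ring
  have hstep : B w w ≤ ∑ i, ∑ j, |w i| * (|w j| * m) := by
    rw [hexp]
    refine Finset.sum_le_sum fun i _ => Finset.sum_le_sum fun j _ => ?_
    refine le_trans (le_abs_self _) ?_
    rw [abs_mul, abs_mul]
    exact mul_le_mul_of_nonneg_left (mul_le_mul_of_nonneg_left (hB i j) (abs_nonneg _))
      (abs_nonneg _)
  have hsum : ∑ i, ∑ j, |w i| * (|w j| * m) = m * (∑ i, |w i|) ^ 2 := by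
    simp only [← Finset.mul_sum, ← Finset.sum_mul]
    ring
  have hcs : (∑ i, |w i|) ^ 2 ≤ (n : ℝ) * ‖w‖ ^ 2 := by
    have h1 : (∑ i, |w i|) ^ 2 ≤ ((Finset.univ : Finset (Fin n)).card : ℝ) * ∑ i, |w i| ^ 2 :=
      sq_sum_le_card_mul_sum_sq
    have h2 : ‖w‖ ^ 2 = ∑ i, |w i| ^ 2 := by
      rw [EuclideanSpace.norm_eq, Real.sq_sqrt (by positivity)]
      simp [Real.norm_eq_abs]
    rw [h2]
    simpa using h1
  calc B w w ≤ m * (∑ i, |w i|) ^ 2 := by rw [← hsum]; exact hstep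
    _ ≤ m * ((n:ℝ) * ‖w‖ ^ 2) := mul_le_mul_of_nonneg_left hcs hm
    _ = m * n * ‖w‖ ^ 2 := by ring

/-- mirror-descent step: if `Ψ` is `C²` with `∇²Ψ ⪰ 2mn·I` and all
second-order partial derivatives of the `C²` function `L` are bounded by `m` in
absolute value, then the mirror-descent update `∇Ψ(x⁺) = ∇Ψ(x) − ∇L(x)` does not
increase `L`. -/
theorem mirror_descent_step_decreases
    (n : ℕ) (hn : 1 ≤ n) (m : ℝ) (hm : 0 < m)
    (Ψ L : EuclideanSpace ℝ (Fin n) → ℝ)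
    (hΨ : ContDiff ℝ 2 Ψ)
    (hΨhess : ∀ (x v : EuclideanSpace ℝ (Fin n)),
      2 * m * (n : ℝ) * ‖v‖^2 ≤ iteratedFDeriv ℝ 2 Ψ x ![v, v])
    (hL : ContDiff ℝ 2 L)
    (hLhess : ∀ (x : EuclideanSpace ℝ (Fin n)) (i j : Fin n),
      |iteratedFDeriv ℝ 2 L x ![EuclideanSpace.single i (1:ℝ), EuclideanSpace.single j (1:ℝ)]| ≤ m)
    (x xp : EuclideanSpace ℝ (Fin n))
    (hmirror : gradient Ψ xp = gradient Ψ x - gradient L x) :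
    L xp ≤ L x := by

  have hdL : Differentiable ℝ L := hL.differentiable two_ne_zero
  set v : EuclideanSpace ℝ (Fin n) := xp - x with hv
  have hvxp : x + v = xp := by rw [hv]; abel
  set c2 : ℝ := m * n * ‖v‖ ^ 2 with hc2
  have hc2nn : (0:ℝ) ≤ c2 := by positivity
  have hcs : ∀ (c : ℝ) (t : ℝ), HasDerivAt (fun s : ℝ => c * s) c t := fun c t => by
    simpa using (hasDerivAt_id t).const_mul c
  -- mirror relation in fderiv form
  have hd : fderiv ℝ Ψ xp = fderiv ℝ Ψ x - fderiv ℝ L x := by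
    have h := congrArg (InnerProductSpace.toDual ℝ (EuclideanSpace ℝ (Fin n))) hmirror
    simpa [gradient, map_sub] using h
  -- strong monotonicity of ∇Ψ along the segment
  have hmono : 2 * c2 ≤ fderiv ℝ Ψ xp v - fderiv ℝ Ψ x v := by
    have hq : ∀ t : ℝ, HasDerivAt (fun s => fderiv ℝ Ψ (x + s • v) v - 2 * c2 * s)
        (iteratedFDeriv ℝ 2 Ψ (x + t • v) ![v, v] - 2 * c2) t := fun t =>
      (fderiv_line' hΨ x v t).sub (hcs _ t)
    have hmonot : Monotone (fun s => fderiv ℝ Ψ (x + s • v) v - 2 * c2 * s) :=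
      monotone_of_hasDerivAt_nonneg hq fun t => by
        have h := hΨhess (x + t • v) v
        simp only [Pi.zero_apply, sub_nonneg, hc2]
        linarith
    have h01 := hmonot zero_le_one
    simp only [zero_smul, add_zero, mul_zero, mul_one, one_smul, hvxp, sub_zero] at h01
    linarith
  have hLv : fderiv ℝ L x v ≤ -(2 * c2) := by
    have h : fderiv ℝ Ψ xp v - fderiv ℝ Ψ x v = -(fderiv ℝ L x v) := by
      rw [hd]; simp
    linarith
  -- Hessian bound for L in quadratic form
  have hLquad : ∀ t : ℝ, iteratedFDeriv ℝ 2 L (x + t • v) ![v, v] ≤ c2 := fun t => by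
    have h := bilin_bound hm.le (fderiv ℝ (fderiv ℝ L) (x + t • v)) (fun i j => by
      have h2 := hLhess (x + t • v) i j
      simp only [iteratedFDeriv_two_apply, Matrix.cons_val_zero, Matrix.cons_val_one,
        Matrix.head_cons] at h2
      exact h2) v
    simp only [iteratedFDeriv_two_apply, Matrix.cons_val_zero, Matrix.cons_val_one,
      Matrix.head_cons, hc2]
    exact h
  -- first-order bound on the derivative of L along the segment
  have hq2 : Monotone (fun s => c2 * s - fderiv ℝ L (x + s • v) v) :=
    monotone_of_hasDerivAt_nonneg
      (f' := fun t => c2 - iteratedFDeriv ℝ 2 L (x + t • v) ![v, v])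
      (fun t => (hcs c2 t).sub (fderiv_line' hL x v t))
      (fun t => by simp only [Pi.zero_apply, sub_nonneg]; exact hLquad t)
  -- integrate once more
  set r : ℝ → ℝ := fun s => L x + fderiv ℝ L x v * s + c2 * s ^ 2 / 2 - L (x + s • v) with hr
  have hrd : ∀ t : ℝ, HasDerivAt r (fderiv ℝ L x v + c2 * t - fderiv ℝ L (x + t • v) v) t := by
    intro t
    have h1 : HasDerivAt (fun s : ℝ => c2 * s ^ 2 / 2) (c2 * (2 * t ^ 1) / 2) t :=
      ((hasDerivAt_pow 2 t).const_mul c2).div_const 2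
    have h2 := (((hcs (fderiv ℝ L x v) t).const_add (L x)).add h1).sub (comp_line' hdL x v t)
    exact (h2 : HasDerivAt r _ t).congr_deriv (by ring)
  have hrmono : MonotoneOn r (Set.Icc (0:ℝ) 1) := by
    refine monotoneOn_of_hasDerivWithinAt_nonneg (convex_Icc 0 1)
      (Continuous.continuousOn ?_) (fun t _ => (hrd t).hasDerivWithinAt) ?_
    · exact continuous_iff_continuousAt.2 fun t => (hrd t).differentiableAt.continuousAt
    · intro t ht
      rw [interior_Icc] at ht
      have h := hq2 ht.1.le
      simp only [mul_zero, zero_smul, add_zero, zero_sub] at h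
      linarith
  have h01 := hrmono (Set.left_mem_Icc.2 zero_le_one) (Set.right_mem_Icc.2 zero_le_one)
    zero_le_one
  simp only [hr, mul_zero, zero_smul, add_zero, mul_one, one_smul, hvxp, zero_pow,
    one_pow, zero_div, sub_self] at h01
  -- h01 : 0 ≤ L x + fderiv L x v + c2/2 - L xp  (roughly)
  nlinarith [h01, hLv, hc2nn]
end

section
/- Let m > 0. For each ordered pair i ≠ j let g_ij: ℝ² → ℝ be twice continuously differentiable, bounded below, and symmetric (g_ij(a,b) = g_ji(b,a)), with all second-order partial derivatives bounded in absolute value by m; and let f_ij: ℝ → ℝ be continuously differentiable, nonnegative, strictly decreasing with f_ij'(λ) < 0 for all λ, and symmetric (f_ij = f_ji). Consider the dynamics x_i^{k+1} = x_i^k − [∑_{j≠i} f_ij(g_ij(x_i^k, x_j^k)) ∂g_ij/∂x_i (x_i^k, x_j^k)] / (1 + 2m ∑_{j≠i} f_ij(g_ij(x_i^k, x_j^k))), i ∈ [n]. Then the function V(x) := ∑_{i≠j} ∫₀^{g_ij(x_i,x_j)} f_ij(λ) dλ satisfies V(x^k) − V(x^{k+1}) ≥ ½ ‖x^k − x^{k+1}‖²_{Q_k}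 for every k, where Q_k is the diagonal matrix with entries [Q_k]_ii = 2 + 4m ∑_{j≠i} f_ij(g_ij(x_i^k, x_j^k)); consequently lim_{k→∞} ‖x^k − x^{k+1}‖_{Q_k} = 0. -/
open Filter

set_option linter.unusedVariables false


/-- Lipschitz bound from a bound on the derivative. -/
lemma lipB {φ : ℝ → ℝ} {m : ℝ} (hd : Differentiable ℝ φ)
    (hb : ∀ t, |deriv φ t| ≤ m) (a b : ℝ) : |φ b - φ a| ≤ m * |b - a| := by
  have := Convex.norm_image_sub_le_of_norm_deriv_le (fun x _ => (hd x))
    (fun x _ => by simpa [Real.norm_eq_abs] using hb x) convex_univ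
    (Set.mem_univ a) (Set.mem_univ b)
  simpa [Real.norm_eq_abs] using this

/-- One-dimensional Taylor upper bound with second derivative bounded by `m`. -/
lemma taylorA {h : ℝ → ℝ} {m : ℝ} (hd : Differentiable ℝ h)
    (hd2 : Differentiable ℝ (deriv h)) (hb : ∀ t, |deriv (deriv h) t| ≤ m)
    (x y : ℝ) : h y ≤ h x + deriv h x * (y - x) + m / 2 * (y - x) ^ 2 := by
  set d := y - x with hdd
  clear_value d
  have hlip : ∀ a b : ℝ, |deriv h b - deriv h a| ≤ m * |b - a| := lipB hd2 hb
  set F : ℝ → ℝ := fun t => h (x + t * d) - deriv h x * (t * d) - m / 2 * t ^ 2 * d ^ 2 with hF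
  clear_value F
  have hFd : ∀ t : ℝ, HasDerivAt F (deriv h (x + t * d) * d - deriv h x * d - m / 2 * (2 * t) * d ^ 2) t := by
    intro t
    rw [hF]
    have h1 : HasDerivAt (fun t : ℝ => x + t * d) d t := by
      simpa using ((hasDerivAt_id t).mul_const d).const_add x
    have h2 : HasDerivAt (fun t : ℝ => h (x + t * d)) (deriv h (x + t * d) * d) t :=
      (hd (x + t * d)).hasDerivAt.comp t h1
    have h3 : HasDerivAt (fun t : ℝ => deriv h x * (t * d)) (deriv h x * d) t := by
      simpa [mul_comm, mul_assoc] using ((hasDerivAt_id t).mul_const d).const_mul (deriv h x)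
    have h4 : HasDerivAt (fun t : ℝ => m / 2 * t ^ 2 * d ^ 2) (m / 2 * (2 * t) * d ^ 2) t := by
      have h40 : HasDerivAt (fun t : ℝ => t ^ 2) (2 * t) t := by
        simpa using hasDerivAt_pow 2 t
      exact (h40.const_mul (m / 2)).mul_const (d ^ 2)
    exact (h2.sub h3).sub h4
  have hanti : AntitoneOn F (Set.Icc 0 1) := by
    apply antitoneOn_of_deriv_nonpos (convex_Icc 0 1)
    · exact Continuous.continuousOn (by
        have : Differentiable ℝ F := fun t => (hFd t).differentiableAt
        exact this.continuous)
    · intro t ht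
      exact ((hFd t).differentiableAt).differentiableWithinAt
    · intro t ht
      rw [interior_Icc] at ht
      rw [(hFd t).deriv]
      have habs : |deriv h (x + t * d) - deriv h x| ≤ m * |t * d| := by
        simpa using hlip x (x + t * d)
      have h5 : (deriv h (x + t * d) - deriv h x) * d ≤ m * |t * d| * |d| := by
        calc (deriv h (x + t * d) - deriv h x) * d ≤ |(deriv h (x + t * d) - deriv h x) * d| := le_abs_self _
          _ = |deriv h (x + t * d) - deriv h x| * |d| := abs_mul _ _
          _ ≤ m * |t * d| * |d| := by
              apply mul_le_mul_of_nonneg_right habs (abs_nonneg _)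
      have ht0 : (0:ℝ) < t := ht.1
      have : m * |t * d| * |d| = m * t * d ^ 2 := by
        rw [abs_mul, abs_of_pos ht0, ← sq_abs d]
        ring
      rw [sub_mul, this] at h5
      linarith [h5, show m / 2 * (2 * t) * d ^ 2 = m * t * d ^ 2 from by ring]
  have h01 : F 1 ≤ F 0 := hanti (Set.mem_Icc.mpr ⟨le_refl 0, zero_le_one⟩)
    (Set.mem_Icc.mpr ⟨zero_le_one, le_refl 1⟩) zero_le_one
  have hF0 : F 0 = h x := by simp [hF]
  have hF1 : F 1 = h (x + d) - deriv h x * d - m / 2 * d ^ 2 := by simp [hF]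
  have hxy : x + d = y := by rw [hdd]; ring
  rw [hF0, hF1, hxy] at h01
  linarith

/-- Integral of an antitone function is bounded by left-endpoint value. -/
lemma intC {f : ℝ → ℝ} (hf : Continuous f) (hanti : Antitone f) (A B : ℝ) :
    (∫ t in A..B, f t) ≤ f A * (B - A) := by
  rcases le_total A B with h | h
  · calc (∫ t in A..B, f t) ≤ ∫ _t in A..B, f A :=
        intervalIntegral.integral_mono_on h (hf.intervalIntegrable _ _)
          intervalIntegrable_const (fun u hu => hanti hu.1)
      _ = f A * (B - A) := by simp [mul_comm]
  · have h1 : f A * (A - B) ≤ ∫ t in B..A, f t := by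
      calc f A * (A - B) = ∫ _t in B..A, f A := by simp [mul_comm]
        _ ≤ ∫ t in B..A, f t :=
          intervalIntegral.integral_mono_on h intervalIntegrable_const
            (hf.intervalIntegrable _ _) (fun u hu => hanti hu.2)
    have h2 : (∫ t in A..B, f t) = -∫ t in B..A, f t := by
      rw [intervalIntegral.integral_symm]
    rw [h2]; linarith

/-- Swap indices in an off-diagonal double sum. -/
lemma sum_swap_offdiag {n : ℕ} (F : Fin n → Fin n → ℝ) :
    ∑ i, ∑ j ∈ Finset.univ.filter (fun j => j ≠ i), F i j
      = ∑ i, ∑ j ∈ Finset.univ.filter (fun j => j ≠ i), F j i := by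
  simp only [Finset.sum_filter]
  rw [Finset.sum_comm]
  apply Finset.sum_congr rfl; intro i _
  apply Finset.sum_congr rfl; intro j _
  by_cases h : j ≠ i
  · rw [if_pos (Ne.symm h), if_pos h]
  · push_neg at h; subst h; simp
example : (1 : WithTop ℕ∞) + 1 = 2 := one_add_one_eq_two

lemma partial_fst_smooth (G : ℝ × ℝ → ℝ) (hG : ContDiff ℝ 2 G) (b : ℝ) :
    Differentiable ℝ (fun s => G (s, b)) ∧ Differentiable ℝ (deriv (fun s => G (s, b))) := by
  have h1 : ContDiff ℝ ((1 : WithTop ℕ∞) + 1) (fun s : ℝ => G (s, b)) := by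
    rw [one_add_one_eq_two]
    exact hG.comp (contDiff_id.prodMk contDiff_const)
  obtain ⟨hd, -, hC⟩ := contDiff_succ_iff_deriv.mp h1
  exact ⟨hd, hC.differentiable one_ne_zero⟩

lemma partial_snd_smooth (G : ℝ × ℝ → ℝ) (hG : ContDiff ℝ 2 G) (a : ℝ) :
    Differentiable ℝ (fun s => G (a, s)) ∧ Differentiable ℝ (deriv (fun s => G (a, s))) := by
  have h1 : ContDiff ℝ ((1 : WithTop ℕ∞) + 1) (fun s : ℝ => G (a, s)) := by
    rw [one_add_one_eq_two]
    exact hG.comp (contDiff_const.prodMk contDiff_id)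
  obtain ⟨hd, -, hC⟩ := contDiff_succ_iff_deriv.mp h1
  exact ⟨hd, hC.differentiable one_ne_zero⟩

lemma partial_deriv_hasDerivAt (G : ℝ × ℝ → ℝ) (hG : Differentiable ℝ G) (a s : ℝ) :
    HasDerivAt (fun t => G (t, s)) ((fderiv ℝ G (a, s)) (1, 0)) a := by
  have h0 : HasDerivAt (fun t : ℝ => (t, s)) ((1 : ℝ), (0 : ℝ)) a :=
    (hasDerivAt_id a).prodMk (hasDerivAt_const a s)
  exact (hG (a, s)).hasFDerivAt.comp_hasDerivAt a h0

lemma partial_deriv_fst (G : ℝ × ℝ → ℝ) (hG : ContDiff ℝ 2 G) (a : ℝ) :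
    Differentiable ℝ (fun s => deriv (fun t => G (t, s)) a) := by
  have hGd : Differentiable ℝ G := hG.differentiable (by norm_num)
  have key : (fun s => deriv (fun t => G (t, s)) a) = fun s => (fderiv ℝ G (a, s)) (1, 0) :=
    funext fun s => (partial_deriv_hasDerivAt G hGd a s).deriv
  rw [key]
  have hf1 : ContDiff ℝ 1 (fderiv ℝ G) := hG.fderiv_right (by norm_num)
  exact ((hf1.differentiable one_ne_zero).comp
    ((differentiable_const a).prodMk differentiable_id)).clm_apply (differentiable_const _)

lemma step_lemma
    (n : ℕ) (m : ℝ) (hm : 0 < m)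
    (f : Fin n → Fin n → ℝ → ℝ) (g : Fin n → Fin n → ℝ → ℝ → ℝ)
    (hgC : ∀ i j, i ≠ j → ContDiff ℝ 2 (fun p : ℝ × ℝ => g i j p.1 p.2))
    (hgsym : ∀ i j a b, i ≠ j → g i j a b = g j i b a)
    (hg11 : ∀ i j a b, i ≠ j → |deriv (fun t => deriv (fun s => g i j s b) t) a| ≤ m)
    (hg21 : ∀ i j a b, i ≠ j → |deriv (fun s => deriv (fun t => g i j t s) a) b| ≤ m)
    (hg22 : ∀ i j a b, i ≠ j → |deriv (fun s => deriv (fun t => g i j a t) s) b| ≤ m)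
    (hfC : ∀ i j, i ≠ j → ContDiff ℝ 1 (f i j))
    (hfnonneg : ∀ i j t, i ≠ j → 0 ≤ f i j t)
    (hfdec : ∀ i j t, i ≠ j → deriv (f i j) t < 0)
    (hfsym : ∀ i j t, i ≠ j → f i j t = f j i t)
    (X Y : Fin n → ℝ)
    (hXY : ∀ i, Y i = X i -
      (∑ j ∈ Finset.univ.filter (fun j => j ≠ i),
          f i j (g i j (X i) (X j)) * deriv (fun t => g i j t (X j)) (X i)) /
      (1 + 2 * m * ∑ j ∈ Finset.univ.filter (fun j => j ≠ i),
          f i j (g i j (X i) (X j)))) :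
    (1/2) * ∑ i, (2 + 4 * m * ∑ j ∈ Finset.univ.filter (fun j => j ≠ i),
          f i j (g i j (X i) (X j))) * (X i - Y i)^2
      ≤ (∑ i, ∑ j ∈ Finset.univ.filter (fun j => j ≠ i),
            ∫ t in (0:ℝ)..(g i j (X i) (X j)), f i j t)
        - ∑ i, ∑ j ∈ Finset.univ.filter (fun j => j ≠ i),
            ∫ t in (0:ℝ)..(g i j (Y i) (Y j)), f i j t := by
  classical
  have hfd : ∀ i j, i ≠ j → Antitone (f i j) := fun i j hij =>
    (strictAnti_of_deriv_neg (fun t => hfdec i j t hij)).antitone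
  have hfc : ∀ i j, i ≠ j → Continuous (f i j) := fun i j hij => (hfC i j hij).continuous
  -- per-pair bound
  have pair : ∀ i j, i ≠ j →
      (∫ t in (0:ℝ)..(g i j (Y i) (Y j)), f i j t) -
        (∫ t in (0:ℝ)..(g i j (X i) (X j)), f i j t)
      ≤ f i j (g i j (X i) (X j)) *
          (deriv (fun t => g i j t (X j)) (X i) * (Y i - X i)
            + deriv (fun s => g i j (X i) s) (X j) * (Y j - X j)
            + m * ((Y i - X i)^2 + (Y j - X j)^2)) := by
    intro i j hij
    have hG2 := hgC i j hij
    have hP1 := partial_fst_smooth _ hG2 (Y j)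
    have t1 : g i j (Y i) (Y j) ≤ g i j (X i) (Y j)
        + deriv (fun s => g i j s (Y j)) (X i) * (Y i - X i) + m/2 * (Y i - X i)^2 :=
      taylorA (h := fun s => g i j s (Y j)) hP1.1 hP1.2 (fun t => hg11 i j t (Y j) hij) (X i) (Y i)
    have hP2 := partial_snd_smooth _ hG2 (X i)
    have t2 : g i j (X i) (Y j) ≤ g i j (X i) (X j)
        + deriv (fun s => g i j (X i) s) (X j) * (Y j - X j) + m/2 * (Y j - X j)^2 :=
      taylorA (h := fun s => g i j (X i) s) hP2.1 hP2.2 (fun t => hg22 i j (X i) t hij) (X j) (Y j)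
    have hψ := partial_deriv_fst _ hG2 (X i)
    have t3 : |deriv (fun t => g i j t (Y j)) (X i) - deriv (fun t => g i j t (X j)) (X i)|
        ≤ m * |Y j - X j| :=
      lipB (φ := fun s => deriv (fun t => g i j t s) (X i)) hψ
        (fun t => hg21 i j (X i) t hij) (X j) (Y j)
    have t4 : (deriv (fun t => g i j t (Y j)) (X i) - deriv (fun t => g i j t (X j)) (X i))
          * (Y i - X i) ≤ m * |Y j - X j| * |Y i - X i| :=
      calc (deriv (fun t => g i j t (Y j)) (X i) - deriv (fun t => g i j t (X j)) (X i))
            * (Y i - X i)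
          ≤ |(deriv (fun t => g i j t (Y j)) (X i) - deriv (fun t => g i j t (X j)) (X i))
            * (Y i - X i)| := le_abs_self _
        _ = |deriv (fun t => g i j t (Y j)) (X i) - deriv (fun t => g i j t (X j)) (X i)|
            * |Y i - X i| := abs_mul _ _
        _ ≤ m * |Y j - X j| * |Y i - X i| := mul_le_mul_of_nonneg_right t3 (abs_nonneg _)
    have t5 : m * |Y j - X j| * |Y i - X i| ≤ m/2 * (Y j - X j)^2 + m/2 * (Y i - X i)^2 := by
      nlinarith [sq_abs (Y j - X j), sq_abs (Y i - X i),
        sq_nonneg (|Y j - X j| - |Y i - X i|), hm.le,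
        abs_nonneg (Y j - X j), abs_nonneg (Y i - X i)]
    have t4' : deriv (fun t => g i j t (Y j)) (X i) * (Y i - X i)
        ≤ deriv (fun t => g i j t (X j)) (X i) * (Y i - X i)
          + m * |Y j - X j| * |Y i - X i| := by
      rw [sub_mul] at t4; linarith
    have gbound : g i j (Y i) (Y j) - g i j (X i) (X j)
        ≤ deriv (fun t => g i j t (X j)) (X i) * (Y i - X i)
          + deriv (fun s => g i j (X i) s) (X j) * (Y j - X j)
          + m * ((Y i - X i)^2 + (Y j - X j)^2) := by linarith
    have hint : (∫ t in (0:ℝ)..(g i j (Y i) (Y j)), f i j t) -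
        (∫ t in (0:ℝ)..(g i j (X i) (X j)), f i j t)
        = ∫ t in (g i j (X i) (X j))..(g i j (Y i) (Y j)), f i j t :=
      intervalIntegral.integral_interval_sub_left
        ((hfc i j hij).intervalIntegrable _ _) ((hfc i j hij).intervalIntegrable _ _)
    have hC := intC (hfc i j hij) (hfd i j hij) (g i j (X i) (X j)) (g i j (Y i) (Y j))
    have hPnn := hfnonneg i j (g i j (X i) (X j)) hij
    rw [hint]
    calc (∫ t in (g i j (X i) (X j))..(g i j (Y i) (Y j)), f i j t)
        ≤ f i j (g i j (X i) (X j)) * (g i j (Y i) (Y j) - g i j (X i) (X j)) := hC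
      _ ≤ f i j (g i j (X i) (X j)) *
          (deriv (fun t => g i j t (X j)) (X i) * (Y i - X i)
            + deriv (fun s => g i j (X i) s) (X j) * (Y j - X j)
            + m * ((Y i - X i)^2 + (Y j - X j)^2)) :=
          mul_le_mul_of_nonneg_left gbound hPnn
  -- summed bound
  have sum2 : (∑ i, ∑ j ∈ Finset.univ.filter (fun j => j ≠ i),
        ∫ t in (0:ℝ)..(g i j (Y i) (Y j)), f i j t)
      - (∑ i, ∑ j ∈ Finset.univ.filter (fun j => j ≠ i),
        ∫ t in (0:ℝ)..(g i j (X i) (X j)), f i j t)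
      ≤ ∑ i, ∑ j ∈ Finset.univ.filter (fun j => j ≠ i),
          f i j (g i j (X i) (X j)) *
            (deriv (fun t => g i j t (X j)) (X i) * (Y i - X i)
              + deriv (fun s => g i j (X i) s) (X j) * (Y j - X j)
              + m * ((Y i - X i)^2 + (Y j - X j)^2)) := by
    rw [← Finset.sum_sub_distrib]
    apply Finset.sum_le_sum; intro i _
    rw [← Finset.sum_sub_distrib]
    apply Finset.sum_le_sum; intro j hj
    exact pair i j (Ne.symm (Finset.mem_filter.mp hj).2)
  -- symmetry rearrangement
  have hsplit : ∀ i j : Fin n,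
      f i j (g i j (X i) (X j)) *
        (deriv (fun t => g i j t (X j)) (X i) * (Y i - X i)
          + deriv (fun s => g i j (X i) s) (X j) * (Y j - X j)
          + m * ((Y i - X i)^2 + (Y j - X j)^2))
      = (f i j (g i j (X i) (X j)) * deriv (fun t => g i j t (X j)) (X i) * (Y i - X i)
          + m * f i j (g i j (X i) (X j)) * (Y i - X i)^2)
        + (f i j (g i j (X i) (X j)) * deriv (fun s => g i j (X i) s) (X j) * (Y j - X j)
          + m * f i j (g i j (X i) (X j)) * (Y j - X j)^2) := by
    intro i j; ring
  have hswap : ∑ i, ∑ j ∈ Finset.univ.filter (fun j => j ≠ i),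
        (f i j (g i j (X i) (X j)) * deriv (fun s => g i j (X i) s) (X j) * (Y j - X j)
          + m * f i j (g i j (X i) (X j)) * (Y j - X j)^2)
      = ∑ i, ∑ j ∈ Finset.univ.filter (fun j => j ≠ i),
        (f i j (g i j (X i) (X j)) * deriv (fun t => g i j t (X j)) (X i) * (Y i - X i)
          + m * f i j (g i j (X i) (X j)) * (Y i - X i)^2) := by
    rw [sum_swap_offdiag]
    apply Finset.sum_congr rfl; intro i _
    apply Finset.sum_congr rfl; intro j hj
    have hji : j ≠ i := (Finset.mem_filter.mp hj).2
    have hsymP : f j i (g j i (X j) (X i)) = f i j (g i j (X i) (X j)) := by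
      rw [hfsym j i _ hji, hgsym j i (X j) (X i) hji]
    have hsymD : deriv (fun s => g j i (X j) s) (X i)
        = deriv (fun t => g i j t (X j)) (X i) := by
      congr 1; funext s; exact hgsym j i (X j) s hji
    rw [hsymP, hsymD]
  -- per-agent collapse
  have collapse : ∑ i, ∑ j ∈ Finset.univ.filter (fun j => j ≠ i),
        f i j (g i j (X i) (X j)) *
          (deriv (fun t => g i j t (X j)) (X i) * (Y i - X i)
            + deriv (fun s => g i j (X i) s) (X j) * (Y j - X j)
            + m * ((Y i - X i)^2 + (Y j - X j)^2))
      = ∑ i, (2 * (Y i - X i) * (∑ j ∈ Finset.univ.filter (fun j => j ≠ i),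
            f i j (g i j (X i) (X j)) * deriv (fun t => g i j t (X j)) (X i))
          + 2 * m * (Y i - X i)^2 * (∑ j ∈ Finset.univ.filter (fun j => j ≠ i),
            f i j (g i j (X i) (X j)))) := by
    calc ∑ i, ∑ j ∈ Finset.univ.filter (fun j => j ≠ i),
          f i j (g i j (X i) (X j)) *
            (deriv (fun t => g i j t (X j)) (X i) * (Y i - X i)
              + deriv (fun s => g i j (X i) s) (X j) * (Y j - X j)
              + m * ((Y i - X i)^2 + (Y j - X j)^2))
        = ∑ i, (∑ j ∈ Finset.univ.filter (fun j => j ≠ i),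
            (f i j (g i j (X i) (X j)) * deriv (fun t => g i j t (X j)) (X i) * (Y i - X i)
              + m * f i j (g i j (X i) (X j)) * (Y i - X i)^2)
          + ∑ j ∈ Finset.univ.filter (fun j => j ≠ i),
            (f i j (g i j (X i) (X j)) * deriv (fun s => g i j (X i) s) (X j) * (Y j - X j)
              + m * f i j (g i j (X i) (X j)) * (Y j - X j)^2)) := by
          apply Finset.sum_congr rfl; intro i _
          rw [← Finset.sum_add_distrib]
          apply Finset.sum_congr rfl; intro j _
          exact hsplit i j
      _ = (∑ i, ∑ j ∈ Finset.univ.filter (fun j => j ≠ i),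
            (f i j (g i j (X i) (X j)) * deriv (fun t => g i j t (X j)) (X i) * (Y i - X i)
              + m * f i j (g i j (X i) (X j)) * (Y i - X i)^2))
          + ∑ i, ∑ j ∈ Finset.univ.filter (fun j => j ≠ i),
            (f i j (g i j (X i) (X j)) * deriv (fun s => g i j (X i) s) (X j) * (Y j - X j)
              + m * f i j (g i j (X i) (X j)) * (Y j - X j)^2) := Finset.sum_add_distrib
      _ = ∑ i, (2 * (Y i - X i) * (∑ j ∈ Finset.univ.filter (fun j => j ≠ i),
            f i j (g i j (X i) (X j)) * deriv (fun t => g i j t (X j)) (X i))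
          + 2 * m * (Y i - X i)^2 * (∑ j ∈ Finset.univ.filter (fun j => j ≠ i),
            f i j (g i j (X i) (X j)))) := by
          rw [hswap, ← Finset.sum_add_distrib]
          apply Finset.sum_congr rfl; intro i _
          rw [← Finset.sum_add_distrib, Finset.mul_sum, Finset.mul_sum,
            ← Finset.sum_add_distrib]
          apply Finset.sum_congr rfl; intro j _
          ring
  -- dynamics substitution
  have hSnn : ∀ i, (0:ℝ) ≤ ∑ j ∈ Finset.univ.filter (fun j => j ≠ i),
      f i j (g i j (X i) (X j)) := by
    intro i
    apply Finset.sum_nonneg; intro j hj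
    exact hfnonneg i j _ (Ne.symm (Finset.mem_filter.mp hj).2)
  have stepi : ∀ i, 2 * (Y i - X i) * (∑ j ∈ Finset.univ.filter (fun j => j ≠ i),
        f i j (g i j (X i) (X j)) * deriv (fun t => g i j t (X j)) (X i))
      + 2 * m * (Y i - X i)^2 * (∑ j ∈ Finset.univ.filter (fun j => j ≠ i),
        f i j (g i j (X i) (X j)))
      = -((2 + 2 * m * ∑ j ∈ Finset.univ.filter (fun j => j ≠ i),
          f i j (g i j (X i) (X j))) * (Y i - X i)^2) := by
    intro i
    have hden : (0:ℝ) < 1 + 2 * m * ∑ j ∈ Finset.univ.filter (fun j => j ≠ i),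
        f i j (g i j (X i) (X j)) := by nlinarith [hSnn i]
    have hvi : Y i - X i = -((∑ j ∈ Finset.univ.filter (fun j => j ≠ i),
          f i j (g i j (X i) (X j)) * deriv (fun t => g i j t (X j)) (X i))
        / (1 + 2 * m * ∑ j ∈ Finset.univ.filter (fun j => j ≠ i),
          f i j (g i j (X i) (X j)))) := by rw [hXY i]; ring
    have hGi : (∑ j ∈ Finset.univ.filter (fun j => j ≠ i),
          f i j (g i j (X i) (X j)) * deriv (fun t => g i j t (X j)) (X i))
        = -(1 + 2 * m * ∑ j ∈ Finset.univ.filter (fun j => j ≠ i),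
          f i j (g i j (X i) (X j))) * (Y i - X i) := by
      rw [hvi]; field_simp
    rw [hGi]; ring
  -- final assembly
  have main : (∑ i, ∑ j ∈ Finset.univ.filter (fun j => j ≠ i),
        ∫ t in (0:ℝ)..(g i j (Y i) (Y j)), f i j t)
      - (∑ i, ∑ j ∈ Finset.univ.filter (fun j => j ≠ i),
        ∫ t in (0:ℝ)..(g i j (X i) (X j)), f i j t)
      ≤ ∑ i, -((2 + 2 * m * ∑ j ∈ Finset.univ.filter (fun j => j ≠ i),
          f i j (g i j (X i) (X j))) * (Y i - X i)^2) := by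
    refine le_trans sum2 ?_
    rw [collapse]
    apply le_of_eq
    exact Finset.sum_congr rfl (fun i _ => stepi i)
  have goalaux : (1/2) * ∑ i, (2 + 4 * m * ∑ j ∈ Finset.univ.filter (fun j => j ≠ i),
        f i j (g i j (X i) (X j))) * (X i - Y i)^2
      ≤ ∑ i, (2 + 2 * m * ∑ j ∈ Finset.univ.filter (fun j => j ≠ i),
          f i j (g i j (X i) (X j))) * (Y i - X i)^2 := by
    rw [Finset.mul_sum]
    apply Finset.sum_le_sum; intro i _
    nlinarith [sq_nonneg (X i - Y i), hSnn i, hm.le,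
      mul_nonneg (mul_nonneg hm.le (hSnn i)) (sq_nonneg (X i - Y i)),
      show (X i - Y i)^2 = (Y i - X i)^2 from by ring]
  have : ∑ i, (2 + 2 * m * ∑ j ∈ Finset.univ.filter (fun j => j ≠ i),
        f i j (g i j (X i) (X j))) * (Y i - X i)^2
      = - ∑ i, -((2 + 2 * m * ∑ j ∈ Finset.univ.filter (fun j => j ≠ i),
          f i j (g i j (X i) (X j))) * (Y i - X i)^2) := by
    rw [← Finset.sum_neg_distrib]; simp
  linarith [goalaux, main, this.ge, this.le]

/-- BCD with change of network variables: with nonnegative, strictly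
decreasing, symmetric transfer functions `f_ij` and symmetric measurements `g_ij`,
the dynamics admit the Lyapunov function
`V(x) = ∑_{i≠j} ∫₀^{g_ij(xᵢ,xⱼ)} f_ij(λ) dλ` with drift at least
`½‖x^k − x^{k+1}‖²_{Q_k}`, where `[Q_k]_ii = 2 + 4m ∑_{j≠i} f_ij(g_ij(xᵢᵏ,xⱼᵏ))`;
consequently `‖x^k − x^{k+1}‖_{Q_k} → 0`. -/
theorem bcd_change_of_variables_lyapunov
    (n : ℕ) (m : ℝ) (hm : 0 < m)
    (f : Fin n → Fin n → ℝ → ℝ) (g : Fin n → Fin n → ℝ → ℝ → ℝ)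
    (hgC : ∀ i j, i ≠ j → ContDiff ℝ 2 (fun p : ℝ × ℝ => g i j p.1 p.2))
    (hgB : ∀ i j, i ≠ j → BddBelow (Set.range (fun p : ℝ × ℝ => g i j p.1 p.2)))
    (hgsym : ∀ i j a b, i ≠ j → g i j a b = g j i b a)
    (hg11 : ∀ i j a b, i ≠ j → |deriv (fun t => deriv (fun s => g i j s b) t) a| ≤ m)
    (hg12 : ∀ i j a b, i ≠ j → |deriv (fun t => deriv (fun s => g i j t s) b) a| ≤ m)
    (hg21 : ∀ i j a b, i ≠ j → |deriv (fun s => deriv (fun t => g i j t s) a) b| ≤ m)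
    (hg22 : ∀ i j a b, i ≠ j → |deriv (fun s => deriv (fun t => g i j a t) s) b| ≤ m)
    (hfC : ∀ i j, i ≠ j → ContDiff ℝ 1 (f i j))
    (hfnonneg : ∀ i j t, i ≠ j → 0 ≤ f i j t)
    (hfdec : ∀ i j t, i ≠ j → deriv (f i j) t < 0)
    (hfsym : ∀ i j t, i ≠ j → f i j t = f j i t)
    (x : ℕ → Fin n → ℝ)
    (hdyn : ∀ k i, x (k + 1) i = x k i -
      (∑ j ∈ Finset.univ.filter (fun j => j ≠ i),
          f i j (g i j (x k i) (x k j)) * deriv (fun t => g i j t (x k j)) (x k i)) /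
      (1 + 2 * m * ∑ j ∈ Finset.univ.filter (fun j => j ≠ i),
          f i j (g i j (x k i) (x k j)))) :
    (∀ k : ℕ,
      (1/2) * ∑ i, (2 + 4 * m * ∑ j ∈ Finset.univ.filter (fun j => j ≠ i),
            f i j (g i j (x k i) (x k j))) * (x k i - x (k+1) i)^2
      ≤ (∑ i, ∑ j ∈ Finset.univ.filter (fun j => j ≠ i),
            ∫ t in (0:ℝ)..(g i j (x k i) (x k j)), f i j t)
        - ∑ i, ∑ j ∈ Finset.univ.filter (fun j => j ≠ i),
            ∫ t in (0:ℝ)..(g i j (x (k+1) i) (x (k+1) j)), f i j t) ∧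
    Tendsto (fun k => Real.sqrt (∑ i,
        (2 + 4 * m * ∑ j ∈ Finset.univ.filter (fun j => j ≠ i),
          f i j (g i j (x k i) (x k j))) * (x k i - x (k+1) i)^2))
      atTop (nhds 0) := by
  classical
  have part1 : ∀ k : ℕ,
      (1/2) * ∑ i, (2 + 4 * m * ∑ j ∈ Finset.univ.filter (fun j => j ≠ i),
            f i j (g i j (x k i) (x k j))) * (x k i - x (k+1) i)^2
      ≤ (∑ i, ∑ j ∈ Finset.univ.filter (fun j => j ≠ i),
            ∫ t in (0:ℝ)..(g i j (x k i) (x k j)), f i j t)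
        - ∑ i, ∑ j ∈ Finset.univ.filter (fun j => j ≠ i),
            ∫ t in (0:ℝ)..(g i j (x (k+1) i) (x (k+1) j)), f i j t :=
    fun k => step_lemma n m hm f g hgC hgsym hg11 hg21 hg22 hfC hfnonneg hfdec hfsym
      (x k) (x (k+1)) (fun i => hdyn k i)
  refine ⟨part1, ?_⟩
  have hfc : ∀ i j, i ≠ j → Continuous (f i j) := fun i j hij => (hfC i j hij).continuous
  -- lower bounds for g
  have hBc : ∀ i j, i ≠ j → ∃ cc : ℝ, ∀ a b : ℝ, cc ≤ g i j a b := by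
    intro i j hij
    obtain ⟨cc, hcc⟩ := hgB i j hij
    exact ⟨cc, fun a b => hcc ⟨(a, b), rfl⟩⟩
  choose! c hc using hBc
  obtain ⟨V, hVdef⟩ : ∃ V : ℕ → ℝ, ∀ k, V k = ∑ i, ∑ j ∈ Finset.univ.filter (fun j => j ≠ i),
      ∫ t in (0:ℝ)..(g i j (x k i) (x k j)), f i j t := ⟨_, fun k => rfl⟩
  obtain ⟨d, hddef⟩ : ∃ d : ℕ → ℝ, ∀ k, d k = ∑ i,
      (2 + 4 * m * ∑ j ∈ Finset.univ.filter (fun j => j ≠ i),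
        f i j (g i j (x k i) (x k j))) * (x k i - x (k+1) i)^2 := ⟨_, fun k => rfl⟩
  have hdk : ∀ k, (1/2) * d k ≤ V k - V (k+1) := fun k => by
    rw [hddef, hVdef, hVdef]; exact part1 k
  have hd0 : ∀ k, 0 ≤ d k := by
    intro k
    rw [hddef]
    apply Finset.sum_nonneg
    intro i _
    have hS : (0:ℝ) ≤ ∑ j ∈ Finset.univ.filter (fun j => j ≠ i),
        f i j (g i j (x k i) (x k j)) :=
      Finset.sum_nonneg fun j hj => hfnonneg i j _ (Ne.symm (Finset.mem_filter.mp hj).2)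
    have : (0:ℝ) ≤ 2 + 4 * m * ∑ j ∈ Finset.univ.filter (fun j => j ≠ i),
        f i j (g i j (x k i) (x k j)) := by nlinarith
    exact mul_nonneg this (sq_nonneg _)
  have hlow : ∀ k, (∑ i, ∑ j ∈ Finset.univ.filter (fun j => j ≠ i),
      ∫ t in (0:ℝ)..(c i j), f i j t) ≤ V k := by
    intro k
    rw [hVdef]
    apply Finset.sum_le_sum; intro i _
    apply Finset.sum_le_sum; intro j hj
    have hij : i ≠ j := Ne.symm (Finset.mem_filter.mp hj).2
    have h1 : c i j ≤ g i j (x k i) (x k j) := hc i j hij _ _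
    have heq : (∫ t in (0:ℝ)..(g i j (x k i) (x k j)), f i j t)
        - (∫ t in (0:ℝ)..(c i j), f i j t)
        = ∫ t in (c i j)..(g i j (x k i) (x k j)), f i j t :=
      intervalIntegral.integral_interval_sub_left
        ((hfc i j hij).intervalIntegrable _ _) ((hfc i j hij).intervalIntegrable _ _)
    have h2 : 0 ≤ ∫ t in (c i j)..(g i j (x k i) (x k j)), f i j t :=
      intervalIntegral.integral_nonneg h1 (fun u _ => hfnonneg i j u hij)
    linarith
  have hsum : ∀ N : ℕ, ∑ k ∈ Finset.range N, d k
      ≤ 2 * (V 0 - ∑ i, ∑ j ∈ Finset.univ.filter (fun j => j ≠ i),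
          ∫ t in (0:ℝ)..(c i j), f i j t) := by
    intro N
    have tel : ∑ k ∈ Finset.range N, (V k - V (k+1)) = V 0 - V N :=
      Finset.sum_range_sub' V N
    have h3 : ∑ k ∈ Finset.range N, d k ≤ ∑ k ∈ Finset.range N, 2 * (V k - V (k+1)) :=
      Finset.sum_le_sum fun k _ => by linarith [hdk k]
    rw [← Finset.mul_sum, tel] at h3
    have h4 := hlow N
    linarith
  have hsummable : Summable d := summable_of_sum_range_le hd0 hsum
  have htend : Tendsto d atTop (nhds 0) := hsummable.tendsto_atTop_zero
  have hfun : (fun k => Real.sqrt (∑ i,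
      (2 + 4 * m * ∑ j ∈ Finset.univ.filter (fun j => j ≠ i),
        f i j (g i j (x k i) (x k j))) * (x k i - x (k+1) i)^2))
      = fun k => Real.sqrt (d k) := funext fun k => by rw [hddef]
  rw [hfun]
  simpa using htend.sqrt
end
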